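/- arXiv:1808.04837 — 9 statements merged into one kernel-verified Lean document; each statement's English description precedes it below -/
import Mathlib

section
/- ∫₀^∞ x^{-11/8} √(√(1+x) − 1) dx = 4 Γ(1/4)² / (3 √(2−√2) √π). -/
open Real MeasureTheory Set

lemma beta_aux {a b : ℝ} (ha : 0 < a) (hb : 0 < b) :
    IntegrableOn (fun x : ℝ => x ^ (a - 1) * (1 - x) ^ (b - 1)) (Ioo 0 1) volume ∧
    ∫ x in Ioo (0:ℝ) 1, x ^ (a - 1) * (1 - x) ^ (b - 1) =
      Real.Gamma a * Real.Gamma b / Real.Gamma (a + b) := by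
  have hc := Complex.betaIntegral_convergent (u := a) (v := b) (by simpa) (by simpa)
  rw [intervalIntegrable_iff_integrableOn_Ioo_of_le zero_le_one] at hc
  have heq : EqOn (fun x : ℝ => ((x ^ (a - 1) * (1 - x) ^ (b - 1) : ℝ) : ℂ))
      (fun x : ℝ => (x : ℂ) ^ ((a : ℂ) - 1) * (1 - (x : ℂ)) ^ ((b : ℂ) - 1)) (Ioo 0 1) := by
    intro x hx
    have h1 : (0:ℝ) ≤ x := hx.1.le
    have h2 : (0:ℝ) ≤ 1 - x := by linarith [hx.2]
    simp only [Complex.ofReal_mul]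
    rw [Complex.ofReal_cpow h1, Complex.ofReal_cpow h2]
    push_cast
    ring_nf
  have hint : IntegrableOn (fun x : ℝ => x ^ (a - 1) * (1 - x) ^ (b - 1)) (Ioo 0 1) volume := by
    have h1 := (hc.congr_fun heq.symm measurableSet_Ioo)
    have h2 : IntegrableOn (fun x : ℝ => Complex.re ((x ^ (a - 1) * (1 - x) ^ (b - 1) : ℝ) : ℂ))
        (Ioo 0 1) volume := h1.re
    exact h2.congr_fun (fun x hx => by simp) measurableSet_Ioo
  refine ⟨hint, ?_⟩
  have hG := Complex.Gamma_mul_Gamma_eq_betaIntegral (s := a) (t := b) (by simpa) (by simpa)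
  rw [Complex.betaIntegral] at hG
  rw [intervalIntegral.integral_of_le zero_le_one, integral_Ioc_eq_integral_Ioo] at hG
  rw [← setIntegral_congr_fun measurableSet_Ioo heq] at hG
  have hor : (∫ x in Ioo (0:ℝ) 1, ((x ^ (a - 1) * (1 - x) ^ (b - 1) : ℝ) : ℂ)) =
      ((∫ x in Ioo (0:ℝ) 1, x ^ (a - 1) * (1 - x) ^ (b - 1)) : ℝ) := integral_ofReal
  rw [hor] at hG
  have hGab : (Complex.Gamma (a + b)) = (Real.Gamma (a + b) : ℂ) := by
    rw [← Complex.ofReal_add, Complex.Gamma_ofReal]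
  rw [hGab, Complex.Gamma_ofReal, Complex.Gamma_ofReal, ← Complex.ofReal_mul, ← Complex.ofReal_mul]
    at hG
  have := Complex.ofReal_injective hG
  have hpos : Real.Gamma (a + b) ≠ 0 := (Real.Gamma_pos_of_pos (by linarith)).ne'
  field_simp
  linarith [this]

theorem stmt_3 :
    ∫ x in Set.Ioi (0 : ℝ), x ^ (-(11 : ℝ) / 8) * Real.sqrt (Real.sqrt (1 + x) - 1) =
      4 * Real.Gamma (1 / 4) ^ 2 / (3 * Real.sqrt (2 - Real.sqrt 2) * Real.sqrt π) := by
  set φ : ℝ → ℝ := fun t => 4 * t / (1 - t) ^ 2 with hφ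
  set φ' : ℝ → ℝ := fun t => 4 * (1 + t) / (1 - t) ^ 3 with hφ'
  have hderiv : ∀ t ∈ Ioo (0:ℝ) 1, HasDerivWithinAt φ (φ' t) (Ioo 0 1) t := by
    intro t ht
    have h1 : (0 : ℝ) < 1 - t := by linarith [ht.2]
    have : HasDerivAt φ (φ' t) t := by
      have hd := (((hasDerivAt_id t).const_mul (4:ℝ)).div
        (((hasDerivAt_id t).const_sub 1).pow 2) (pow_ne_zero 2 h1.ne'))
      refine hd.congr_deriv ?_
      simp only [id_eq, Pi.pow_apply]
      rw [div_eq_div_iff (by positivity) (by positivity)]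
      ring
    exact this.hasDerivWithinAt
  have hinj : InjOn φ (Ioo 0 1) := by
    intro a ha b hb h
    have h1a : (1:ℝ) - a ≠ 0 := by have := ha.2; intro h; linarith [show a = 1 by linarith]
    have h1b : (1:ℝ) - b ≠ 0 := by have := hb.2; intro h; linarith [show b = 1 by linarith]
    have hab : a * b < 1 := by nlinarith [ha.1, ha.2, hb.1, hb.2]
    simp only [hφ] at h
    field_simp at h
    nlinarith [h]
  have himg : φ '' (Ioo 0 1) = Ioi (0:ℝ) := by
    apply Subset.antisymm
    · rintro _ ⟨t, ht, rfl⟩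
      have h1 : (0:ℝ) < 1 - t := by linarith [ht.2]
      exact mem_Ioi.mpr (div_pos (by linarith [ht.1]) (by positivity))
    · rintro x (hx : (0:ℝ) < x)
      have h1x : (1:ℝ) < 1 + x := by linarith
      set w := Real.sqrt (1 + x) with hwdef
      have hw2 : w ^ 2 = 1 + x := Real.sq_sqrt (by linarith)
      have hwnn : 0 ≤ w := Real.sqrt_nonneg _
      have hw : (1:ℝ) < w := by nlinarith
      refine ⟨(w - 1) / (w + 1), ⟨div_pos (by linarith) (by linarith), ?_⟩, ?_⟩
      · rw [div_lt_one (by linarith)]; linarith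
      · simp only [hφ]
        have hwp : w + 1 ≠ 0 := by positivity
        rw [show (1:ℝ) - (w - 1)/(w + 1) = 2/(w + 1) by field_simp; ring]
        field_simp
        nlinarith [hw2]
  have hsub := integral_image_eq_integral_abs_deriv_smul measurableSet_Ioo hderiv hinj
    (fun x => x ^ (-(11 : ℝ) / 8) * Real.sqrt (Real.sqrt (1 + x) - 1))
  rw [himg] at hsub
  rw [hsub]
  have hptwise : ∀ t ∈ Ioo (0:ℝ) 1,
      |φ' t| • ((φ t) ^ (-(11 : ℝ) / 8) * Real.sqrt (Real.sqrt (1 + φ t) - 1)) =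
      (2:ℝ) ^ (-(1:ℝ)/4) * (t ^ ((1:ℝ)/8 - 1) * (1 - t) ^ ((1:ℝ)/4 - 1)
        + t ^ ((9:ℝ)/8 - 1) * (1 - t) ^ ((1:ℝ)/4 - 1)) := by
    intro t ht
    obtain ⟨ht0, ht1⟩ := ht
    have hu : (0:ℝ) < 1 - t := by linarith
    have hv : (0:ℝ) < 1 + t := by linarith
    have hφt : φ t = 4 * t / (1 - t) ^ 2 := rfl
    have hφ't : φ' t = 4 * (1 + t) / (1 - t) ^ 3 := rfl
    have habs : |φ' t| = 4 * (1 + t) / (1 - t) ^ 3 := by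
      rw [hφ't]; exact abs_of_pos (by positivity)
    have h1 : (1:ℝ) + φ t = ((1 + t) / (1 - t)) ^ 2 := by
      rw [hφt]; field_simp; ring
    have h2 : Real.sqrt (1 + φ t) - 1 = 2 * t / (1 - t) := by
      rw [h1, Real.sqrt_sq (by positivity)]; field_simp; ring
    have h3 : Real.sqrt (Real.sqrt (1 + φ t) - 1) = (2 * t / (1 - t)) ^ ((1:ℝ)/2) := by
      rw [h2, Real.sqrt_eq_rpow]
    have hsplit : t ^ ((9:ℝ)/8 - 1) = t ^ ((1:ℝ)/8 - 1) * t := by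
      rw [← Real.rpow_add_one ht0.ne']; norm_num
    rw [smul_eq_mul, habs, hφt, h3, hsplit]
    rw [show (2:ℝ) ^ (-(1:ℝ)/4) * (t ^ ((1:ℝ)/8 - 1) * (1 - t) ^ ((1:ℝ)/4 - 1)
        + t ^ ((1:ℝ)/8 - 1) * t * (1 - t) ^ ((1:ℝ)/4 - 1)) =
        (2:ℝ) ^ (-(1:ℝ)/4) * (t ^ ((1:ℝ)/8 - 1) * ((1 - t) ^ ((1:ℝ)/4 - 1) * (1 + t))) by ring]
    have hLpos : (0:ℝ) < 4 * (1 + t) / (1 - t) ^ 3 *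
        ((4 * t / (1 - t) ^ 2) ^ (-(11:ℝ) / 8) * (2 * t / (1 - t)) ^ ((1:ℝ)/2)) := by
      positivity
    have hRpos : (0:ℝ) < (2:ℝ) ^ (-(1:ℝ)/4) *
        (t ^ ((1:ℝ)/8 - 1) * ((1 - t) ^ ((1:ℝ)/4 - 1) * (1 + t))) := by
      positivity
    rw [← Real.exp_log hLpos, ← Real.exp_log hRpos]
    congr 1
    have l1 : Real.log (4 * (1 + t) / (1 - t) ^ 3) =
        2 * Real.log 2 + Real.log (1 + t) - 3 * Real.log (1 - t) := by
      rw [Real.log_div (by positivity) (by positivity),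
        Real.log_mul (by positivity) (by positivity), Real.log_pow,
        show (4:ℝ) = 2 ^ (2:ℕ) by norm_num, Real.log_pow]
      push_cast; ring
    have l2 : Real.log (4 * t / (1 - t) ^ 2) =
        2 * Real.log 2 + Real.log t - 2 * Real.log (1 - t) := by
      rw [Real.log_div (by positivity) (by positivity),
        Real.log_mul (by positivity) (by positivity), Real.log_pow,
        show (4:ℝ) = 2 ^ (2:ℕ) by norm_num, Real.log_pow]
      push_cast; ring
    have l3 : Real.log (2 * t / (1 - t)) = Real.log 2 + Real.log t - Real.log (1 - t) := by
      rw [Real.log_div (by positivity) (by positivity),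
        Real.log_mul (by positivity) (by positivity)]
    have l4 : Real.log ((1 - t) ^ ((1:ℝ)/4 - 1) * (1 + t)) =
        ((1:ℝ)/4 - 1) * Real.log (1 - t) + Real.log (1 + t) := by
      rw [Real.log_mul (by positivity) (by positivity), Real.log_rpow hu]
    rw [Real.log_mul (by positivity) (by positivity),
      Real.log_mul (by positivity) (by positivity),
      Real.log_mul (by positivity) (by positivity),
      Real.log_mul (by positivity) (by positivity),
      Real.log_rpow (by positivity), Real.log_rpow (by positivity),
      Real.log_rpow (by positivity), Real.log_rpow (by positivity),
      l1, l2, l3, l4]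
    ring
  rw [setIntegral_congr_fun measurableSet_Ioo hptwise]
  have h18 : (0:ℝ) < 1/8 := by norm_num
  have h14 : (0:ℝ) < 1/4 := by norm_num
  have h98 : (0:ℝ) < 9/8 := by norm_num
  obtain ⟨hi1, hv1⟩ := beta_aux h18 h14
  obtain ⟨hi2, hv2⟩ := beta_aux h98 h14
  rw [integral_const_mul, integral_add hi1 hi2, hv1, hv2]
  -- now pure Gamma algebra
  have hG18 : 0 < Real.Gamma (1/8) := Real.Gamma_pos_of_pos (by norm_num)
  have hG14 : 0 < Real.Gamma (1/4) := Real.Gamma_pos_of_pos (by norm_num)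
  have hG38 : 0 < Real.Gamma (3/8) := Real.Gamma_pos_of_pos (by norm_num)
  have hG58 : 0 < Real.Gamma (5/8) := Real.Gamma_pos_of_pos (by norm_num)
  have e38 : (1:ℝ)/8 + 1/4 = 3/8 := by norm_num
  have e98 : Real.Gamma (9/8) = (1/8) * Real.Gamma (1/8) := by
    rw [show (9:ℝ)/8 = 1/8 + 1 by norm_num, Real.Gamma_add_one (by norm_num)]
  have e118 : Real.Gamma (9/8 + 1/4) = (3/8) * Real.Gamma (3/8) := by
    rw [show (9:ℝ)/8 + 1/4 = 3/8 + 1 by norm_num, Real.Gamma_add_one (by norm_num)]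
  rw [e38, e98, e118]
  have hdup := Real.Gamma_mul_Gamma_add_half (1/8)
  rw [show (1:ℝ)/8 + 1/2 = 5/8 by norm_num, show 2 * ((1:ℝ)/8) = 1/4 by norm_num] at hdup
  norm_num at hdup
  have hrefl := Real.Gamma_mul_Gamma_one_sub (3/8)
  rw [show 1 - (3:ℝ)/8 = 5/8 by norm_num] at hrefl
  have hsin : Real.sin (π * (3/8)) = Real.sqrt (2 + Real.sqrt 2) / 2 := by
    rw [show π * ((3:ℝ)/8) = π/2 - π/8 by ring, Real.sin_pi_div_two_sub,
      Real.cos_pi_div_eight]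
  rw [hsin] at hrefl
  have hsqrt2 : Real.sqrt 2 * Real.sqrt 2 = 2 := Real.mul_self_sqrt (by norm_num)
  have hsqrt2lt : Real.sqrt 2 < 2 := by nlinarith [Real.sqrt_nonneg 2]
  have hq : 0 < Real.sqrt (2 - Real.sqrt 2) := Real.sqrt_pos.mpr (by linarith)
  have hr : 0 < Real.sqrt (2 + Real.sqrt 2) := Real.sqrt_pos.mpr (by positivity)
  have k1 : Real.sqrt (2 - Real.sqrt 2) * Real.sqrt (2 + Real.sqrt 2) = Real.sqrt 2 := by
    rw [← Real.sqrt_mul (by linarith)]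
    rw [show (2 - Real.sqrt 2) * (2 + Real.sqrt 2) = 4 - Real.sqrt 2 * Real.sqrt 2 by ring,
      hsqrt2]
    norm_num
  have hsπ : Real.sqrt π * Real.sqrt π = π := Real.mul_self_sqrt pi_pos.le
  have hsπ0 : 0 < Real.sqrt π := Real.sqrt_pos.mpr pi_pos
  have h2pow : (2:ℝ) ^ (-(1:ℝ)/4) * 2 ^ ((3:ℝ)/4) = Real.sqrt 2 := by
    rw [← Real.rpow_add two_pos, Real.sqrt_eq_rpow]; norm_num
  -- express Gamma (1/8) and Gamma (3/8)
  have hA : Real.Gamma (1/8) =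
      Real.Gamma (1/4) * 2 ^ ((3:ℝ)/4) * Real.sqrt π / Real.Gamma (5/8) := by
    rw [eq_div_iff hG58.ne']
    exact hdup
  have hC : Real.Gamma (3/8) =
      π / (Real.sqrt (2 + Real.sqrt 2) / 2 * Real.Gamma (5/8)) := by
    rw [eq_div_iff (by positivity)]
    have h5 : Real.Gamma (3/8) * Real.Gamma (5/8) * (Real.sqrt (2 + Real.sqrt 2) / 2) = π := by
      rw [hrefl]
      field_simp
    linear_combination h5
  have key : (2:ℝ)^(-(1:ℝ)/4) * 2^((3:ℝ)/4) * (Real.sqrt (2 + Real.sqrt 2) *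
      Real.sqrt (2 - Real.sqrt 2)) = 2 := by
    rw [h2pow, show Real.sqrt (2 + Real.sqrt 2) * Real.sqrt (2 - Real.sqrt 2) = Real.sqrt 2
      from by rw [mul_comm]; exact k1]
    exact hsqrt2
  rw [hA, hC]
  have has : Real.Gamma (1/4) * 2 ^ ((3:ℝ)/4) * Real.sqrt π / Real.Gamma (5/8) *
        Real.Gamma (1/4) / (π / (Real.sqrt (2 + Real.sqrt 2) / 2 * Real.Gamma (5/8))) +
      1/8 * (Real.Gamma (1/4) * 2 ^ ((3:ℝ)/4) * Real.sqrt π / Real.Gamma (5/8)) *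
        Real.Gamma (1/4) / (3/8 * (π / (Real.sqrt (2 + Real.sqrt 2) / 2 * Real.Gamma (5/8)))) =
      2 * Real.Gamma (1/4) ^ 2 * 2 ^ ((3:ℝ)/4) * Real.sqrt π * Real.sqrt (2 + Real.sqrt 2) /
        (3 * π) := by
    field_simp
    ring
  rw [has, show (2:ℝ) ^ (-(1:ℝ)/4) * (2 * Real.Gamma (1/4) ^ 2 * 2 ^ ((3:ℝ)/4) * Real.sqrt π *
      Real.sqrt (2 + Real.sqrt 2) / (3 * π)) =
      (2:ℝ) ^ (-(1:ℝ)/4) * (2 * Real.Gamma (1/4) ^ 2 * 2 ^ ((3:ℝ)/4) * Real.sqrt π *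
      Real.sqrt (2 + Real.sqrt 2)) / (3 * π) from by ring]
  rw [div_eq_div_iff (by positivity) (by positivity)]
  linear_combination (6 * Real.Gamma (1/4) ^ 2 * Real.sqrt π * Real.sqrt π) * key +
    (12 * Real.Gamma (1/4) ^ 2) * hsπ
end

section
/- For real α, β with −β < α < −β/2 (so β < 0 is impossible; assume β > 0), ∫₀^∞ x^{α−1} (√(1+x) − 1)^β dx = β · Γ(−β−2α) · Γ(α+β) · 2^{2α+β} / Γ(1−α). -/
open Real MeasureTheory

open Set

lemma beta_complex_eq_real (a b : ℝ) (ha : 0 < a) (hb : 0 < b) :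
    Complex.betaIntegral a b = ((∫ x in Ioo (0:ℝ) 1, x ^ (a-1) * (1-x) ^ (b-1) : ℝ) : ℂ) := by
  rw [Complex.betaIntegral, intervalIntegral.integral_of_le zero_le_one,
    ← MeasureTheory.integral_Ioc_eq_integral_Ioo (f := fun x : ℝ => x ^ (a-1) * (1-x) ^ (b-1))]
  rw [setIntegral_congr_fun measurableSet_Ioc (g := fun x : ℝ => ((x ^ (a-1) * (1-x) ^ (b-1) : ℝ) : ℂ)) (fun x hx => ?_)]
  · exact integral_ofReal
  rw [show ((a:ℂ)-1) = ((a-1:ℝ):ℂ) by push_cast; ring,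
    show (1-(x:ℂ)) = ((1-x:ℝ):ℂ) by push_cast; ring,
    show ((b:ℂ)-1) = ((b-1:ℝ):ℂ) by push_cast; ring,
    ← Complex.ofReal_cpow hx.1.le, ← Complex.ofReal_cpow (by linarith [hx.2] : (0:ℝ) ≤ 1 - x)]
  push_cast
  ring

lemma beta_real (a b : ℝ) (ha : 0 < a) (hb : 0 < b) :
    ∫ x in Ioo (0:ℝ) 1, x ^ (a-1) * (1-x) ^ (b-1) = Real.Gamma a * Real.Gamma b / Real.Gamma (a+b) := by
  have h := Complex.Gamma_mul_Gamma_eq_betaIntegral (s := a) (t := b) (by simpa using ha) (by simpa using hb)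
  rw [beta_complex_eq_real a b ha hb] at h
  have h2 : ((Real.Gamma a * Real.Gamma b : ℝ) : ℂ) = ((Real.Gamma (a+b) * ∫ x in Ioo (0:ℝ) 1, x ^ (a-1) * (1-x) ^ (b-1) : ℝ) : ℂ) := by
    push_cast [← Complex.Gamma_ofReal]
    simpa using h
  have h3 := Complex.ofReal_injective h2
  have hG : Real.Gamma (a+b) ≠ 0 := (Real.Gamma_pos_of_pos (by linarith)).ne'
  field_simp
  linarith [h3]

lemma beta_integrable (a b : ℝ) (ha : 0 < a) (hb : 0 < b) :
    IntegrableOn (fun x : ℝ => x ^ (a-1) * (1-x) ^ (b-1)) (Ioo (0:ℝ) 1) := by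
  have h := (Complex.betaIntegral_convergent (u := a) (v := b) (by simpa using ha) (by simpa using hb)).norm
  have h2 : IntegrableOn (fun x : ℝ => ‖(x:ℂ) ^ ((a:ℂ)-1) * (1-(x:ℂ)) ^ ((b:ℂ)-1)‖) (Ioo (0:ℝ) 1) :=
    (intervalIntegrable_iff_integrableOn_Ioo_of_le zero_le_one).mp h
  refine h2.congr_fun (fun x hx => ?_) measurableSet_Ioo
  dsimp only
  rw [norm_mul,
    show ((a:ℂ)-1) = ((a-1:ℝ):ℂ) by push_cast; ring,
    show (1-(x:ℂ)) = ((1-x:ℝ):ℂ) by push_cast; ring,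
    show ((b:ℂ)-1) = ((b-1:ℝ):ℂ) by push_cast; ring,
    ← Complex.ofReal_cpow hx.1.le, ← Complex.ofReal_cpow (by linarith [hx.2] : (0:ℝ) ≤ 1 - x),
    Complex.norm_real, Complex.norm_real, Real.norm_of_nonneg (Real.rpow_nonneg hx.1.le _),
    Real.norm_of_nonneg (Real.rpow_nonneg (by linarith [hx.2]) _)]


theorem stmt_5 (α β : ℝ) (hβ : 0 < β) (h1 : -β < α) (h2 : α < -β / 2) :
    ∫ x in Set.Ioi (0 : ℝ), x ^ (α - 1) * (Real.sqrt (1 + x) - 1) ^ β =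
      β * Real.Gamma (-β - 2 * α) * Real.Gamma (α + β) * 2 ^ (2 * α + β) / Real.Gamma (1 - α) := by
  set f : ℝ → ℝ := fun v => 4*v/(1-v)^2 with hf
  have himg : f '' Ioo 0 1 = Ioi (0:ℝ) := by
    apply Subset.antisymm
    · rintro _ ⟨v, ⟨hv0, hv1⟩, rfl⟩
      have h1v : (0:ℝ) < 1 - v := by linarith
      simp only [hf, mem_Ioi]
      positivity
    · rintro x hx
      have hx0 : (0:ℝ) < x := hx
      set s := Real.sqrt (1+x) with hs
      have hs2 : s^2 = 1 + x := Real.sq_sqrt (by linarith)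
      have hs1 : 1 < s := by nlinarith [Real.sqrt_nonneg (1+x)]
      refine ⟨(s-1)/(s+1), ⟨div_pos (by linarith) (by linarith), ?_⟩, ?_⟩
      · rw [div_lt_one (by linarith)]; linarith
      · show 4*((s-1)/(s+1))/(1-(s-1)/(s+1))^2 = x
        have hne : s + 1 ≠ 0 := by linarith
        field_simp
        nlinarith [hs2]
  have hinj : InjOn f (Ioo 0 1) := by
    rintro v ⟨hv0, hv1⟩ w ⟨hw0, hw1⟩ h
    simp only [hf] at h
    have hv : (1-v) ≠ 0 := by linarith
    have hw : (1-w) ≠ 0 := by linarith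
    field_simp at h
    have key : (v - w) * (1 - v*w) = 0 := by linear_combination h
    have : 1 - v*w > 0 := by nlinarith
    have := mul_eq_zero.mp key
    rcases this with h' | h'
    · linarith
    · linarith
  have hderiv : ∀ v ∈ Ioo (0:ℝ) 1, HasDerivWithinAt f (4*(1+v)/(1-v)^3) (Ioo (0:ℝ) 1) v := by
    rintro v ⟨hv0, hv1⟩
    have h1v : (0:ℝ) < 1 - v := by linarith
    have hnum : HasDerivAt (fun y : ℝ => 4*y) 4 v := by
      simpa using (hasDerivAt_id v).const_mul 4
    have hden : HasDerivAt (fun y : ℝ => (1-y)^2) (↑2*(1-v)^(2-1)*(0-1)) v :=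
      ((hasDerivAt_const v (1:ℝ)).sub (hasDerivAt_id v)).pow 2
    have hd : HasDerivAt f ((4*(1-v)^2 - 4*v*(↑2*(1-v)^(2-1)*(0-1)))/((1-v)^2)^2) v := by
      rw [hf]; exact hnum.div hden (pow_ne_zero 2 h1v.ne')
    have heq : (4*(1-v)^2 - 4*v*(↑2*(1-v)^(2-1)*(0-1)))/((1-v)^2)^2 = 4*(1+v)/(1-v)^3 := by
      field_simp
      ring
    rw [heq] at hd
    exact hd.hasDerivWithinAt
  rw [← himg, integral_image_eq_integral_abs_deriv_smul measurableSet_Ioo hderiv hinj]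
  have hptwise : ∀ v ∈ Ioo (0:ℝ) 1,
      |4*(1+v)/(1-v)^3| • (f v ^ (α-1) * (Real.sqrt (1 + f v) - 1) ^ β)
      = 2^(2*α+β) * (v^(α+β-1)*(1-v)^(-2*α-β-1) + v^(α+β+1-1)*(1-v)^(-2*α-β-1)) := by
    rintro v ⟨hv0, hv1⟩
    have h1v : (0:ℝ) < 1 - v := by linarith
    have hsq : 1 + 4*v/(1-v)^2 = ((1+v)/(1-v))^2 := by field_simp; ring
    have hfrac : (0:ℝ) ≤ (1+v)/(1-v) := by positivity
    show |4*(1+v)/(1-v)^3| * ((4*v/(1-v)^2) ^ (α-1) * (Real.sqrt (1 + 4*v/(1-v)^2) - 1) ^ β) = _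
    rw [hsq, Real.sqrt_sq hfrac]
    have hsub : (1+v)/(1-v) - 1 = 2*v/(1-v) := by field_simp; ring
    rw [hsub, abs_of_pos (by positivity)]
    have hb1 : 4*v/(1-v)^2 = (2:ℝ)^(2:ℝ)*v*(1-v)^(-2:ℝ) := by
      rw [Real.rpow_neg h1v.le, show ((2:ℝ)^(2:ℝ)) = 4 by
        rw [show (2:ℝ) = ((2:ℕ):ℝ) by norm_num, Real.rpow_natCast]; norm_num,
        show ((1-v)^(2:ℝ)) = (1-v)^2 by
        rw [show (2:ℝ) = ((2:ℕ):ℝ) by norm_num, Real.rpow_natCast]]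
      field_simp
    have hb2 : 2*v/(1-v) = (2:ℝ)^(1:ℝ)*v*(1-v)^(-1:ℝ) := by
      rw [Real.rpow_neg h1v.le, Real.rpow_one, Real.rpow_one]
      field_simp
    have hb3 : 4*(1+v)/(1-v)^3 = (2:ℝ)^(2:ℝ)*((1-v)^(-3:ℝ)*(1+v)) := by
      rw [Real.rpow_neg h1v.le, show ((2:ℝ)^(2:ℝ)) = 4 by
        rw [show (2:ℝ) = ((2:ℕ):ℝ) by norm_num, Real.rpow_natCast]; norm_num,
        show ((1-v)^(3:ℝ)) = (1-v)^3 by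
        rw [show (3:ℝ) = ((3:ℕ):ℝ) by norm_num, Real.rpow_natCast]]
      field_simp
    rw [hb1, hb2, hb3,
      Real.mul_rpow (by positivity) (by positivity),
      Real.mul_rpow (by positivity) hv0.le,
      Real.mul_rpow (by positivity) (by positivity),
      Real.mul_rpow (by positivity) hv0.le,
      ← Real.rpow_mul (by norm_num : (0:ℝ) ≤ 2), ← Real.rpow_mul (by norm_num : (0:ℝ) ≤ 2),
      ← Real.rpow_mul h1v.le, ← Real.rpow_mul h1v.le]
    rw [show v^(α+β+1-1) = v^(α+β-1)*v by
        rw [show (α+β+1-1:ℝ) = (α+β-1)+1 by ring, Real.rpow_add_one hv0.ne'],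
      show v^(α+β-1) = v^(α-1)*v^β by rw [show (α+β-1:ℝ) = (α-1)+β by ring, Real.rpow_add hv0],
      show (1-v)^(-2*α-β-1) = (1-v)^(-2*(α-1)) * (1-v)^(-1*β) * (1-v)^(-3:ℝ) by
        rw [← Real.rpow_add h1v, ← Real.rpow_add h1v]; ring_nf,
      show (2:ℝ)^(2*α+β) = 2^(2:ℝ) * 2^(2*(α-1)) * 2^(1*β) by
        rw [← Real.rpow_add two_pos, ← Real.rpow_add two_pos]; ring_nf]
    ring
  rw [setIntegral_congr_fun measurableSet_Ioo hptwise]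
  rw [MeasureTheory.integral_const_mul]
  have ha : 0 < α + β := by linarith
  have hb : 0 < -2*α - β := by linarith
  have hIadd : ∫ v in Ioo (0:ℝ) 1, (v^(α+β-1)*(1-v)^(-2*α-β-1) + v^(α+β+1-1)*(1-v)^(-2*α-β-1))
      = (∫ v in Ioo (0:ℝ) 1, v^((α+β)-1)*(1-v)^((-2*α-β)-1))
        + ∫ v in Ioo (0:ℝ) 1, v^((α+β+1)-1)*(1-v)^((-2*α-β)-1) := by
    rw [← MeasureTheory.integral_add (beta_integrable _ _ ha hb) (beta_integrable _ _ (by linarith : (0:ℝ) < α+β+1) hb)]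
  rw [hIadd, beta_real _ _ ha hb, beta_real _ _ (by linarith) hb]
  have e1 : α + β + (-2*α-β) = -α := by ring
  have e2 : α + β + 1 + (-2*α-β) = 1 - α := by ring
  rw [e1, e2]
  have hα : α < 0 := by linarith
  have hGneg : Real.Gamma (-α) ≠ 0 := (Real.Gamma_pos_of_pos (by linarith)).ne'
  have hG1 : Real.Gamma (1-α) = -α * Real.Gamma (-α) := by
    rw [show (1-α:ℝ) = -α + 1 by ring, Real.Gamma_add_one (by linarith : (-α:ℝ) ≠ 0)]
  have hG2 : Real.Gamma (α+β+1) = (α+β) * Real.Gamma (α+β) := Real.Gamma_add_one ha.ne'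
  have hG3 : Real.Gamma (-β-2*α) = Real.Gamma (-2*α-β) := by ring_nf
  rw [hG1, hG2, hG3]
  field_simp [hGneg, hα.ne]
  ring
end

section
/- For all x with |x| < 1 and β > 0, ((√(1+x) − 1)/x)^β = 2^{−β} · Σ_{k≥0} (β/2)_k ((β+1)/2)_k / ((β+1)_k k!) · (−x)^k. -/
open Real Polynomial

namespace Stmt6

noncomputable def c (β : ℝ) (k : ℕ) : ℝ :=
  (ascPochhammer ℝ k).eval (β / 2) * (ascPochhammer ℝ k).eval ((β + 1) / 2) /
    ((ascPochhammer ℝ k).eval (β + 1) * (k.factorial : ℝ))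

noncomputable def d (β : ℝ) (k : ℕ) : ℝ := (-1) ^ k * c β k

lemma poch_pos {t : ℝ} (ht : 0 < t) (k : ℕ) : 0 < (ascPochhammer ℝ k).eval t := by
  induction k with
  | zero => simp [ascPochhammer_zero]
  | succ n ih =>
      rw [ascPochhammer_succ_right]
      simp only [eval_mul, eval_add, eval_X, eval_natCast]
      positivity

lemma poch_succ (t : ℝ) (k : ℕ) :
    (ascPochhammer ℝ (k + 1)).eval t = (ascPochhammer ℝ k).eval t * (t + k) := by
  rw [ascPochhammer_succ_right]
  simp

lemma c_pos {β : ℝ} (hβ : 0 < β) (k : ℕ) : 0 < c β k := by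
  have h1 := poch_pos (by positivity : (0:ℝ) < β / 2) k
  have h2 := poch_pos (by positivity : (0:ℝ) < (β + 1) / 2) k
  have h3 := poch_pos (by positivity : (0:ℝ) < β + 1) k
  have h4 : (0:ℝ) < (Nat.factorial k : ℝ) := by positivity
  exact div_pos (mul_pos h1 h2) (mul_pos h3 h4)

lemma c_zero (β : ℝ) : c β 0 = 1 := by simp [c]

lemma c_succ {β : ℝ} (hβ : 0 < β) (k : ℕ) :
    c β (k + 1) * ((β + 1 + k) * ((k : ℝ) + 1)) =
      c β k * ((β / 2 + k) * ((β + 1) / 2 + k)) := by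
  have h3 := poch_pos (by positivity : (0:ℝ) < β + 1) k
  have h4 : (0:ℝ) < (Nat.factorial k : ℝ) := by positivity
  have hfac : ((k + 1).factorial : ℝ) = ((k : ℝ) + 1) * (Nat.factorial k : ℝ) := by
    push_cast [Nat.factorial_succ]; ring
  rw [c, c, poch_succ, poch_succ, poch_succ, hfac]
  field_simp

lemma d_rec {β : ℝ} (hβ : 0 < β) (k : ℕ) :
    ((k : ℝ) + 1) * (β + 1 + k) * d β (k + 1) =
      -((β / 2 + k) * ((β + 1) / 2 + k)) * d β k := by
  have := c_succ hβ k
  simp only [d, pow_succ]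
  linear_combination (-(-1 : ℝ) ^ k) * this



noncomputable def K (β : ℝ) : ℕ := ⌈β * β⌉₊

lemma c_decr {β : ℝ} (hβ : 0 < β) {k : ℕ} (hk : K β ≤ k) : c β (k + 1) ≤ c β k := by
  have hkβ : β * β ≤ (k : ℝ) := le_trans (Nat.le_ceil _) (by exact_mod_cast hk)
  have hden : (0:ℝ) < (β + 1 + k) * ((k : ℝ) + 1) := by positivity
  have hnum : (0:ℝ) ≤ (β / 2 + k) * ((β + 1) / 2 + k) := by positivity
  have hle : (β / 2 + k) * ((β + 1) / 2 + k) ≤ (β + 1 + k) * ((k : ℝ) + 1) := by nlinarith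
  have h := c_succ hβ k
  have hck := (c_pos hβ k).le
  nlinarith [c_pos hβ (k+1)]

noncomputable def Cb (β : ℝ) : ℝ := ∑ i ∈ Finset.range (K β + 1), c β i

lemma Cb_pos {β : ℝ} (hβ : 0 < β) : 0 < Cb β :=
  Finset.sum_pos (fun i _ => c_pos hβ i) ⟨0, by simp⟩

lemma c_le_Cb {β : ℝ} (hβ : 0 < β) (k : ℕ) : c β k ≤ Cb β := by
  rcases le_or_gt k (K β) with h | h
  · exact Finset.single_le_sum (fun i _ => (c_pos hβ i).le)
      (Finset.mem_range.2 (Nat.lt_succ_of_le h))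
  · -- k > K β : induction down
    have key : ∀ n, c β (K β + n) ≤ Cb β := by
      intro n
      induction n with
      | zero =>
          simpa [Cb] using Finset.single_le_sum (f := fun i => c β i)
            (fun i _ => (c_pos hβ i).le) (Finset.mem_range.2 (Nat.lt_succ_self (K β)))
      | succ m ih =>
          have hd : c β ((K β + m) + 1) ≤ c β (K β + m) :=
            c_decr hβ (Nat.le_add_right _ _)
          have he : K β + (m + 1) = (K β + m) + 1 := rfl
          rw [he]
          exact le_trans hd ih
    obtain ⟨n, rfl⟩ := Nat.exists_eq_add_of_le h.le
    exact key n

lemma d_abs {β : ℝ} (hβ : 0 < β) (k : ℕ) : |d β k| ≤ Cb β := by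
  rw [d, abs_mul, abs_pow, abs_neg, abs_one, one_pow, one_mul,
    abs_of_pos (c_pos hβ k)]
  exact c_le_Cb hβ k

lemma summable_aux {x : ℝ} (hx : |x| < 1) (g : ℕ → ℝ) (C : ℝ)
    (hg : ∀ k, |g k| ≤ C * ((k : ℝ) + 1) ^ 2) :
    Summable fun k => g k * x ^ k := by
  have hx' : ‖|x|‖ < 1 := by rwa [Real.norm_eq_abs, abs_abs]
  have h2 : Summable (fun n : ℕ => (n : ℝ) ^ 2 * |x| ^ n) :=
    summable_pow_mul_geometric_of_norm_lt_one 2 hx'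
  have h1 : Summable (fun n : ℕ => (n : ℝ) ^ 1 * |x| ^ n) :=
    summable_pow_mul_geometric_of_norm_lt_one 1 hx'
  have h0 : Summable (fun n : ℕ => |x| ^ n) := summable_geometric_of_lt_one (abs_nonneg x) hx
  have hsum : Summable (fun n : ℕ => C * ((n : ℝ) + 1) ^ 2 * |x| ^ n) := by
    have := ((h2.add (h1.mul_left 2)).add h0).mul_left C
    refine this.congr fun n => ?_
    ring
  refine Summable.of_norm_bounded hsum fun k => ?_
  rw [norm_mul, norm_pow, Real.norm_eq_abs, Real.norm_eq_abs]
  exact mul_le_mul_of_nonneg_right (hg k) (pow_nonneg (abs_nonneg x) k)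



noncomputable def T (β : ℝ) (x : ℝ) : ℝ := ∑' k : ℕ, d β k * x ^ k
noncomputable def T1 (β : ℝ) (x : ℝ) : ℝ := ∑' k : ℕ, ((k : ℝ) + 1) * d β (k + 1) * x ^ k
noncomputable def T2 (β : ℝ) (x : ℝ) : ℝ :=
  ∑' k : ℕ, ((k : ℝ) + 2) * ((k : ℝ) + 1) * d β (k + 2) * x ^ k

lemma summable_poly_shift {β : ℝ} (hβ : 0 < β) {x : ℝ} (hx : |x| < 1)
    (a b e : ℝ) (j : ℕ) :
    Summable fun k : ℕ => (a * (k : ℝ) ^ 2 + b * (k : ℝ) + e) * d β (k + j) * x ^ k := by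
  have hC : (0:ℝ) ≤ Cb β := (Cb_pos hβ).le
  refine summable_aux hx _ ((|a| + |b| + |e|) * Cb β) fun k => ?_
  have hk0 : (0:ℝ) ≤ (k : ℝ) := Nat.cast_nonneg k
  have h1 : |a * (k:ℝ) ^ 2 + b * (k:ℝ) + e| ≤ (|a| + |b| + |e|) * ((k:ℝ) + 1) ^ 2 := by
    have t1 := abs_add_le (a * (k:ℝ) ^ 2 + b * (k:ℝ)) e
    have t2 := abs_add_le (a * (k:ℝ) ^ 2) (b * (k:ℝ))
    rw [abs_mul] at t2
    have t3 : |a * (k:ℝ)^2| = |a| * (k:ℝ)^2 := by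
      rw [abs_mul, abs_pow, abs_of_nonneg hk0]
    have t4 : |(k:ℝ)| = (k:ℝ) := abs_of_nonneg hk0
    have t5 : |b * (k:ℝ)| = |b| * (k:ℝ) := by rw [abs_mul, t4]
    have t6 : |((k:ℝ) ^ 2)| = (k:ℝ)^2 := by rw [abs_pow, t4]
    nlinarith [abs_nonneg a, abs_nonneg b, abs_nonneg e,
      mul_nonneg (abs_nonneg a) hk0, mul_nonneg (abs_nonneg b) hk0,
      mul_nonneg (abs_nonneg e) hk0, mul_nonneg (mul_nonneg (abs_nonneg e) hk0) hk0,
      mul_nonneg (mul_nonneg (abs_nonneg b) hk0) hk0]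
  rw [abs_mul]
  calc |a * (k:ℝ)^2 + b * (k:ℝ) + e| * |d β (k + j)|
      ≤ ((|a| + |b| + |e|) * ((k:ℝ) + 1) ^ 2) * Cb β := by
        refine mul_le_mul h1 (d_abs hβ _) (abs_nonneg _) (by positivity)
    _ = (|a| + |b| + |e|) * Cb β * ((k:ℝ) + 1) ^ 2 := by ring

lemma summable_T {β : ℝ} (hβ : 0 < β) {x : ℝ} (hx : |x| < 1) :
    Summable fun k : ℕ => d β k * x ^ k := by
  refine (summable_poly_shift hβ hx 0 0 1 0).congr fun k => ?_
  norm_num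

lemma summable_T1 {β : ℝ} (hβ : 0 < β) {x : ℝ} (hx : |x| < 1) :
    Summable fun k : ℕ => ((k : ℝ) + 1) * d β (k + 1) * x ^ k := by
  refine (summable_poly_shift hβ hx 0 1 1 1).congr fun k => ?_
  ring_nf

lemma summable_T2 {β : ℝ} (hβ : 0 < β) {x : ℝ} (hx : |x| < 1) :
    Summable fun k : ℕ => ((k : ℝ) + 2) * ((k : ℝ) + 1) * d β (k + 2) * x ^ k := by
  refine (summable_poly_shift hβ hx 1 3 2 2).congr fun k => ?_
  ring_nf

/-- Master derivative lemma for power series with coefficients of at most linear growth. -/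
lemma hasDerivAt_series {x : ℝ} (hx : |x| < 1) (e : ℕ → ℝ) (C : ℝ) (hC : 0 ≤ C)
    (he : ∀ n, |e n| ≤ C * ((n : ℝ) + 1)) :
    HasDerivAt (fun z => ∑' n, e n * z ^ n)
      (∑' n, e (n + 1) * (((n : ℝ) + 1) * x ^ n)) x := by
  set r : ℝ := (1 + |x|) / 2 with hrdef
  have hxabs : 0 ≤ |x| := abs_nonneg x
  have hr0 : 0 < r := by rw [hrdef]; linarith
  have hrx : |x| < r := by rw [hrdef]; linarith
  have hr1 : r < 1 := by rw [hrdef]; linarith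
  have hr2 : 1 ≤ 2 * r := by rw [hrdef]; linarith
  have hball : x ∈ Metric.ball (0:ℝ) r := by
    simpa [Real.dist_eq] using hrx
  set u : ℕ → ℝ := fun n => 2 * C * (((n : ℝ) + 1) ^ 2 * r ^ n) with hudef
  have hu : Summable u := by
    have habs : |r| < 1 := by rw [abs_of_pos hr0]; exact hr1
    have h := summable_aux habs (fun n => ((n : ℝ) + 1) ^ 2) 1
      (fun k => by rw [abs_of_nonneg (by positivity)]; norm_num)
    exact (h.mul_left (2 * C)).congr fun n => by rw [hudef]
  have hg : ∀ n y, y ∈ Metric.ball (0:ℝ) r →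
      HasDerivAt (fun z => e n * z ^ n) (e n * ((n : ℝ) * y ^ (n - 1))) y :=
    fun n y _ => (hasDerivAt_pow n y).const_mul (e n)
  have hg' : ∀ n y, y ∈ Metric.ball (0:ℝ) r →
      ‖e n * ((n : ℝ) * y ^ (n - 1))‖ ≤ u n := by
    intro n y hy
    have hyr : |y| ≤ r := by
      have := Metric.mem_ball.1 hy
      rw [Real.dist_eq, sub_zero] at this
      exact this.le
    rw [Real.norm_eq_abs, abs_mul, abs_mul, abs_pow, Nat.abs_cast, hudef]
    match n with
    | 0 =>
      simp only [Nat.cast_zero, zero_mul, mul_zero, abs_zero]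
      positivity
    | (m + 1) =>
      have hpow : |y| ^ (m + 1 - 1) ≤ r ^ m := by
        simpa using pow_le_pow_left₀ (abs_nonneg y) hyr m
      have hrm : (0:ℝ) ≤ r ^ m := by positivity
      have hm0 : (0:ℝ) ≤ (m:ℝ) := Nat.cast_nonneg m
      have hem := he (m+1)
      push_cast at hem ⊢
      have h1 : |e (m+1)| * (((m:ℝ)+1) * |y| ^ (m + 1 - 1))
          ≤ (C * (((m:ℝ)+1)+1)) * (((m:ℝ)+1) * r ^ m) := by
        refine mul_le_mul hem ?_ (by positivity) (by positivity)
        exact mul_le_mul_of_nonneg_left hpow (by positivity)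
      refine h1.trans ?_
      have hrs : r ^ (m + 1) = r * r ^ m := by ring
      rw [hrs]
      have c0 : (0:ℝ) ≤ C * (((m:ℝ)+1+1)^2) * r ^ m := by positivity
      have hA : C * (((m:ℝ)+1+1)^2) * r ^ m * 1 ≤ C * (((m:ℝ)+1+1)^2) * r ^ m * (2*r) :=
        mul_le_mul_of_nonneg_left hr2 c0
      have hB : C * ((m:ℝ)+1+1) * (((m:ℝ)+1) * r ^ m) ≤ C * (((m:ℝ)+1+1)^2) * r ^ m := by
        nlinarith [mul_nonneg (mul_nonneg hC (by linarith : (0:ℝ) ≤ (m:ℝ)+2)) hrm]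
      nlinarith [hA, hB]
  have hg0 : Summable fun n => e n * (0:ℝ) ^ n := by
    have h0 : |(0:ℝ)| < 1 := by norm_num
    refine summable_aux h0 e C fun k => (he k).trans ?_
    have hk0 : (0:ℝ) ≤ (k:ℝ) := Nat.cast_nonneg k
    nlinarith [mul_nonneg (mul_nonneg hC (by linarith : (0:ℝ) ≤ (k:ℝ)+1)) hk0]
  have hmain := hasDerivAt_tsum_of_isPreconnected hu Metric.isOpen_ball
    ((convex_ball (0:ℝ) r).isPreconnected) hg hg'
    (Metric.mem_ball_self hr0) hg0 hball
  have hsum' : Summable fun n => e n * ((n : ℝ) * x ^ (n - 1)) :=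
    Summable.of_norm_bounded hu fun n => hg' n x hball
  have hshift : (∑' n, e n * ((n : ℝ) * x ^ (n - 1)))
      = ∑' n, e (n + 1) * (((n : ℝ) + 1) * x ^ n) := by
    rw [Summable.tsum_eq_zero_add hsum']
    simp only [Nat.cast_zero, zero_mul, mul_zero, zero_add]
    refine tsum_congr fun n => ?_
    push_cast
    congr 1
  rw [hshift] at hmain
  exact hmain

lemma hasDerivAt_T {β : ℝ} (hβ : 0 < β) {x : ℝ} (hx : |x| < 1) :
    HasDerivAt (T β) (T1 β x) x := by
  have h := hasDerivAt_series hx (d β) (Cb β) (Cb_pos hβ).le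
    (fun n => (d_abs hβ n).trans
      (by nlinarith [(Nat.cast_nonneg n : (0:ℝ) ≤ (n:ℝ)), (Cb_pos hβ).le]))
  have h2 : T1 β x = ∑' n : ℕ, d β (n + 1) * (((n : ℝ) + 1) * x ^ n) :=
    tsum_congr fun n => by ring
  rw [h2]
  exact h

lemma hasDerivAt_T1 {β : ℝ} (hβ : 0 < β) {x : ℝ} (hx : |x| < 1) :
    HasDerivAt (T1 β) (T2 β x) x := by
  have he : ∀ n : ℕ, |((n:ℝ) + 1) * d β (n + 1)| ≤ Cb β * ((n:ℝ) + 1) := by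
    intro n
    rw [abs_mul, abs_of_nonneg (by positivity : (0:ℝ) ≤ (n:ℝ) + 1)]
    calc ((n:ℝ) + 1) * |d β (n + 1)| ≤ ((n:ℝ) + 1) * Cb β :=
          mul_le_mul_of_nonneg_left (d_abs hβ _) (by positivity)
      _ = Cb β * ((n:ℝ) + 1) := by ring
  have h := hasDerivAt_series hx (fun n => ((n:ℝ) + 1) * d β (n + 1)) (Cb β)
    (Cb_pos hβ).le he
  have h2 : T2 β x
      = ∑' n : ℕ, ((((n:ℝ) + 1) + 1) * d β ((n + 1) + 1)) * (((n : ℝ) + 1) * x ^ n) :=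
    tsum_congr fun n => by rw [show (n + 1) + 1 = n + 2 from rfl]; ring
  rw [h2]
  refine h.congr_deriv (tsum_congr fun n => ?_)
  push_cast
  ring

lemma continuousAt_T {β : ℝ} (hβ : 0 < β) {x : ℝ} (hx : |x| < 1) :
    ContinuousAt (T β) x := (hasDerivAt_T hβ hx).continuousAt

lemma continuousAt_T1 {β : ℝ} (hβ : 0 < β) {x : ℝ} (hx : |x| < 1) :
    ContinuousAt (T1 β) x := (hasDerivAt_T1 hβ hx).continuousAt


lemma T_zero (β : ℝ) : T β 0 = 1 := by
  rw [T, tsum_eq_single 0 (fun n hn => by simp [zero_pow hn])]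
  simp [d, c_zero]

lemma c_one {β : ℝ} (hβ : 0 < β) : c β 1 = β / 4 := by
  have h1 : (β:ℝ) + 1 ≠ 0 := by positivity
  rw [c]
  simp only [ascPochhammer_one, eval_X, Nat.factorial_one, Nat.cast_one]
  field_simp
  ring

lemma T1_zero {β : ℝ} (hβ : 0 < β) : T1 β 0 = -(β / 4) := by
  rw [T1, tsum_eq_single 0 (fun n hn => by simp [zero_pow hn])]
  simp [d, c_one hβ]

lemma ode {β : ℝ} (hβ : 0 < β) {x : ℝ} (hx : |x| < 1) :
    x * (1 + x) * T2 β x + ((β + 1) + (β + 3/2) * x) * T1 β x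
      + (β * (β + 1) / 4) * T β x = 0 := by
  have sP1 : Summable fun k : ℕ => (((k:ℝ)+1) * (k:ℝ) * d β (k+1)) * x ^ k :=
    (summable_poly_shift hβ hx 1 1 0 1).congr fun k => by ring_nf
  have sP2 : Summable fun k : ℕ => ((k:ℝ) * ((k:ℝ)-1) * d β k) * x ^ k :=
    (summable_poly_shift hβ hx 1 (-1) 0 0).congr fun k => by ring_nf
  have sP3 : Summable fun k : ℕ => ((β+1) * (((k:ℝ)+1) * d β (k+1))) * x ^ k :=
    (summable_poly_shift hβ hx 0 (β+1) (β+1) 1).congr fun k => by ring_nf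
  have sP4 : Summable fun k : ℕ => ((β+3/2) * ((k:ℝ) * d β k)) * x ^ k :=
    (summable_poly_shift hβ hx 0 (β+3/2) 0 0).congr fun k => by ring_nf
  have sP5 : Summable fun k : ℕ => ((β*(β+1)/4) * d β k) * x ^ k :=
    (summable_poly_shift hβ hx 0 0 (β*(β+1)/4) 0).congr fun k => by ring_nf
  -- shift identities
  have h1 : x * T2 β x = ∑' k : ℕ, (((k:ℝ)+1) * (k:ℝ) * d β (k+1)) * x ^ k := by
    rw [Summable.tsum_eq_zero_add sP1, T2, ← tsum_mul_left]
    norm_num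
    exact tsum_congr fun k => by push_cast; ring
  have h2 : x^2 * T2 β x = ∑' k : ℕ, ((k:ℝ) * ((k:ℝ)-1) * d β k) * x ^ k := by
    rw [Summable.tsum_eq_zero_add sP2]
    have sP2' : Summable fun k : ℕ =>
        ((k+1 : ℕ):ℝ) * (((k+1 : ℕ):ℝ) - 1) * d β (k+1) * x ^ (k+1) := by
      have := (summable_nat_add_iff 1).2 sP2
      exact this.congr fun k => by push_cast; ring
    rw [Summable.tsum_eq_zero_add sP2', T2, ← tsum_mul_left]
    norm_num
    exact tsum_congr fun k => by push_cast; ring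
  have h3 : (β+1) * T1 β x = ∑' k : ℕ, ((β+1) * (((k:ℝ)+1) * d β (k+1))) * x ^ k := by
    rw [T1, ← tsum_mul_left]
    exact tsum_congr fun k => by ring
  have h4 : ((β+3/2) * x) * T1 β x = ∑' k : ℕ, ((β+3/2) * ((k:ℝ) * d β k)) * x ^ k := by
    rw [Summable.tsum_eq_zero_add sP4, T1, ← tsum_mul_left]
    norm_num
    exact tsum_congr fun k => by push_cast; ring
  have h5 : (β*(β+1)/4) * T β x = ∑' k : ℕ, ((β*(β+1)/4) * d β k) * x ^ k := by
    rw [T, ← tsum_mul_left]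
    exact tsum_congr fun k => by ring
  have key : ∀ k : ℕ,
      (((k:ℝ)+1) * (k:ℝ) * d β (k+1)) + ((k:ℝ) * ((k:ℝ)-1) * d β k)
        + ((β+1) * (((k:ℝ)+1) * d β (k+1))) + ((β+3/2) * ((k:ℝ) * d β k))
        + ((β*(β+1)/4) * d β k) = 0 := by
    intro k
    linear_combination d_rec hβ k
  calc x * (1 + x) * T2 β x + ((β + 1) + (β + 3/2) * x) * T1 β x
        + (β * (β + 1) / 4) * T β x
      = x * T2 β x + x^2 * T2 β x + ((β+1) * T1 β x + ((β+3/2) * x) * T1 β x)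
        + (β*(β+1)/4) * T β x := by ring
    _ = ∑' k : ℕ, ((((k:ℝ)+1) * (k:ℝ) * d β (k+1)) * x ^ k
          + ((k:ℝ) * ((k:ℝ)-1) * d β k) * x ^ k
          + (((β+1) * (((k:ℝ)+1) * d β (k+1))) * x ^ k
            + ((β+3/2) * ((k:ℝ) * d β k)) * x ^ k)
          + ((β*(β+1)/4) * d β k) * x ^ k) := by
        rw [h1, h2, h3, h4, h5,
          ← Summable.tsum_add sP1 sP2, ← Summable.tsum_add sP3 sP4,
          ← Summable.tsum_add (sP1.add sP2) (sP3.add sP4),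
          ← Summable.tsum_add ((sP1.add sP2).add (sP3.add sP4)) sP5]
    _ = ∑' k : ℕ, (0:ℝ) := tsum_congr fun k => by linear_combination (x:ℝ)^k * key k
    _ = 0 := tsum_zero


noncomputable def Qf (β : ℝ) (x : ℝ) : ℝ :=
  (β * T β x + 2*(1+x)*T1 β x)^2 - 4*(1+x)*(T1 β x)^2

noncomputable def Qd (β : ℝ) (x : ℝ) : ℝ :=
  2*(β * T β x + 2*(1+x)*T1 β x)*(β * T1 β x + (2 * T1 β x + 2*(1+x)*T2 β x))
    - 4*(T1 β x)^2 - 8*(1+x)*(T1 β x)*(T2 β x)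

lemma hasDerivAt_Q {β : ℝ} (hβ : 0 < β) {x : ℝ} (hx : |x| < 1) :
    HasDerivAt (Qf β) (Qd β x) x := by
  have hT := hasDerivAt_T hβ hx
  have hT1 := hasDerivAt_T1 hβ hx
  have hlin : HasDerivAt (fun y : ℝ => 2*(1+y)) 2 x := by
    simpa using (((hasDerivAt_id x).const_add (1:ℝ)).const_mul (2:ℝ))
  have hlin4 : HasDerivAt (fun y : ℝ => 4*(1+y)) 4 x := by
    simpa using (((hasDerivAt_id x).const_add (1:ℝ)).const_mul (4:ℝ))
  have hmul := hlin.mul hT1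
  have hA := (hT.const_mul β).add hmul
  have hA2 := hA.pow 2
  have hB := hlin4.mul (hT1.pow 2)
  have h := hA2.sub hB
  have h2 : HasDerivAt (fun y => (β * T β y + 2*(1+y)*T1 β y)^2 - 4*(1+y)*(T1 β y)^2)
      (Qd β x) x := by
    refine h.congr_deriv (Eq.symm ?_)
    rw [Qd]
    simp only [Pi.add_apply, Pi.mul_apply, Pi.pow_apply]
    ring
  exact h2

lemma Q_ode {β : ℝ} (hβ : 0 < β) {x : ℝ} (hx : |x| < 1) :
    x * Qd β x + (β+1) * Qf β x = 0 := by
  have h := ode hβ hx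
  rw [Qf, Qd]
  linear_combination (4*(β * T β x + 2*x*T1 β x)) * h

lemma Qf_zero {β : ℝ} (hβ : 0 < β) {x : ℝ} (hx : |x| < 1) : Qf β x = 0 := by
  rcases lt_trichotomy x 0 with hneg | rfl | hpos
  · -- negative side
    have hx1 : -1 < x := by cases abs_lt.1 hx; assumption
    set W : ℝ → ℝ := fun y => (-y) ^ (β+1) * Qf β y with hWdef
    have hW : ∀ y ∈ Set.Ioo (-1:ℝ) 0, HasDerivAt W 0 y := by
      intro y hy
      have hy0 : (0:ℝ) < -y := by linarith [hy.2]
      have hyabs : |y| < 1 := abs_lt.2 ⟨hy.1, by linarith [hy.2]⟩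
      have hrp : HasDerivAt (fun z : ℝ => (-z) ^ (β+1)) ((β+1) * (-y) ^ (β+1-1) * (-1)) y :=
        (Real.hasDerivAt_rpow_const (p := β+1) (Or.inl hy0.ne')).comp y (hasDerivAt_neg y)
      have hq := hasDerivAt_Q hβ hyabs
      have h := hrp.mul hq
      have e1 : (β+1-1 : ℝ) = β := by ring
      have e2 : (-y) ^ (β+1) = (-y) ^ β * (-y) := by
        rw [Real.rpow_add hy0, Real.rpow_one]
      have hqo := Q_ode hβ hyabs
      refine h.congr_deriv (Eq.symm ?_)
      rw [e1, e2]
      linear_combination ((-y) ^ β) * hqo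
    have hWb : ∀ c ∈ Set.Ioo x (0:ℝ), W c = W x := by
      intro c hc
      have hsub : Set.Icc x c ⊆ Set.Ioo (-1:ℝ) 0 := fun z hz =>
        ⟨by linarith [hz.1], by linarith [hz.2, hc.2]⟩
      have hcont : ContinuousOn W (Set.Icc x c) := fun z hz =>
        ((hW z (hsub hz)).continuousAt).continuousWithinAt
      have hder : ∀ z ∈ Set.Ico x c, HasDerivWithinAt W 0 (Set.Ici z) z := fun z hz =>
        (hW z (hsub ⟨hz.1, hz.2.le⟩)).hasDerivWithinAt
      exact constant_of_has_deriv_right_zero hcont hder c ⟨hc.1.le, le_refl c⟩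
    have hten : Filter.Tendsto W (nhdsWithin 0 (Set.Iio 0)) (nhds 0) := by
      have hA : ContinuousAt (fun y : ℝ => (-y) ^ (β+1)) 0 := by
        have h1 : ContinuousAt (fun y : ℝ => -y) 0 := continuous_neg.continuousAt
        have h2 : ContinuousAt (fun z : ℝ => z ^ (β+1)) (-(0:ℝ)) := by
          rw [neg_zero]
          exact Real.continuousAt_rpow_const 0 (β+1) (Or.inr (by positivity))
        exact h2.comp h1
      have hQc : ContinuousAt (Qf β) 0 := (hasDerivAt_Q hβ (by norm_num)).continuousAt
      have hc : ContinuousAt W 0 := hA.mul hQc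
      have hW0 : W 0 = 0 := by
        rw [hWdef]
        simp [Real.zero_rpow (by positivity : (β:ℝ)+1 ≠ 0)]
      have := hc.tendsto
      rw [hW0] at this
      exact this.mono_left nhdsWithin_le_nhds
    have hmem : Set.Ioo x (0:ℝ) ∈ nhdsWithin (0:ℝ) (Set.Iio 0) :=
      Ioo_mem_nhdsLT_of_mem ⟨hneg, le_refl (0:ℝ)⟩
    have hconst : Filter.Tendsto W (nhdsWithin 0 (Set.Iio 0)) (nhds (W x)) := by
      refine Filter.Tendsto.congr' ?_ tendsto_const_nhds
      filter_upwards [hmem] with c hc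
      exact (hWb c hc).symm
    have hWx : W x = 0 := tendsto_nhds_unique hconst hten
    have hpow : (0:ℝ) < (-x) ^ (β+1) := Real.rpow_pos_of_pos (by linarith) _
    have := hWx
    rw [hWdef] at this
    rcases mul_eq_zero.1 this with h | h
    · exact absurd h hpow.ne'
    · exact h
  · -- x = 0
    rw [Qf, T_zero, T1_zero hβ]
    ring
  · -- positive side
    have hx1 : x < 1 := by cases abs_lt.1 hx; assumption
    set W : ℝ → ℝ := fun y => y ^ (β+1) * Qf β y with hWdef
    have hW : ∀ y ∈ Set.Ioo (0:ℝ) 1, HasDerivAt W 0 y := by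
      intro y hy
      have hy0 : (0:ℝ) < y := hy.1
      have hyabs : |y| < 1 := abs_lt.2 ⟨by linarith, hy.2⟩
      have hrp : HasDerivAt (fun z : ℝ => z ^ (β+1)) ((β+1) * y ^ (β+1-1)) y :=
        Real.hasDerivAt_rpow_const (p := β+1) (Or.inl hy0.ne')
      have hq := hasDerivAt_Q hβ hyabs
      have h := hrp.mul hq
      have e1 : (β+1-1 : ℝ) = β := by ring
      have e2 : y ^ (β+1) = y ^ β * y := by
        rw [Real.rpow_add hy0, Real.rpow_one]
      have hqo := Q_ode hβ hyabs
      refine h.congr_deriv (Eq.symm ?_)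
      rw [e1, e2]
      linear_combination (-(y ^ β)) * hqo
    have hWb : ∀ c ∈ Set.Ioo (0:ℝ) x, W x = W c := by
      intro c hc
      have hsub : Set.Icc c x ⊆ Set.Ioo (0:ℝ) 1 := fun z hz =>
        ⟨by linarith [hz.1, hc.1], by linarith [hz.2]⟩
      have hcont : ContinuousOn W (Set.Icc c x) := fun z hz =>
        ((hW z (hsub hz)).continuousAt).continuousWithinAt
      have hder : ∀ z ∈ Set.Ico c x, HasDerivWithinAt W 0 (Set.Ici z) z := fun z hz =>
        (hW z (hsub ⟨hz.1, hz.2.le⟩)).hasDerivWithinAt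
      exact constant_of_has_deriv_right_zero hcont hder x ⟨hc.2.le, le_refl x⟩
    have hten : Filter.Tendsto W (nhdsWithin 0 (Set.Ioi 0)) (nhds 0) := by
      have hA : ContinuousAt (fun y : ℝ => y ^ (β+1)) 0 :=
        Real.continuousAt_rpow_const 0 (β+1) (Or.inr (by positivity))
      have hQc : ContinuousAt (Qf β) 0 := (hasDerivAt_Q hβ (by norm_num)).continuousAt
      have hc : ContinuousAt W 0 := hA.mul hQc
      have hW0 : W 0 = 0 := by
        rw [hWdef]
        simp [Real.zero_rpow (by positivity : (β:ℝ)+1 ≠ 0)]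
      have := hc.tendsto
      rw [hW0] at this
      exact this.mono_left nhdsWithin_le_nhds
    have hmem : Set.Ioo (0:ℝ) x ∈ nhdsWithin (0:ℝ) (Set.Ioi 0) :=
      Ioo_mem_nhdsGT_of_mem ⟨le_refl (0:ℝ), hpos⟩
    have hconst : Filter.Tendsto W (nhdsWithin 0 (Set.Ioi 0)) (nhds (W x)) := by
      refine Filter.Tendsto.congr' ?_ tendsto_const_nhds
      filter_upwards [hmem] with c hc
      exact hWb c hc
    have hWx : W x = 0 := tendsto_nhds_unique hconst hten
    have hpow : (0:ℝ) < x ^ (β+1) := Real.rpow_pos_of_pos hpos _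
    rw [hWdef] at hWx
    rcases mul_eq_zero.1 hWx with h | h
    · exact absurd h hpow.ne'
    · exact h


noncomputable def F (β : ℝ) (x : ℝ) : ℝ := 2 ^ β * (1 + Real.sqrt (1+x)) ^ (-β)

noncomputable def F1 (β : ℝ) (x : ℝ) : ℝ :=
  2 ^ β * ((-β) * (1 + Real.sqrt (1+x)) ^ (-β-1) * (1 / (2 * Real.sqrt (1+x))))

lemma hasDerivAt_sqrt1 {x : ℝ} (hx : -1 < x) :
    HasDerivAt (fun y : ℝ => Real.sqrt (1+y)) (1 / (2 * Real.sqrt (1+x))) x := by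
  have h0 : (0:ℝ) < 1 + x := by linarith
  have h := (Real.hasDerivAt_sqrt h0.ne').comp x ((hasDerivAt_id x).const_add (1:ℝ))
  simpa [Function.comp_def] using h

lemma hasDerivAt_F {β : ℝ} (hβ : 0 < β) {x : ℝ} (hx : -1 < x) :
    HasDerivAt (F β) (F1 β x) x := by
  have h0 : (0:ℝ) < 1 + x := by linarith
  have hs : 0 < Real.sqrt (1+x) := Real.sqrt_pos.2 h0
  have h1s : 0 < 1 + Real.sqrt (1+x) := by linarith
  have hin := (hasDerivAt_sqrt1 hx).const_add (1:ℝ)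
  have hrp := (Real.hasDerivAt_rpow_const (p := -β) (Or.inl h1s.ne')).comp x hin
  have := hrp.const_mul ((2:ℝ) ^ β)
  exact this

lemma continuousAt_sqrt1 {x : ℝ} : ContinuousAt (fun y : ℝ => Real.sqrt (1+y)) x :=
  (Real.continuous_sqrt.comp (continuous_const.add continuous_id)).continuousAt

lemma continuousAt_F1 {β : ℝ} (hβ : 0 < β) {x : ℝ} (hx : -1 < x) :
    ContinuousAt (F1 β) x := by
  have h0 : (0:ℝ) < 1 + x := by linarith
  have hs : 0 < Real.sqrt (1+x) := Real.sqrt_pos.2 h0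
  have h1s : 0 < 1 + Real.sqrt (1+x) := by linarith
  have hc1 : ContinuousAt (fun y : ℝ => (1 + Real.sqrt (1+y)) ^ (-β-1)) x := by
    have houter : ContinuousAt (fun z : ℝ => z ^ (-β-1)) (1 + Real.sqrt (1+x)) :=
      Real.continuousAt_rpow_const _ _ (Or.inl h1s.ne')
    exact ContinuousAt.comp (g := fun z : ℝ => z ^ (-β-1))
      (f := fun y : ℝ => 1 + Real.sqrt (1+y)) houter
      (continuousAt_const.add continuousAt_sqrt1)
  have hc2 : ContinuousAt (fun y : ℝ => 1 / (2 * Real.sqrt (1+y))) x := by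
    refine ContinuousAt.div continuousAt_const (continuousAt_const.mul continuousAt_sqrt1) ?_
    positivity
  exact continuousAt_const.mul ((continuousAt_const.mul hc1).mul hc2)

lemma two_rpow_mul_inv (β : ℝ) : (2:ℝ) ^ β * (2:ℝ) ^ (-β-1) = 1/2 := by
  rw [← Real.rpow_add (by norm_num : (0:ℝ) < 2), show β + (-β-1) = (-1:ℝ) by ring,
    Real.rpow_neg_one]
  norm_num

lemma F_zero {β : ℝ} (hβ : 0 < β) : F β 0 = 1 := by
  rw [F, show (1:ℝ) + (0:ℝ) = 1 by norm_num, Real.sqrt_one,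
    show (1:ℝ) + 1 = 2 by norm_num, ← Real.rpow_add (by norm_num : (0:ℝ) < 2),
    show β + -β = (0:ℝ) by ring, Real.rpow_zero]

lemma F1_zero {β : ℝ} (hβ : 0 < β) : F1 β 0 = -(β/4) := by
  rw [F1, show (1:ℝ) + (0:ℝ) = 1 by norm_num, Real.sqrt_one,
    show (1:ℝ) + 1 = 2 by norm_num]
  linear_combination (-β/2) * two_rpow_mul_inv β

lemma KF1 {β : ℝ} (hβ : 0 < β) {x : ℝ} (hx : -1 < x) :
    β * F β x + 2 * Real.sqrt (1+x) * (1 + Real.sqrt (1+x)) * F1 β x = 0 := by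
  have h0 : (0:ℝ) < 1 + x := by linarith
  have hs : 0 < Real.sqrt (1+x) := Real.sqrt_pos.2 h0
  have h1s : 0 < 1 + Real.sqrt (1+x) := by linarith
  have hu : (1 + Real.sqrt (1+x)) ^ (-β)
      = (1 + Real.sqrt (1+x)) ^ (-β-1) * (1 + Real.sqrt (1+x)) := by
    have h := Real.rpow_add_one h1s.ne' (-β-1)
    rw [show (-β-1+1 : ℝ) = -β by ring] at h
    exact h
  rw [F, F1, hu]
  field_simp
  ring

lemma KF2 {β : ℝ} (hβ : 0 < β) {x : ℝ} (hx : -1 < x) :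
    0 < β * F β x + 2 * Real.sqrt (1+x) * (Real.sqrt (1+x) - 1) * F1 β x := by
  have h0 : (0:ℝ) < 1 + x := by linarith
  have hs : 0 < Real.sqrt (1+x) := Real.sqrt_pos.2 h0
  have h1s : 0 < 1 + Real.sqrt (1+x) := by linarith
  have hu : (1 + Real.sqrt (1+x)) ^ (-β)
      = (1 + Real.sqrt (1+x)) ^ (-β-1) * (1 + Real.sqrt (1+x)) := by
    have h := Real.rpow_add_one h1s.ne' (-β-1)
    rw [show (-β-1+1 : ℝ) = -β by ring] at h
    exact h
  have hkey : β * F β x + 2 * Real.sqrt (1+x) * (Real.sqrt (1+x) - 1) * F1 β x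
      = 2 * β * 2 ^ β * (1 + Real.sqrt (1+x)) ^ (-β-1) := by
    rw [F, F1, hu]
    field_simp
    ring
  rw [hkey]
  have h1 : (0:ℝ) < (2:ℝ) ^ β := Real.rpow_pos_of_pos (by norm_num) β
  have h2 : (0:ℝ) < (1 + Real.sqrt (1+x)) ^ (-β-1) := Real.rpow_pos_of_pos h1s _
  positivity

lemma eq_on_ball_of_deriv_zero {f : ℝ → ℝ} {x₀ δ : ℝ}
    (h : ∀ y ∈ Metric.ball x₀ δ, HasDerivAt f 0 y) :
    ∀ y ∈ Metric.ball x₀ δ, f y = f x₀ := by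
  intro y hy
  have hyd : |y - x₀| < δ := by rw [← Real.dist_eq]; exact Metric.mem_ball.1 hy
  rcases le_total x₀ y with hle | hle
  · have habs : y - x₀ < δ := lt_of_le_of_lt (le_abs_self _) hyd
    have hδ : 0 < δ := lt_of_le_of_lt (abs_nonneg _) hyd
    have hsub : Set.Icc x₀ y ⊆ Metric.ball x₀ δ := by
      intro z hz
      rw [Metric.mem_ball, Real.dist_eq, abs_sub_lt_iff]
      exact ⟨by linarith [hz.2], by linarith [hz.1]⟩
    have hcont : ContinuousOn f (Set.Icc x₀ y) := fun z hz =>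
      ((h z (hsub hz)).continuousAt).continuousWithinAt
    have hder : ∀ z ∈ Set.Ico x₀ y, HasDerivWithinAt f 0 (Set.Ici z) z := fun z hz =>
      (h z (hsub ⟨hz.1, hz.2.le⟩)).hasDerivWithinAt
    exact constant_of_has_deriv_right_zero hcont hder y ⟨hle, le_refl y⟩
  · have habs : x₀ - y < δ := by
      have := le_abs_self (x₀ - y)
      rw [abs_sub_comm] at hyd
      linarith
    have hδ : 0 < δ := lt_of_le_of_lt (abs_nonneg _) hyd
    have hsub : Set.Icc y x₀ ⊆ Metric.ball x₀ δ := by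
      intro z hz
      rw [Metric.mem_ball, Real.dist_eq, abs_sub_lt_iff]
      exact ⟨by linarith [hz.2], by linarith [hz.1]⟩
    have hcont : ContinuousOn f (Set.Icc y x₀) := fun z hz =>
      ((h z (hsub hz)).continuousAt).continuousWithinAt
    have hder : ∀ z ∈ Set.Ico y x₀, HasDerivWithinAt f 0 (Set.Ici z) z := fun z hz =>
      (h z (hsub ⟨hz.1, hz.2.le⟩)).hasDerivWithinAt
    exact (constant_of_has_deriv_right_zero hcont hder x₀ ⟨hle, le_refl x₀⟩).symm


lemma T_eq_F {β : ℝ} (hβ : 0 < β) : ∀ x ∈ Set.Ioo (-1:ℝ) 1, T β x = F β x := by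
  set E := {x : ℝ | x ∈ Set.Ioo (-1:ℝ) 1 ∧ T β x = F β x ∧ T1 β x = F1 β x} with hE
  set V := {x : ℝ | x ∈ Set.Ioo (-1:ℝ) 1 ∧ (T β x ≠ F β x ∨ T1 β x ≠ F1 β x)} with hV
  have hEopen : IsOpen E := by
    rw [Metric.isOpen_iff]
    intro x₀ hx₀
    obtain ⟨hI₀, hTF₀, hT1F₀⟩ := hx₀
    have habs₀ : |x₀| < 1 := abs_lt.2 ⟨hI₀.1, hI₀.2⟩
    set Rf : ℝ → ℝ := fun y =>
      β * T β y + 2 * Real.sqrt (1+y) * (Real.sqrt (1+y) - 1) * T1 β y with hRf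
    have hR0 : 0 < Rf x₀ := by
      rw [hRf]; dsimp only; rw [hTF₀, hT1F₀]; exact KF2 hβ hI₀.1
    have hRcont : ContinuousAt Rf x₀ := by
      refine (continuousAt_const.mul (continuousAt_T hβ habs₀)).add ?_
      exact ((continuousAt_const.mul continuousAt_sqrt1).mul
        (continuousAt_sqrt1.sub continuousAt_const)).mul (continuousAt_T1 hβ habs₀)
    have hev : ∀ᶠ y in nhds x₀, y ∈ Set.Ioo (-1:ℝ) 1 ∧ 0 < Rf y := by
      have h1 : ∀ᶠ y in nhds x₀, y ∈ Set.Ioo (-1:ℝ) 1 :=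
        (isOpen_Ioo).eventually_mem hI₀
      have h2 : ∀ᶠ y in nhds x₀, 0 < Rf y := hRcont.eventually_mem (Ioi_mem_nhds hR0)
      exact h1.and h2
    obtain ⟨δ, hδpos, hball⟩ := Metric.eventually_nhds_iff_ball.1 hev
    refine ⟨δ, hδpos, ?_⟩
    have hP0 : ∀ y ∈ Metric.ball x₀ δ,
        β * T β y + 2 * Real.sqrt (1+y) * (1 + Real.sqrt (1+y)) * T1 β y = 0 := by
      intro y hy
      obtain ⟨hyI, hyR⟩ := hball y hy
      have hyabs : |y| < 1 := abs_lt.2 ⟨hyI.1, hyI.2⟩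
      have h1y : (0:ℝ) ≤ 1 + y := by linarith [hyI.1]
      have hs2 : Real.sqrt (1+y) * Real.sqrt (1+y) = 1 + y := Real.mul_self_sqrt h1y
      have hQ := Qf_zero hβ hyabs
      have hPR : (β * T β y + 2*Real.sqrt (1+y)*(1+Real.sqrt (1+y))*T1 β y) * Rf y
          = Qf β y := by
        rw [hRf, Qf]; dsimp only
        linear_combination (4*β*(T β y)*(T1 β y)
          + 4*(T1 β y)^2*(Real.sqrt (1+y)*Real.sqrt (1+y) + y)) * hs2
      rw [hQ] at hPR
      exact (mul_eq_zero.1 hPR).resolve_right (ne_of_gt hyR)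
    set G : ℝ → ℝ := fun y => (1 + Real.sqrt (1+y)) ^ β * T β y with hG
    have hGd : ∀ y ∈ Metric.ball x₀ δ, HasDerivAt G 0 y := by
      intro y hy
      obtain ⟨hyI, -⟩ := hball y hy
      have hyabs : |y| < 1 := abs_lt.2 ⟨hyI.1, hyI.2⟩
      have h0 : (0:ℝ) < 1 + y := by linarith [hyI.1]
      have hs : 0 < Real.sqrt (1+y) := Real.sqrt_pos.2 h0
      have h1s : 0 < 1 + Real.sqrt (1+y) := by linarith
      have hin := (hasDerivAt_sqrt1 hyI.1).const_add (1:ℝ)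
      have hrp := (Real.hasDerivAt_rpow_const (p := β) (Or.inl h1s.ne')).comp y hin
      have h := hrp.mul (hasDerivAt_T hβ hyabs)
      simp only [Function.comp] at h
      have hu : (1 + Real.sqrt (1+y)) ^ β
          = (1 + Real.sqrt (1+y)) ^ (β-1) * (1 + Real.sqrt (1+y)) := by
        have h' := Real.rpow_add_one h1s.ne' (β-1)
        rw [show (β-1+1 : ℝ) = β by ring] at h'
        exact h'
      have hval : β * (1 + Real.sqrt (1+y)) ^ (β-1) * (1 / (2 * Real.sqrt (1+y))) * T β y
            + ((1 + Real.sqrt (1+y)) ^ (β-1) * (1 + Real.sqrt (1+y))) * T1 β y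
          = ((1 + Real.sqrt (1+y)) ^ (β-1) * (1 / (2 * Real.sqrt (1+y))))
            * (β * T β y + 2 * Real.sqrt (1+y) * (1 + Real.sqrt (1+y)) * T1 β y) := by
        field_simp
      refine h.congr_deriv (Eq.symm ?_)
      rw [hu, hval, hP0 y hy, mul_zero]
    have hTeq : ∀ y ∈ Metric.ball x₀ δ, T β y = F β y := by
      intro y hy
      obtain ⟨hyI, -⟩ := hball y hy
      have h0y : (0:ℝ) < 1 + y := by linarith [hyI.1]
      have h1sy : 0 < 1 + Real.sqrt (1+y) := by positivity
      have h0x₀ : (0:ℝ) < 1 + x₀ := by linarith [hI₀.1]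
      have h1sx₀ : 0 < 1 + Real.sqrt (1+x₀) := by positivity
      have hGy := eq_on_ball_of_deriv_zero hGd y hy
      have hGx₀ : G x₀ = 2 ^ β := by
        rw [hG]; dsimp only
        rw [hTF₀, F]
        have hinv : (1 + Real.sqrt (1+x₀)) ^ β * (1 + Real.sqrt (1+x₀)) ^ (-β) = 1 := by
          rw [← Real.rpow_add h1sx₀, show β + -β = (0:ℝ) by ring, Real.rpow_zero]
        linear_combination (2:ℝ)^β * hinv
      have hGyval : (1 + Real.sqrt (1+y)) ^ β * T β y = 2 ^ β := by
        have h1 := hGy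
        rw [hGx₀, hG] at h1
        dsimp only at h1
        exact h1
      have hinvy : (1 + Real.sqrt (1+y)) ^ (-β) * (1 + Real.sqrt (1+y)) ^ β = 1 := by
        rw [← Real.rpow_add h1sy, show -β + β = (0:ℝ) by ring, Real.rpow_zero]
      rw [F]
      calc T β y = ((1 + Real.sqrt (1+y)) ^ (-β) * (1 + Real.sqrt (1+y)) ^ β) * T β y := by
            rw [hinvy, one_mul]
        _ = (1 + Real.sqrt (1+y)) ^ (-β) * ((1 + Real.sqrt (1+y)) ^ β * T β y) := by ring
        _ = (1 + Real.sqrt (1+y)) ^ (-β) * 2 ^ β := by rw [hGyval]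
        _ = 2 ^ β * (1 + Real.sqrt (1+y)) ^ (-β) := by ring
    have hT1eq : ∀ y ∈ Metric.ball x₀ δ, T1 β y = F1 β y := by
      intro y hy
      obtain ⟨hyI, -⟩ := hball y hy
      have hyabs : |y| < 1 := abs_lt.2 ⟨hyI.1, hyI.2⟩
      have hmem : Metric.ball x₀ δ ∈ nhds y := Metric.isOpen_ball.mem_nhds hy
      have hfeq : T β =ᶠ[nhds y] F β :=
        Filter.eventuallyEq_of_mem hmem (fun z hz => hTeq z hz)
      have hdF : HasDerivAt (F β) (T1 β y) y :=
        (hasDerivAt_T hβ hyabs).congr_of_eventuallyEq hfeq.symm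
      exact hdF.unique (hasDerivAt_F hβ hyI.1)
    exact fun y hy => ⟨(hball y hy).1, hTeq y hy, hT1eq y hy⟩
  have hVopen : IsOpen V := by
    rw [isOpen_iff_mem_nhds]
    intro x₀ hx₀
    obtain ⟨hI₀, hne⟩ := hx₀
    have habs₀ : |x₀| < 1 := abs_lt.2 ⟨hI₀.1, hI₀.2⟩
    have h1 : ∀ᶠ y in nhds x₀, y ∈ Set.Ioo (-1:ℝ) 1 := (isOpen_Ioo).eventually_mem hI₀
    rcases hne with h | h
    · have hc : ContinuousAt (fun y => T β y) x₀ := continuousAt_T hβ habs₀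
      have hcF : ContinuousAt (fun y => F β y) x₀ := (hasDerivAt_F hβ hI₀.1).continuousAt
      have hne0 : T β x₀ - F β x₀ ≠ 0 := sub_ne_zero.2 h
      have hev := (hc.sub hcF).eventually_ne hne0
      have : ∀ᶠ y in nhds x₀, y ∈ V := by
        filter_upwards [h1, hev] with y hy1 hy2
        exact ⟨hy1, Or.inl (sub_ne_zero.1 hy2)⟩
      exact this
    · have hc : ContinuousAt (fun y => T1 β y) x₀ := continuousAt_T1 hβ habs₀
      have hcF : ContinuousAt (fun y => F1 β y) x₀ := continuousAt_F1 hβ hI₀.1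
      have hne0 : T1 β x₀ - F1 β x₀ ≠ 0 := sub_ne_zero.2 h
      have hev := (hc.sub hcF).eventually_ne hne0
      have : ∀ᶠ y in nhds x₀, y ∈ V := by
        filter_upwards [h1, hev] with y hy1 hy2
        exact ⟨hy1, Or.inr (sub_ne_zero.1 hy2)⟩
      exact this
  have hdisj : Disjoint E V := by
    rw [Set.disjoint_left]
    rintro a ⟨-, hTF, hT1F⟩ ⟨-, hc | hc⟩
    · exact hc hTF
    · exact hc hT1F
  have hcover : Set.Ioo (-1:ℝ) 1 ⊆ E ∪ V := by
    intro a ha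
    by_cases h1 : T β a = F β a
    · by_cases h2 : T1 β a = F1 β a
      · exact Or.inl ⟨ha, h1, h2⟩
      · exact Or.inr ⟨ha, Or.inr h2⟩
    · exact Or.inr ⟨ha, Or.inl h1⟩
  rcases (isPreconnected_Ioo).subset_or_subset hEopen hVopen hdisj hcover with h | h
  · exact fun x hx => (h hx).2.1
  · exfalso
    have h0 : (0:ℝ) ∈ Set.Ioo (-1:ℝ) 1 := by norm_num
    rcases (h h0).2 with hc | hc
    · exact hc (by rw [T_zero, F_zero hβ])
    · exact hc (by rw [T1_zero hβ, F1_zero hβ])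

end Stmt6

theorem stmt_6 (β : ℝ) (hβ : 0 < β) (x : ℝ) (hx : |x| < 1) :
    (if x = 0 then (2 : ℝ) ^ (-β) else ((Real.sqrt (1 + x) - 1) / x) ^ β) =
      (2 : ℝ) ^ (-β) *
        ∑' k : ℕ, (ascPochhammer ℝ k).eval (β / 2) * (ascPochhammer ℝ k).eval ((β + 1) / 2) /
          ((ascPochhammer ℝ k).eval (β + 1) * (k.factorial : ℝ)) * (-x) ^ k := by
  have hseries : (∑' k : ℕ, (ascPochhammer ℝ k).eval (β / 2)
      * (ascPochhammer ℝ k).eval ((β + 1) / 2) /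
        ((ascPochhammer ℝ k).eval (β + 1) * (k.factorial : ℝ)) * (-x) ^ k)
      = Stmt6.T β x := by
    rw [Stmt6.T]
    refine tsum_congr fun k => ?_
    rw [Stmt6.d, Stmt6.c, neg_pow]
    ring
  rw [hseries]
  by_cases hx0 : x = 0
  · subst hx0
    rw [if_pos rfl, Stmt6.T_zero, mul_one]
  · rw [if_neg hx0]
    have hI : x ∈ Set.Ioo (-1:ℝ) 1 := ⟨(abs_lt.1 hx).1, (abs_lt.1 hx).2⟩
    rw [Stmt6.T_eq_F hβ x hI, Stmt6.F]
    have h0 : (0:ℝ) < 1 + x := by linarith [hI.1]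
    have hs : 0 < Real.sqrt (1+x) := Real.sqrt_pos.2 h0
    have h1s : 0 < 1 + Real.sqrt (1+x) := by linarith
    have h2 : (2:ℝ)^(-β) * ((2:ℝ)^β * (1+Real.sqrt (1+x))^(-β))
        = (1+Real.sqrt (1+x))^(-β) := by
      rw [← mul_assoc, ← Real.rpow_add (by norm_num : (0:ℝ) < 2),
        show -β + β = (0:ℝ) by ring, Real.rpow_zero, one_mul]
    rw [h2]
    have hbase : (Real.sqrt (1+x) - 1) / x = 1 / (1 + Real.sqrt (1+x)) := by
      rw [div_eq_div_iff hx0 h1s.ne']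
      have hsq : Real.sqrt (1+x) * Real.sqrt (1+x) = 1 + x := Real.mul_self_sqrt h0.le
      linear_combination hsq
    rw [hbase, one_div, Real.inv_rpow h1s.le, ← Real.rpow_neg h1s.le]
end

section
/- ∫₀^1 (arcsin(x)/x)³ dx = (3/2)·π·ln 2 − π³/16. -/
open Real MeasureTheory Set Filter Topology intervalIntegral

-- Step A: integrability of log on (0, c]
lemma aux_intble_log_Ioc {c : ℝ} (hc : 0 < c) :
    IntervalIntegrable Real.log volume 0 c := by
  have h1 : IntervalIntegrable Real.log volume 0 1 := by
    rw [intervalIntegrable_iff_integrableOn_Ioc_of_le zero_le_one]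
    have hg : IntegrableOn (fun x : ℝ => 2 * x ^ (-(1/2) : ℝ)) (Ioc 0 1) volume := by
      have := (intervalIntegrable_rpow' (by norm_num : (-1:ℝ) < -(1/2))
        (a := 0) (b := 1)).const_mul 2
      rwa [intervalIntegrable_iff_integrableOn_Ioc_of_le zero_le_one] at this
    refine hg.mono' (Real.measurable_log.aestronglyMeasurable.restrict) ?_
    filter_upwards [ae_restrict_mem measurableSet_Ioc] with x hx
    have hx0 : 0 < x := hx.1
    have hx1 : x ≤ 1 := hx.2
    have hlog : Real.log x ≤ 0 := Real.log_nonpos hx0.le hx1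
    rw [Real.norm_eq_abs, abs_of_nonpos hlog]
    have hs : 0 < x ^ ((1:ℝ)/2) := Real.rpow_pos_of_pos hx0 _
    have key : Real.log (x ^ (-(1/2):ℝ)) ≤ x ^ (-(1/2):ℝ) - 1 :=
      Real.log_le_sub_one_of_pos (Real.rpow_pos_of_pos hx0 _)
    have hlogr : Real.log (x ^ (-(1/2):ℝ)) = -(1/2) * Real.log x :=
      Real.log_rpow hx0 _
    have h2 : -Real.log x ≤ 2 * (x ^ (-(1/2):ℝ) - 1) := by nlinarith [key, hlogr]
    linarith
  rcases le_or_gt c 1 with h | h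
  · exact h1.mono_set (by rw [uIcc_of_le hc.le, uIcc_of_le zero_le_one]; exact Icc_subset_Icc le_rfl h)
  · refine h1.trans (intervalIntegrable_log ?_)
    rw [uIcc_of_le h.le, mem_Icc]
    rintro ⟨h0, -⟩; linarith

lemma aux_intble_logsin : IntervalIntegrable (fun t => Real.log (Real.sin t)) volume 0 (π/2) := by
  rw [intervalIntegrable_iff_integrableOn_Ioc_of_le (by positivity : (0:ℝ) ≤ π/2)]
  have hg : IntegrableOn (fun t : ℝ => -Real.log t + Real.log (π/2)) (Ioc 0 (π/2)) volume := by
    have := ((aux_intble_log_Ioc (by positivity : (0:ℝ) < π/2)).neg).add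
      (_root_.intervalIntegrable_const (c := Real.log (π/2)))
    rwa [intervalIntegrable_iff_integrableOn_Ioc_of_le (by positivity : (0:ℝ) ≤ π/2)] at this
  refine hg.mono' ((Real.measurable_log.comp Real.measurable_sin).aestronglyMeasurable.restrict) ?_
  filter_upwards [ae_restrict_mem measurableSet_Ioc] with t ht
  have ht0 : 0 < t := ht.1
  have ht2 : t ≤ π/2 := ht.2
  have hsin_pos : 0 < Real.sin t := Real.sin_pos_of_pos_of_lt_pi ht0 (by linarith [Real.pi_pos])
  have hsin_le : Real.sin t ≤ 1 := Real.sin_le_one t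
  have hlb : 2/π * t ≤ Real.sin t := Real.mul_le_sin ht0.le ht2
  have h2pi : (0:ℝ) < 2/π := by positivity
  have hlog1 : Real.log (2/π * t) ≤ Real.log (Real.sin t) :=
    Real.log_le_log (by positivity) hlb
  have hlog2 : Real.log (2/π * t) = Real.log (2/π) + Real.log t :=
    Real.log_mul (ne_of_gt h2pi) (ne_of_gt ht0)
  have hinv : Real.log (2/π) = - Real.log (π/2) := by
    rw [show (2:ℝ)/π = (π/2)⁻¹ by field_simp, Real.log_inv]
  have hup : Real.log (Real.sin t) ≤ 0 := Real.log_nonpos hsin_pos.le hsin_le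
  rw [Real.norm_eq_abs, abs_of_nonpos hup]
  have := hlog1
  rw [hlog2, hinv] at this
  linarith

lemma aux_intble_logsin' {a b : ℝ} (ha : 0 ≤ a) (hb : b ≤ π) (hab : a ≤ b) :
    IntervalIntegrable (fun t => Real.log (Real.sin t)) volume a b := by
  have h1 : IntervalIntegrable (fun t => Real.log (Real.sin t)) volume 0 π := by
    have h2 : IntervalIntegrable (fun t => Real.log (Real.sin t)) volume (π/2) π := by
      have := aux_intble_logsin.comp_sub_left π
      simp only [Real.sin_pi_sub, sub_zero] at this
      rw [show π - π/2 = π/2 by ring] at this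
      exact this.symm
    exact aux_intble_logsin.trans h2
  exact h1.mono_set (by rw [uIcc_of_le hab, uIcc_of_le Real.pi_pos.le]; exact Icc_subset_Icc ha hb)

lemma aux_logsin_value : ∫ x in (0:ℝ)..(π/2), Real.log (Real.sin x) = -(π/2) * Real.log 2 := by
  set J := ∫ x in (0:ℝ)..(π/2), Real.log (Real.sin x) with hJ
  have hpi := Real.pi_pos
  have hIsin : IntervalIntegrable (fun t => Real.log (Real.sin t)) volume 0 (π/2) :=
    aux_intble_logsin
  have hIcos : IntervalIntegrable (fun t => Real.log (Real.cos t)) volume 0 (π/2) := by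
    have := aux_intble_logsin.comp_sub_left (π/2)
    simp only [Real.sin_pi_div_two_sub, sub_zero, sub_self] at this
    exact this.symm
  -- cos integral equals J
  have hcos : ∫ x in (0:ℝ)..(π/2), Real.log (Real.cos x) = J := by
    have := intervalIntegral.integral_comp_sub_left
      (a := 0) (b := π/2) (fun t => Real.log (Real.sin t)) (π/2)
    simp only [Real.sin_pi_div_two_sub, sub_zero, sub_self] at this
    rw [hJ, ← this]
  -- ∫ 0..π = 2J
  have hpi_int : ∫ x in (0:ℝ)..π, Real.log (Real.sin x) = 2 * J := by
    have hsplit := intervalIntegral.integral_add_adjacent_intervals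
      (a := 0) (b := π/2) (c := π)
      (aux_intble_logsin' le_rfl (by linarith) (by positivity))
      (aux_intble_logsin' (by positivity) le_rfl (by linarith))
    have hright : ∫ x in (π/2)..π, Real.log (Real.sin x) = J := by
      have := intervalIntegral.integral_comp_sub_left
        (a := 0) (b := π/2) (fun t => Real.log (Real.sin t)) π
      simp only [Real.sin_pi_sub, sub_zero, sub_self] at this
      rw [hJ, this, show π - π/2 = π/2 by ring]
    rw [hright] at hsplit
    rw [← hsplit, ← hJ]; ring
  -- double-angle
  have hdouble : ∫ x in (0:ℝ)..(π/2), Real.log (Real.sin (2*x)) = J := by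
    have := intervalIntegral.integral_comp_mul_left
      (a := 0) (b := π/2) (fun t => Real.log (Real.sin t)) (c := 2) two_ne_zero
    rw [this]
    simp only [mul_zero, smul_eq_mul]
    rw [show (2:ℝ) * (π/2) = π by ring, hpi_int]
    ring
  have hadd : J + J = ∫ x in (0:ℝ)..(π/2), (Real.log (Real.sin x) + Real.log (Real.cos x)) := by
    rw [intervalIntegral.integral_add hIsin hIcos, hcos]
  have hae : ∫ x in (0:ℝ)..(π/2), (Real.log (Real.sin x) + Real.log (Real.cos x))
      = ∫ x in (0:ℝ)..(π/2), (Real.log (Real.sin (2*x)) - Real.log 2) := by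
    apply intervalIntegral.integral_congr_ae
    have hnull : (volume : Measure ℝ) {π/2} = 0 := measure_singleton _
    rw [ae_iff]
    apply measure_mono_null _ hnull
    intro x hx
    simp only [mem_setOf_eq, Classical.not_imp, mem_singleton_iff] at hx ⊢
    rcases hx with ⟨hmem, hne⟩
    rw [uIoc_of_le (by positivity : (0:ℝ) ≤ π/2)] at hmem
    by_contra hxne
    apply hne
    have hx0 : 0 < x := hmem.1
    have hx2 : x < π/2 := lt_of_le_of_ne hmem.2 hxne
    have hs : 0 < Real.sin x := Real.sin_pos_of_pos_of_lt_pi hx0 (by linarith)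
    have hc : 0 < Real.cos x := Real.cos_pos_of_mem_Ioo ⟨by linarith, hx2⟩
    rw [Real.sin_two_mul, Real.log_mul (by positivity) (by positivity),
      Real.log_mul two_ne_zero (ne_of_gt hs)]
    ring
  have h2x : IntervalIntegrable (fun x => Real.log (Real.sin (2*x))) volume 0 (π/2) := by
    have := (aux_intble_logsin' le_rfl le_rfl hpi.le).comp_mul_left (c := 2)
    norm_num at this
    exact this
  rw [hae, intervalIntegral.integral_sub h2x (_root_.intervalIntegrable_const), hdouble,
    intervalIntegral.integral_const] at hadd
  simp only [smul_eq_mul, sub_zero] at hadd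
  linarith [hadd]

lemma aux_ftc_Ioo {f f' : ℝ → ℝ} {a b la lb : ℝ} (hab : a < b)
    (hderiv : ∀ x ∈ Ioo a b, HasDerivAt f (f' x) x)
    (hint : IntegrableOn f' (Icc a b) volume)
    (hla : Tendsto f (𝓝[>] a) (𝓝 la)) (hlb : Tendsto f (𝓝[<] b) (𝓝 lb)) :
    ∫ x in Ioo a b, f' x = lb - la := by
  set φ : ℝ → ℝ := fun u => ∫ t in a..u, f' t with hφ
  have huIcc : uIcc a b = Icc a b := uIcc_of_le hab.le
  have hφcont : ContinuousOn φ (Icc a b) := by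
    have := intervalIntegral.continuousOn_primitive_interval (a := a) (b := b) (f := f')
      (μ := volume) (by rwa [huIcc])
    rwa [huIcc] at this
  have hkey : ∀ u ∈ Ioo a b, ∀ v ∈ Ioo a b, u ≤ v → φ v - φ u = f v - f u := by
    intro u hu v hv huv
    have hsub : uIcc u v ⊆ Ioo a b := by
      rw [uIcc_of_le huv]
      exact fun x hx => ⟨lt_of_lt_of_le hu.1 hx.1, lt_of_le_of_lt hx.2 hv.2⟩
    have hIu : IntervalIntegrable f' volume a u := by
      rw [intervalIntegrable_iff_integrableOn_Ioc_of_le (le_of_lt hu.1)]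
      exact hint.mono_set (Ioc_subset_Icc_self.trans (Icc_subset_Icc le_rfl hu.2.le))
    have hIv : IntervalIntegrable f' volume a v := by
      rw [intervalIntegrable_iff_integrableOn_Ioc_of_le (le_of_lt hv.1)]
      exact hint.mono_set (Ioc_subset_Icc_self.trans (Icc_subset_Icc le_rfl hv.2.le))
    have hIuv : IntervalIntegrable f' volume u v := by
      rw [intervalIntegrable_iff_integrableOn_Ioc_of_le huv]
      exact hint.mono_set (Ioc_subset_Icc_self.trans (Icc_subset_Icc hu.1.le hv.2.le))
    have h1 : φ v - φ u = ∫ t in u..v, f' t :=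
      intervalIntegral.integral_interval_sub_left hIv hIu
    rw [h1]
    exact intervalIntegral.integral_eq_sub_of_hasDerivAt
      (fun x hx => hderiv x (hsub hx)) hIuv
  set m : ℝ := (a + b)/2 with hm
  have hmm : m ∈ Ioo a b := ⟨by simp only [hm]; linarith, by simp only [hm]; linarith⟩
  set c : ℝ := φ m - f m with hc
  have hconst : ∀ x ∈ Ioo a b, φ x - f x = c := by
    intro x hx
    rcases le_total x m with h | h
    · have := hkey x hx m hmm h
      simp only [hc]; linarith
    · have := hkey m hmm x hx h
      simp only [hc]; linarith
  -- limit at a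
  have hφa : Tendsto φ (𝓝[>] a) (𝓝 0) := by
    have h0 : φ a = 0 := intervalIntegral.integral_same
    have := (hφcont.continuousWithinAt (left_mem_Icc.2 hab.le))
    rw [ContinuousWithinAt, h0] at this
    have hmono : 𝓝[>] a ≤ 𝓝[Icc a b] a := by
      rw [← nhdsWithin_Ioo_eq_nhdsGT hab]
      exact nhdsWithin_mono a Ioo_subset_Icc_self
    exact this.mono_left hmono
  have hφb : Tendsto φ (𝓝[<] b) (𝓝 (φ b)) := by
    have := (hφcont.continuousWithinAt (right_mem_Icc.2 hab.le))
    rw [ContinuousWithinAt] at this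
    have hmono : 𝓝[<] b ≤ 𝓝[Icc a b] b := by
      rw [← nhdsWithin_Ioo_eq_nhdsLT hab]
      exact nhdsWithin_mono b Ioo_subset_Icc_self
    exact this.mono_left hmono
  have hmem_a : Ioo a b ∈ 𝓝[>] a := Ioo_mem_nhdsGT_of_mem ⟨le_rfl, hab⟩
  have hmem_b : Ioo a b ∈ 𝓝[<] b := Ioo_mem_nhdsLT_of_mem ⟨hab, le_rfl⟩
  have hca : Tendsto (fun x => φ x - f x) (𝓝[>] a) (𝓝 (0 - la)) := hφa.sub hla
  have hcb : Tendsto (fun x => φ x - f x) (𝓝[<] b) (𝓝 (φ b - lb)) := hφb.sub hlb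
  have hconst_a : Tendsto (fun x => φ x - f x) (𝓝[>] a) (𝓝 c) := by
    refine Tendsto.congr' ?_ tendsto_const_nhds
    filter_upwards [hmem_a] with x hx
    exact (hconst x hx).symm
  have hconst_b : Tendsto (fun x => φ x - f x) (𝓝[<] b) (𝓝 c) := by
    refine Tendsto.congr' ?_ tendsto_const_nhds
    filter_upwards [hmem_b] with x hx
    exact (hconst x hx).symm
  have e1 : 0 - la = c := tendsto_nhds_unique hca hconst_a
  have e2 : φ b - lb = c := tendsto_nhds_unique hcb hconst_b
  have : φ b = lb - la := by linarith
  rw [← MeasureTheory.integral_Ioc_eq_integral_Ioo, ← intervalIntegral.integral_of_le hab.le]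
  exact this

noncomputable def auxL (θ : ℝ) : ℝ := ∫ t in (0:ℝ)..θ, Real.log (Real.sin t)

lemma auxL_cont : ContinuousOn auxL (Icc 0 (π/2)) := by
  have h : IntegrableOn (fun t => Real.log (Real.sin t)) (uIcc 0 (π/2)) volume := by
    rw [uIcc_of_le (by positivity : (0:ℝ) ≤ π/2),
      integrableOn_Icc_iff_integrableOn_Ioc]
    have h0 := aux_intble_logsin
    rwa [intervalIntegrable_iff_integrableOn_Ioc_of_le (by positivity : (0:ℝ) ≤ π/2)] at h0
  have := intervalIntegral.continuousOn_primitive_interval (μ := volume) h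
  rwa [uIcc_of_le (by positivity : (0:ℝ) ≤ π/2)] at this

lemma auxL_deriv {θ : ℝ} (h1 : 0 < θ) (h2 : θ < π/2) :
    HasDerivAt auxL (Real.log (Real.sin θ)) θ := by
  have hpi := Real.pi_pos
  apply intervalIntegral.integral_hasDerivAt_right
    (aux_intble_logsin' le_rfl (by linarith) h1.le)
  · exact ⟨univ, univ_mem,
      (Real.measurable_log.comp Real.measurable_sin).aestronglyMeasurable.restrict⟩
  · have hs : Real.sin θ ≠ 0 :=
      ne_of_gt (Real.sin_pos_of_pos_of_lt_pi h1 (by linarith))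
    exact (Real.continuousAt_log hs).comp Real.continuous_sin.continuousAt

noncomputable def auxF (x : ℝ) : ℝ :=
  -(Real.arcsin x)^3/(2*x^2) - 3/2*((Real.arcsin x)^2*Real.sqrt (1-x^2)/x)
    + 3*(Real.arcsin x)*Real.log x - 3 * auxL (Real.arcsin x)

lemma auxF_deriv {x : ℝ} (hx : x ∈ Ioo (0:ℝ) 1) :
    HasDerivAt auxF ((Real.arcsin x / x)^3) x := by
  obtain ⟨hx0, hx1⟩ := hx
  have h1x2 : 0 < 1 - x^2 := by nlinarith
  set s : ℝ := Real.sqrt (1 - x^2) with hs_def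
  have hs : 0 < s := Real.sqrt_pos.2 h1x2
  have hs2 : s^2 = 1 - x^2 := Real.sq_sqrt h1x2.le
  have hA : HasDerivAt Real.arcsin (1/s) x :=
    Real.hasDerivAt_arcsin (by linarith) (by linarith)
  have hApos : 0 < Real.arcsin x := Real.arcsin_pos.2 hx0
  have hAlt : Real.arcsin x < π/2 := (Real.arcsin_lt_pi_div_two).2 hx1
  have hsinA : Real.sin (Real.arcsin x) = x := Real.sin_arcsin (by linarith) (by linarith)
  have hlogx := Real.hasDerivAt_log (ne_of_gt hx0)
  have hA3 : HasDerivAt (fun y => -(Real.arcsin y)^3) (-(3*(Real.arcsin x)^2*(1/s))) x := by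
    simpa [Pi.neg_def] using (hA.fun_pow 3).neg
  have hden : HasDerivAt (fun y : ℝ => 2*y^2) (2*(2*x)) x := by
    simpa using (hasDerivAt_pow 2 x).const_mul (2:ℝ)
  have hsq : HasDerivAt (fun y : ℝ => Real.sqrt (1 - y^2)) (-x/s) x := by
    have hin : HasDerivAt (fun y : ℝ => 1 - y^2) (-(2*x)) x := by
      simpa using ((hasDerivAt_pow 2 x).const_sub (1:ℝ))
    have h2 := (Real.hasDerivAt_sqrt (ne_of_gt h1x2)).comp x hin
    refine h2.congr_deriv ?_
    rw [← hs_def]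
    field_simp
  have hA2 : HasDerivAt (fun y => (Real.arcsin y)^2) (2*(Real.arcsin x)*(1/s)) x := by
    simpa using hA.fun_pow 2
  have hL := (auxL_deriv hApos hAlt).comp x hA
  have H := ((((hA3.div hden (by positivity)).sub
      ((((hA2.mul hsq).div (hasDerivAt_id x) (ne_of_gt hx0))).const_mul (3/2))).add
      ((hA.const_mul 3).mul hlogx)).sub (hL.const_mul 3))
  have H2 : HasDerivAt auxF
      ((-(3 * Real.arcsin x ^ 2 * (1 / s)) * (2 * x ^ 2) - -Real.arcsin x ^ 3 * (2 * (2 * x))) / (2 * x ^ 2) ^ 2 -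
          3 / 2 *
            (((2 * Real.arcsin x * (1 / s) * Real.sqrt (1 - x ^ 2) + Real.arcsin x ^ 2 * (-x / s)) * id x -
                Real.arcsin x ^ 2 * Real.sqrt (1 - x ^ 2) * 1) /
              id x ^ 2) +
        (3 * (1 / s) * Real.log x + 3 * Real.arcsin x * x⁻¹) -
      3 * (Real.log (Real.sin (Real.arcsin x)) * (1 / s))) x := by
    exact H
  convert H2 using 1
  rw [hsinA, ← hs_def]
  have hxne := ne_of_gt hx0
  have hsne := ne_of_gt hs
  simp only [id]
  field_simp
  ring_nf
  linear_combination (-(3:ℝ) * Real.arcsin x ^ 2 * x) * hs2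

lemma aux_slope : Tendsto (fun x => Real.arcsin x / x) (𝓝[>] (0:ℝ)) (𝓝 1) := by
  have hA : HasDerivAt Real.arcsin 1 (0:ℝ) := by
    have := Real.hasDerivAt_arcsin (x := 0) (by norm_num) (by norm_num)
    norm_num at this
    exact this
  have h := hasDerivAt_iff_tendsto_slope.mp hA
  have h2 : Tendsto (slope Real.arcsin 0) (𝓝[>] (0:ℝ)) (𝓝 1) :=
    h.mono_left (nhdsWithin_mono 0 (fun y hy => ne_of_gt hy))
  refine h2.congr' ?_
  filter_upwards [self_mem_nhdsWithin] with y hy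
  simp [slope_def_field, div_eq_mul_inv]

lemma aux_limit_zero : Tendsto auxF (𝓝[>] (0:ℝ)) (𝓝 0) := by
  have t1 := aux_slope
  have hxt : Tendsto (fun x : ℝ => x) (𝓝[>] (0:ℝ)) (𝓝 0) :=
    (continuous_id.tendsto 0).mono_left nhdsWithin_le_nhds
  have hA0 : Tendsto Real.arcsin (𝓝[>] (0:ℝ)) (𝓝 0) := by
    have := (Real.continuous_arcsin.tendsto 0).mono_left (nhdsWithin_le_nhds (s := Ioi (0:ℝ)))
    simpa using this
  have hs0 : Tendsto (fun x : ℝ => Real.sqrt (1 - x^2)) (𝓝[>] (0:ℝ)) (𝓝 1) := by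
    have hc : Continuous (fun x : ℝ => Real.sqrt (1 - x^2)) :=
      Real.continuous_sqrt.comp (continuous_const.sub (continuous_pow 2))
    have := (hc.tendsto 0).mono_left (nhdsWithin_le_nhds (s := Ioi (0:ℝ)))
    simpa using this
  have hxlog : Tendsto (fun x : ℝ => x * Real.log x) (𝓝[>] (0:ℝ)) (𝓝 0) := by
    have := tendsto_log_mul_rpow_nhdsGT_zero (r := 1) one_pos
    refine this.congr' ?_
    filter_upwards [self_mem_nhdsWithin] with y hy
    rw [Real.rpow_one, mul_comm]
  have hL0 : Tendsto (fun x : ℝ => auxL (Real.arcsin x)) (𝓝[>] (0:ℝ)) (𝓝 0) := by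
    have hmem : Tendsto Real.arcsin (𝓝[>] (0:ℝ)) (𝓝[Icc 0 (π/2)] 0) := by
      refine tendsto_nhdsWithin_of_tendsto_nhds_of_eventually_within _ hA0 ?_
      filter_upwards [self_mem_nhdsWithin] with y hy
      exact ⟨Real.arcsin_nonneg.2 (le_of_lt hy), Real.arcsin_le_pi_div_two y⟩
    have hc : ContinuousWithinAt auxL (Icc 0 (π/2)) 0 :=
      auxL_cont.continuousWithinAt (left_mem_Icc.2 (by positivity))
    have hL00 : auxL 0 = 0 := intervalIntegral.integral_same
    have := hc.tendsto.comp hmem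
    rwa [hL00] at this
  have big := ((((t1.pow 3).mul hxt).const_mul (-(1/2):ℝ)).sub
      ((t1.mul (hA0.mul hs0)).const_mul ((3/2):ℝ))).add
      ((t1.mul hxlog).const_mul (3:ℝ)) |>.sub (hL0.const_mul (3:ℝ))
  have hval : (-(1/2):ℝ) * (1^3 * 0) - 3/2 * (1 * (0 * 1)) + 3 * (1 * 0) - 3 * 0 = 0 := by norm_num
  rw [hval] at big
  refine big.congr' ?_
  filter_upwards [self_mem_nhdsWithin] with y hy
  have hy0 : (0:ℝ) < y := hy
  unfold auxF
  field_simp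

lemma aux_limit_one :
    Tendsto auxF (𝓝[<] (1:ℝ)) (𝓝 (-(π/2)^3/2 + 3 * ((π/2) * Real.log 2))) := by
  have hA1 : Tendsto Real.arcsin (𝓝[<] (1:ℝ)) (𝓝 (π/2)) := by
    have := (Real.continuous_arcsin.tendsto 1).mono_left (nhdsWithin_le_nhds (s := Iio (1:ℝ)))
    simpa [Real.arcsin_one] using this
  have hs1 : Tendsto (fun x : ℝ => Real.sqrt (1 - x^2)) (𝓝[<] (1:ℝ)) (𝓝 0) := by
    have hc : Continuous (fun x : ℝ => Real.sqrt (1 - x^2)) :=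
      Real.continuous_sqrt.comp (continuous_const.sub (continuous_pow 2))
    have := (hc.tendsto 1).mono_left (nhdsWithin_le_nhds (s := Iio (1:ℝ)))
    simpa using this
  have hlog1 : Tendsto (fun x : ℝ => Real.log x) (𝓝[<] (1:ℝ)) (𝓝 0) := by
    have := (Real.continuousAt_log (one_ne_zero)).tendsto.mono_left
      (nhdsWithin_le_nhds (s := Iio (1:ℝ)))
    simpa using this
  have hL1 : Tendsto (fun x : ℝ => auxL (Real.arcsin x)) (𝓝[<] (1:ℝ))
      (𝓝 (-(π/2) * Real.log 2)) := by
    have hmem : Tendsto Real.arcsin (𝓝[<] (1:ℝ)) (𝓝[Icc 0 (π/2)] (π/2)) := by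
      refine tendsto_nhdsWithin_of_tendsto_nhds_of_eventually_within _ hA1 ?_
      filter_upwards [Ioo_mem_nhdsLT_of_mem (⟨zero_lt_one, le_rfl⟩ : (1:ℝ) ∈ Ioc 0 1)]
        with y hy
      exact ⟨Real.arcsin_nonneg.2 hy.1.le, Real.arcsin_le_pi_div_two y⟩
    have hc : ContinuousWithinAt auxL (Icc 0 (π/2)) (π/2) :=
      auxL_cont.continuousWithinAt (right_mem_Icc.2 (by positivity))
    have hLval : auxL (π/2) = -(π/2) * Real.log 2 := aux_logsin_value
    have := hc.tendsto.comp hmem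
    rwa [hLval] at this
  have h2x2 : Tendsto (fun x : ℝ => 2*x^2) (𝓝[<] (1:ℝ)) (𝓝 2) := by
    have hc : Continuous (fun x : ℝ => 2*x^2) := continuous_const.mul (continuous_pow 2)
    have := (hc.tendsto 1).mono_left (nhdsWithin_le_nhds (s := Iio (1:ℝ)))
    simpa using this
  have hxt1 : Tendsto (fun x : ℝ => x) (𝓝[<] (1:ℝ)) (𝓝 1) :=
    (continuous_id.tendsto 1).mono_left nhdsWithin_le_nhds
  have big := ((((hA1.pow 3).neg.div h2x2 two_ne_zero).sub
      ((((hA1.pow 2).mul hs1).div hxt1 one_ne_zero).const_mul ((3/2):ℝ))).add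
      ((hA1.const_mul 3).mul hlog1)).sub (hL1.const_mul (3:ℝ))
  have heq : -(π/2)^3/2 - 3/2 * ((π/2)^2 * 0 / 1) + 3 * (π/2) * 0 - 3 * (-(π/2) * Real.log 2)
      = -(π/2)^3/2 + 3 * ((π/2) * Real.log 2) := by ring
  rw [heq] at big
  exact big

lemma aux_intble_main : IntegrableOn (fun x => (Real.arcsin x / x)^3) (Icc (0:ℝ) 1) volume := by
  have hmeas : AEStronglyMeasurable (fun x => (Real.arcsin x / x)^3)
      volume :=
    ((Real.measurable_arcsin.div measurable_id).pow_const 3).aestronglyMeasurable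
  refine Measure.integrableOn_of_bounded (s := Icc (0:ℝ) 1)
    (by simp [Real.volume_Icc]) hmeas (M := (π/2)^3) ?_
  filter_upwards [ae_restrict_mem measurableSet_Icc] with x hx
  rcases eq_or_lt_of_le hx.1 with h0 | h0
  · simp [← h0, Real.arcsin_zero]
    positivity
  · have h1 : x ≤ 1 := hx.2
    have hApos : 0 ≤ Real.arcsin x := Real.arcsin_nonneg.2 h0.le
    have hub : Real.arcsin x ≤ π/2 * x := by
      have hle := Real.mul_le_sin hApos (Real.arcsin_le_pi_div_two x)
      rw [Real.sin_arcsin (by linarith) h1] at hle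
      have hπ : 0 < π := Real.pi_pos
      rw [div_mul_eq_mul_div, div_le_iff₀ hπ] at hle
      linarith
    have hq : 0 ≤ Real.arcsin x / x := by positivity
    have hq2 : Real.arcsin x / x ≤ π/2 := by
      rw [div_le_iff₀ h0]
      linarith
    rw [Real.norm_eq_abs, abs_of_nonneg (by positivity)]
    exact pow_le_pow_left₀ hq hq2 3

theorem stmt_8 :
    ∫ x in Set.Ioo (0 : ℝ) 1, (Real.arcsin x / x) ^ 3 =
      3 / 2 * π * Real.log 2 - π ^ 3 / 16 := by
  have key := aux_ftc_Ioo (f := auxF) (f' := fun x => (Real.arcsin x / x)^3)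
    zero_lt_one (fun x hx => auxF_deriv hx) aux_intble_main aux_limit_zero aux_limit_one
  rw [key]
  ring
end

section
/- ∫₀^1 arctan(x)/x dx = (1/8)(ψ'(1/4) − π²), where ψ' is the trigamma function. -/
open Real MeasureTheory

open Filter Topology Set

noncomputable def Sg (n : ℕ) (x : ℝ) : ℝ := x / (n+1) - Real.log (1 + x / (n+1))
noncomputable def Pg (n : ℕ) (x : ℝ) : ℝ := 1 / ((n:ℝ)+1) - 1 / ((n:ℝ)+1+x)
noncomputable def Qg (n : ℕ) (x : ℝ) : ℝ := 1 / (((n:ℝ)+1+x))^2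

lemma u_summable : Summable (fun n : ℕ => 1/((n:ℝ)+1)^2) := by
  have := Real.summable_one_div_nat_pow.mpr (le_refl 2)
  exact_mod_cast (summable_nat_add_iff 1).mpr this

lemma Sg_nonneg {n : ℕ} {x : ℝ} (hx : 0 ≤ x) : 0 ≤ Sg n x := by
  have h1 : (0:ℝ) < (n:ℝ)+1 := by positivity
  have ht : 0 ≤ x / (n+1) := by positivity
  have := Real.log_le_sub_one_of_pos (show (0:ℝ) < 1 + x/(n+1) by linarith)
  simp only [Sg]; linarith

lemma Sg_le {n : ℕ} {x : ℝ} (hx : 0 ≤ x) : Sg n x ≤ x^2 / ((n:ℝ)+1)^2 := by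
  have h1 : (0:ℝ) < (n:ℝ)+1 := by positivity
  set t := x / ((n:ℝ)+1) with htdef
  have ht : 0 ≤ t := by positivity
  have h2 : (0:ℝ) < 1 + t := by linarith
  have hlog : 1 - (1+t)⁻¹ ≤ Real.log (1+t) := Real.one_sub_inv_le_log_of_pos h2
  have key : t - Real.log (1+t) ≤ t^2 := by
    have h3 : t - (1 - (1+t)⁻¹) = t^2/(1+t) := by field_simp; ring
    have h4 : t^2/(1+t) ≤ t^2 := div_le_self (sq_nonneg t) (by linarith)
    linarith
  have : t^2 ≤ x^2 / ((n:ℝ)+1)^2 := by rw [htdef, div_pow]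
  simpa only [Sg] using le_trans (by simpa using key) this

lemma Sg_hasDerivAt {n : ℕ} {x : ℝ} (hx : 0 < x) : HasDerivAt (Sg n) (Pg n x) x := by
  have h1 : (0:ℝ) < (n:ℝ)+1 := by positivity
  have h2 : (0:ℝ) < 1 + x/((n:ℝ)+1) := by positivity
  have d1 : HasDerivAt (fun y : ℝ => y / ((n:ℝ)+1)) (1/((n:ℝ)+1)) x := by
    simpa using (hasDerivAt_id x).div_const ((n:ℝ)+1)
  have d2 : HasDerivAt (fun y : ℝ => 1 + y / ((n:ℝ)+1)) (1/((n:ℝ)+1)) x :=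
    (d1.const_add 1)
  have d3 := d2.log h2.ne'
  have := d1.sub d3
  convert this using 1
  · rfl
  · rfl
  · rfl
  simp only [Pg]
  field_simp

lemma Pg_bound {n : ℕ} {x : ℝ} (hx : x ∈ Set.Ioo (0:ℝ) 1) : ‖Pg n x‖ ≤ 1/((n:ℝ)+1)^2 := by
  obtain ⟨hx0, hx1⟩ := hx
  have h1 : (0:ℝ) < (n:ℝ)+1 := by positivity
  have h2 : (0:ℝ) < (n:ℝ)+1+x := by positivity
  have heq : Pg n x = x / (((n:ℝ)+1) * ((n:ℝ)+1+x)) := by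
    simp only [Pg]; field_simp; ring
  rw [heq, Real.norm_eq_abs, abs_of_nonneg (by positivity)]
  rw [div_le_div_iff₀ (by positivity) (by positivity)]
  nlinarith [sq_nonneg ((n:ℝ)+1), mul_pos h1 h1]

lemma Pg_hasDerivAt {n : ℕ} {x : ℝ} (hx : 0 < x) : HasDerivAt (Pg n) (Qg n x) x := by
  have h2 : (0:ℝ) < (n:ℝ)+1+x := by positivity
  have d1 : HasDerivAt (fun y : ℝ => (n:ℝ)+1+y) 1 x := (hasDerivAt_id x).const_add _
  have d2 := (d1.inv h2.ne').const_sub (1/((n:ℝ)+1))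
  convert d2 using 1
  · rfl
  · rfl
  · ext y; simp [Pg, one_div]
  · simp [Qg]; field_simp

lemma Qg_bound {n : ℕ} {x : ℝ} (hx : x ∈ Set.Ioo (0:ℝ) 1) : ‖Qg n x‖ ≤ 1/((n:ℝ)+1)^2 := by
  obtain ⟨hx0, hx1⟩ := hx
  have h1 : (0:ℝ) < (n:ℝ)+1 := by positivity
  have h2 : (0:ℝ) < (n:ℝ)+1+x := by positivity
  rw [Qg, Real.norm_eq_abs, abs_of_nonneg (by positivity)]
  apply one_div_le_one_div_of_le (by positivity)
  nlinarith

lemma Sg_summable {x : ℝ} (hx : 0 ≤ x) : Summable (fun n => Sg n x) := by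
  refine Summable.of_nonneg_of_le (fun n => Sg_nonneg hx) (fun n => Sg_le hx) ?_
  simpa [div_eq_mul_inv, mul_comm, one_div] using u_summable.mul_left (x^2)

lemma Pg_summable {x : ℝ} (hx : x ∈ Set.Ioo (0:ℝ) 1) : Summable (fun n => Pg n x) :=
  Summable.of_norm_bounded u_summable (fun n => Pg_bound hx)

lemma Qg_summable {x : ℝ} (hx : x ∈ Set.Ioo (0:ℝ) 1) : Summable (fun n => Qg n x) :=
  Summable.of_norm_bounded u_summable (fun n => Qg_bound hx)

noncomputable def Sfun (x : ℝ) : ℝ := ∑' n, Sg n x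
noncomputable def Pfun (x : ℝ) : ℝ := ∑' n, Pg n x

lemma half_mem : (1/2 : ℝ) ∈ Set.Ioo (0:ℝ) 1 := by norm_num
lemma quarter_mem : (1/4 : ℝ) ∈ Set.Ioo (0:ℝ) 1 := by norm_num

lemma hasDerivAt_Sfun {x : ℝ} (hx : x ∈ Set.Ioo (0:ℝ) 1) : HasDerivAt Sfun (Pfun x) x :=
  hasDerivAt_tsum_of_isPreconnected u_summable isOpen_Ioo (convex_Ioo _ _).isPreconnected
    (fun n y hy => Sg_hasDerivAt hy.1) (fun n y hy => Pg_bound hy) half_mem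
    (Sg_summable half_mem.1.le) hx

lemma hasDerivAt_Pfun {x : ℝ} (hx : x ∈ Set.Ioo (0:ℝ) 1) :
    HasDerivAt Pfun (∑' n, Qg n x) x :=
  hasDerivAt_tsum_of_isPreconnected u_summable isOpen_Ioo (convex_Ioo _ _).isPreconnected
    (fun n y hy => Pg_hasDerivAt hy.1) (fun n y hy => Qg_bound hy) half_mem
    (Pg_summable half_mem) hx

lemma harmonic_cast (n : ℕ) : (harmonic n : ℝ) = ∑ i ∈ Finset.range n, 1/((i:ℝ)+1) := by
  rw [harmonic]
  push_cast
  simp [one_div]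

lemma logGammaSeq_eq {x : ℝ} (hx : 0 < x) {n : ℕ} (hn : 1 ≤ n) :
    Real.log (Real.GammaSeq x n) =
      -Real.log x - x * ((harmonic n : ℝ) - Real.log n) + ∑ i ∈ Finset.range n, Sg i x := by
  have hn0 : (0:ℝ) < n := by exact_mod_cast hn
  have hterm : ∀ i : ℕ, (0:ℝ) < x + i := fun i => by positivity
  have hprodpos : (0:ℝ) < ∏ j ∈ Finset.range (n+1), (x + j) :=
    Finset.prod_pos fun j _ => hterm j
  have hfact0 : (0:ℝ) < (n.factorial : ℝ) := by exact_mod_cast n.factorial_pos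
  rw [Real.GammaSeq, Real.log_div (by positivity) hprodpos.ne',
    Real.log_mul (by positivity) hfact0.ne', Real.log_rpow hn0]
  have hfact : Real.log (n.factorial : ℝ) = ∑ i ∈ Finset.range n, Real.log ((i:ℝ)+1) := by
    rw [← Finset.prod_range_add_one_eq_factorial]
    push_cast
    rw [Real.log_prod (fun i _ => by positivity)]
  have hprod : Real.log (∏ j ∈ Finset.range (n+1), (x + j)) =
      Real.log x + ∑ i ∈ Finset.range n, Real.log (x + ((i:ℝ)+1)) := by
    rw [Real.log_prod (fun j _ => (hterm j).ne'), Finset.sum_range_succ']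
    push_cast
    simp [add_comm]
  have hS : ∑ i ∈ Finset.range n, Sg i x =
      x * (harmonic n : ℝ) - (∑ i ∈ Finset.range n, Real.log (x + ((i:ℝ)+1))
        - ∑ i ∈ Finset.range n, Real.log ((i:ℝ)+1)) := by
    have hterm' : ∀ i ∈ Finset.range n, Sg i x =
        x * (1/((i:ℝ)+1)) - (Real.log (x + ((i:ℝ)+1)) - Real.log ((i:ℝ)+1)) := by
      intro i _
      have h1 : (0:ℝ) < (i:ℝ)+1 := by positivity
      simp only [Sg]
      rw [← Real.log_div (by positivity) h1.ne']
      congr 1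
      · field_simp
      · congr 1
        field_simp
        ring
    rw [Finset.sum_congr rfl hterm', Finset.sum_sub_distrib, ← Finset.mul_sum,
      Finset.sum_sub_distrib, harmonic_cast]
  rw [hfact, hprod, hS]
  ring

lemma logGamma_eq {x : ℝ} (hx : 0 < x) :
    Real.log (Real.Gamma x) = -Real.log x - Real.eulerMascheroniConstant * x + Sfun x := by
  have hG : 0 < Real.Gamma x := Real.Gamma_pos_of_pos hx
  have t1 : Tendsto (fun n : ℕ => Real.log (Real.GammaSeq x n)) atTop (𝓝 (Real.log (Real.Gamma x))) :=
    ((Real.continuousAt_log hG.ne').tendsto).comp (Real.GammaSeq_tendsto_Gamma x)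
  have t2 : Tendsto (fun n : ℕ => -Real.log x - x * ((harmonic n : ℝ) - Real.log n)
      + ∑ i ∈ Finset.range n, Sg i x) atTop
      (𝓝 (-Real.log x - x * Real.eulerMascheroniConstant + Sfun x)) := by
    refine Tendsto.add (Tendsto.sub tendsto_const_nhds ?_) ?_
    · exact Real.tendsto_harmonic_sub_log.const_mul x
    · exact (Sg_summable hx.le).hasSum.tendsto_sum_nat
  have t1' : Tendsto (fun n : ℕ => -Real.log x - x * ((harmonic n : ℝ) - Real.log n)
      + ∑ i ∈ Finset.range n, Sg i x) atTop (𝓝 (Real.log (Real.Gamma x))) := by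
    refine t1.congr' ?_
    filter_upwards [eventually_ge_atTop 1] with n hn
    exact logGammaSeq_eq hx hn
  have := tendsto_nhds_unique t1' t2
  rw [this]; ring

noncomputable def Ffun (x : ℝ) : ℝ := -Real.log x - Real.eulerMascheroniConstant * x + Sfun x
noncomputable def F1fun (x : ℝ) : ℝ := -x⁻¹ - Real.eulerMascheroniConstant + Pfun x

lemma hasDerivAt_Ffun {x : ℝ} (hx : x ∈ Set.Ioo (0:ℝ) 1) : HasDerivAt Ffun (F1fun x) x := by
  have h1 := (Real.hasDerivAt_log hx.1.ne').neg
  have h2 := (hasDerivAt_id x).const_mul Real.eulerMascheroniConstant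
  have := (h1.sub h2).add (hasDerivAt_Sfun hx)
  convert this using 1
  · rfl
  · rfl
  · rfl
  simp [F1fun]

lemma hasDerivAt_F1fun : HasDerivAt F1fun (16 + ∑' n, Qg n (1/4)) (1/4 : ℝ) := by
  have h1 := (hasDerivAt_inv (show (1/4:ℝ) ≠ 0 by norm_num)).neg
  have h2 := (h1.sub_const Real.eulerMascheroniConstant).add (hasDerivAt_Pfun quarter_mem)
  convert h2 using 1
  · rfl
  · rfl
  · rfl
  norm_num

lemma deriv2_logGamma :
    deriv (deriv fun y : ℝ => Real.log (Real.Gamma y)) (1/4) = 16 + ∑' n, Qg n (1/4) := by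
  have hderiv_eq : ∀ x ∈ Set.Ioo (0:ℝ) 1,
      deriv (fun y : ℝ => Real.log (Real.Gamma y)) x = F1fun x := by
    intro x hx
    have hev : (fun y : ℝ => Real.log (Real.Gamma y)) =ᶠ[𝓝 x] Ffun := by
      filter_upwards [isOpen_Ioi.mem_nhds hx.1] with y hy
      exact logGamma_eq hy
    rw [hev.deriv_eq, (hasDerivAt_Ffun hx).deriv]
  have hev2 : deriv (fun y : ℝ => Real.log (Real.Gamma y)) =ᶠ[𝓝 (1/4 : ℝ)] F1fun := by
    filter_upwards [isOpen_Ioo.mem_nhds quarter_mem] with y hy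
    exact hderiv_eq y hy
  rw [hev2.deriv_eq, hasDerivAt_F1fun.deriv]

noncomputable def Asum : ℝ := ∑' k : ℕ, 1/((4*(k:ℝ)+1))^2
noncomputable def Bsum : ℝ := ∑' k : ℕ, 1/((4*(k:ℝ)+3))^2

lemma summable_A : Summable (fun k : ℕ => 1/((4*(k:ℝ)+1))^2) := by
  refine Summable.of_nonneg_of_le (fun k => by positivity) (fun k => ?_) u_summable
  have h1 : (0:ℝ) < (k:ℝ)+1 := by positivity
  apply one_div_le_one_div_of_le (by positivity)
  nlinarith [sq_nonneg ((k:ℝ))]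

lemma summable_B : Summable (fun k : ℕ => 1/((4*(k:ℝ)+3))^2) := by
  refine Summable.of_nonneg_of_le (fun k => by positivity) (fun k => ?_) u_summable
  have h1 : (0:ℝ) < (k:ℝ)+1 := by positivity
  apply one_div_le_one_div_of_le (by positivity)
  nlinarith [sq_nonneg ((k:ℝ))]

lemma summable_odd : Summable (fun k : ℕ => 1/((2*(k:ℝ)+1))^2) := by
  refine Summable.of_nonneg_of_le (fun k => by positivity) (fun k => ?_) u_summable
  have h1 : (0:ℝ) < (k:ℝ)+1 := by positivity
  apply one_div_le_one_div_of_le (by positivity)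
  nlinarith [sq_nonneg ((k:ℝ))]

lemma Qsum_eq : (16 : ℝ) + ∑' n, Qg n (1/4) = 16 * Asum := by
  have h0 : ∀ n : ℕ, Qg n ((1:ℝ)/4) = 16 * (1/((4*((n:ℝ)+1)+1))^2) := by
    intro n
    have h1 : ((n:ℝ)+1+1/4) ≠ 0 := by positivity
    have h2 : (4*((n:ℝ)+1)+1) ≠ 0 := by positivity
    simp only [Qg]
    field_simp
    ring
  have hA : Asum = 1/((4*((0:ℕ):ℝ)+1))^2 + ∑' k : ℕ, 1/((4*(((k+1:ℕ)):ℝ)+1))^2 :=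
    summable_A.tsum_eq_zero_add
  rw [show (∑' n, Qg n ((1:ℝ)/4)) = ∑' n : ℕ, 16 * (1/((4*((n:ℝ)+1)+1))^2) from tsum_congr h0,
    tsum_mul_left, hA]
  push_cast
  ring

lemma even_neg_cast (k : ℕ) : ((-1:ℝ))^(2*k) = 1 := by
  rw [pow_mul]; norm_num

set_option maxHeartbeats 1000000 in
lemma odd_sq_sum : HasSum (fun k : ℕ => 1/((2*(k:ℝ)+1))^2) (π^2/8) := by
  have hz : HasSum (fun n : ℕ => 1/(n:ℝ)^2) (π^2/6) := hasSum_zeta_two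
  have heven : HasSum (fun k : ℕ => 1/(((2*k : ℕ):ℝ))^2) (π^2/24) := by
    have h := hz.mul_left (4⁻¹ : ℝ)
    have hfun : (fun k : ℕ => (4⁻¹ : ℝ) * (1/(k:ℝ)^2)) = fun k : ℕ => 1/(((2*k : ℕ):ℝ))^2 := by
      funext k
      push_cast
      rw [one_div, one_div, mul_pow, mul_inv]
      norm_num
    have hval : (4⁻¹:ℝ) * (π^2/6) = π^2/24 := by ring
    rwa [hfun, hval] at h
  have hfun2 : (fun k : ℕ => 1/((2*(k:ℝ)+1))^2) = fun k : ℕ => 1/(((2*k+1 : ℕ):ℝ))^2 := by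
    funext k; push_cast; ring_nf
  have hodd : HasSum (fun k : ℕ => 1/(((2*k+1:ℕ):ℝ))^2) (∑' k : ℕ, 1/((2*(k:ℝ)+1))^2) := by
    rw [← hfun2]; exact summable_odd.hasSum
  have htot := HasSum.even_add_odd (f := fun n : ℕ => 1/(n:ℝ)^2) heven hodd
  have huniq := hz.unique htot
  have heq : (∑' k : ℕ, 1/((2*(k:ℝ)+1))^2) = π^2/8 := by linarith
  exact heq ▸ summable_odd.hasSum

lemma A_hasSum_even : HasSum (fun k : ℕ => 1/((2*((2*k:ℕ):ℝ)+1))^2) Asum := by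
  have hfun : (fun k : ℕ => 1/((4*(k:ℝ)+1))^2) = fun k : ℕ => 1/((2*((2*k:ℕ):ℝ)+1))^2 := by
    funext k; push_cast; ring_nf
  rw [← hfun]; exact summable_A.hasSum

lemma B_hasSum_odd : HasSum (fun k : ℕ => 1/((2*((2*k+1:ℕ):ℝ)+1))^2) Bsum := by
  have hfun : (fun k : ℕ => 1/((4*(k:ℝ)+3))^2) = fun k : ℕ => 1/((2*((2*k+1:ℕ):ℝ)+1))^2 := by
    funext k; push_cast; ring_nf
  rw [← hfun]; exact summable_B.hasSum

set_option maxHeartbeats 1000000 in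
lemma AB_sum : Asum + Bsum = π^2/8 :=
  (odd_sq_sum.unique (HasSum.even_add_odd (f := fun k : ℕ => 1/((2*(k:ℝ)+1))^2)
    A_hasSum_even B_hasSum_odd)).symm

set_option maxHeartbeats 1000000 in
lemma G_split : HasSum (fun n : ℕ => (-1:ℝ)^n/((2*(n:ℝ)+1))^2) (Asum - Bsum) := by
  have he : HasSum (fun k : ℕ => (-1:ℝ)^(2*k)/((2*((2*k:ℕ):ℝ)+1))^2) Asum := by
    have hfun : (fun k : ℕ => 1/((2*((2*k:ℕ):ℝ)+1))^2)
        = fun k : ℕ => (-1:ℝ)^(2*k)/((2*((2*k:ℕ):ℝ)+1))^2 := by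
      funext k; rw [even_neg_cast]
    rw [← hfun]; exact A_hasSum_even
  have ho : HasSum (fun k : ℕ => (-1:ℝ)^(2*k+1)/((2*((2*k+1:ℕ):ℝ)+1))^2) (-Bsum) := by
    have hfun : (fun k : ℕ => -(1/((2*((2*k+1:ℕ):ℝ)+1))^2))
        = fun k : ℕ => (-1:ℝ)^(2*k+1)/((2*((2*k+1:ℕ):ℝ)+1))^2 := by
      funext k; rw [pow_succ ((-1:ℝ)) (2*k), even_neg_cast]; ring
    rw [← hfun]; exact B_hasSum_odd.neg
  have := HasSum.even_add_odd (f := fun n : ℕ => (-1:ℝ)^n/((2*(n:ℝ)+1))^2) he ho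
  simpa [sub_eq_add_neg] using this

lemma rhs_eq :
    1 / 8 * (deriv (deriv fun y : ℝ => Real.log (Real.Gamma y)) (1 / 4) - π ^ 2)
      = Asum - Bsum := by
  rw [deriv2_logGamma]
  have h1 := Qsum_eq
  have h2 := AB_sum
  have : π^2 = 8*(Asum + Bsum) := by rw [h2]; ring
  linarith

lemma int_pow (m : ℕ) : ∫ x in Set.Ioo (0:ℝ) 1, x^m = 1/(m+1) := by
  rw [MeasureTheory.Measure.restrict_congr_set MeasureTheory.Ioo_ae_eq_Ioc,
    ← intervalIntegral.integral_of_le zero_le_one, integral_pow]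
  simp

noncomputable def fn (n : ℕ) (x : ℝ) : ℝ := (-1:ℝ)^n * x^(2*n) / (2*(n:ℝ)+1)

lemma arctan_div_eq {x : ℝ} (hx : x ∈ Set.Ioo (0:ℝ) 1) :
    Real.arctan x / x = ∑' n : ℕ, fn n x := by
  have hx0 := hx.1
  have hnorm : ‖x‖ < 1 := by rw [Real.norm_eq_abs, abs_of_pos hx0]; exact hx.2
  have hs2 := (Real.hasSum_arctan hnorm).div_const x
  have hfun : (fun n : ℕ => ((-1:ℝ)^n * x^(2*n+1) / ((2*n+1:ℕ):ℝ)) / x) = fun n : ℕ => fn n x := by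
    funext n
    have h1 : ((2*n+1:ℕ):ℝ) = 2*(n:ℝ)+1 := by push_cast; ring
    have h2 : (0:ℝ) < 2*(n:ℝ)+1 := by positivity
    simp only [fn]
    rw [pow_succ, h1]
    field_simp
  rw [hfun] at hs2
  exact hs2.tsum_eq.symm

lemma fn_integrable (n : ℕ) : IntegrableOn (fn n) (Set.Ioo (0:ℝ) 1) := by
  have hc : Continuous (fn n) := by
    unfold fn
    fun_prop
  exact hc.integrableOn_Icc.mono_set Set.Ioo_subset_Icc_self

lemma fn_integral (n : ℕ) :
    ∫ x in Set.Ioo (0:ℝ) 1, fn n x = (-1:ℝ)^n / (2*(n:ℝ)+1)^2 := by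
  have h2 : (0:ℝ) < 2*(n:ℝ)+1 := by positivity
  have heq : fn n = fun x : ℝ => ((-1:ℝ)^n / (2*(n:ℝ)+1)) * x^(2*n) := by
    funext x; simp only [fn]; ring
  rw [heq, MeasureTheory.integral_const_mul, int_pow]
  have h3 : ((2*n:ℕ):ℝ) + 1 = 2*(n:ℝ)+1 := by push_cast; ring
  rw [h3]
  field_simp

lemma fn_norm_integral (n : ℕ) :
    ∫ x in Set.Ioo (0:ℝ) 1, ‖fn n x‖ = 1 / (2*(n:ℝ)+1)^2 := by
  have h2 : (0:ℝ) < 2*(n:ℝ)+1 := by positivity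
  have heq : ∀ x ∈ Set.Ioo (0:ℝ) 1, ‖fn n x‖ = (1 / (2*(n:ℝ)+1)) * x^(2*n) := by
    intro x hx
    have hx0 := hx.1
    simp only [fn, Real.norm_eq_abs, abs_div, abs_mul, abs_pow, abs_neg, abs_one, one_pow, one_mul,
      abs_of_pos h2, abs_of_pos hx0]
    ring
  rw [MeasureTheory.setIntegral_congr_fun measurableSet_Ioo heq,
    MeasureTheory.integral_const_mul, int_pow]
  have h3 : ((2*n:ℕ):ℝ) + 1 = 2*(n:ℝ)+1 := by push_cast; ring
  rw [h3]
  field_simp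

lemma fn_norm_summable : Summable (fun n : ℕ => ∫ x in Set.Ioo (0:ℝ) 1, ‖fn n x‖) := by
  rw [funext fn_norm_integral]
  refine Summable.of_nonneg_of_le (fun n => by positivity) (fun n => ?_) u_summable
  apply one_div_le_one_div_of_le (by positivity)
  nlinarith [sq_nonneg ((n:ℝ)), Nat.cast_nonneg (α := ℝ) n]

lemma integral_eq : ∫ x in Set.Ioo (0:ℝ) 1, Real.arctan x / x = Asum - Bsum := by
  rw [MeasureTheory.setIntegral_congr_fun measurableSet_Ioo
      (fun x hx => arctan_div_eq hx)]
  rw [← MeasureTheory.integral_tsum_of_summable_integral_norm fn_integrable fn_norm_summable,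
    ← G_split.tsum_eq]
  exact tsum_congr fun n => fn_integral n

/-- `∫₀¹ arctan x / x dx = (ψ'(1/4) − π²)/8`, where `ψ'` is the trigamma function,
i.e. the second derivative of `log ∘ Γ`. -/
theorem stmt_9 :
    ∫ x in Set.Ioo (0 : ℝ) 1, Real.arctan x / x =
      1 / 8 * (deriv (deriv fun y : ℝ => Real.log (Real.Gamma y)) (1 / 4) - π ^ 2) := by
  rw [integral_eq]
  exact rhs_eq.symm
end

section
/- For real a, b and x < 1, Σ_{k≥0} d/dε[(a+ε)_k (b+ε)_k]|_{ε=0} / ((a+b)_k k!) · x^k = ln(1/(1−x)) · Σ_{k≥0} (a)_k (b)_k / ((a+b)_k k!) · x^k, provided a, b, a+b avoid non-positive integers and both series converge. -/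
open Real Polynomial Finset

set_option maxHeartbeats 1000000

namespace Stmt10

noncomputable def P (k : ℕ) (t : ℝ) : ℝ := (ascPochhammer ℝ k).eval t

lemma P_ne_zero {t : ℝ} (ht : ∀ n : ℕ, t ≠ -(n : ℝ)) : ∀ k, P k t ≠ 0 := by
  intro k
  induction k with
  | zero => simp [P]
  | succ n ih =>
    rw [P, ascPochhammer_succ_eval]
    refine mul_ne_zero ih fun h => ht n (by linarith)

noncomputable def c (a b : ℝ) (k : ℕ) : ℝ := P k a * P k b / (P k (a + b) * k.factorial)

noncomputable def e (a b : ℝ) (k : ℕ) : ℝ := ∑ i ∈ range k, c a b i / ((k : ℝ) - i)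

noncomputable def dt (a b : ℝ) (k : ℕ) : ℝ :=
  deriv (fun ε : ℝ => P k (a + ε) * P k (b + ε)) 0

variable {a b : ℝ} (ha : ∀ n : ℕ, a ≠ -(n : ℝ)) (hb : ∀ n : ℕ, b ≠ -(n : ℝ))
  (hab : ∀ n : ℕ, a + b ≠ -(n : ℝ))

lemma add_nat_ne_zero {t : ℝ} (ht : ∀ n : ℕ, t ≠ -(n : ℝ)) (n : ℕ) : t + (n : ℝ) ≠ 0 :=
  fun h => ht n (by linarith)

include ha hb hab in
lemma c_succ (k : ℕ) :
    c a b (k + 1) = c a b k * ((a + k) * (b + k)) / ((a + b + k) * (k + 1)) := by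
  have h1 := P_ne_zero ha k
  have h2 := P_ne_zero hb k
  have h3 := P_ne_zero hab k
  have h4 : (k.factorial : ℝ) ≠ 0 := Nat.cast_ne_zero.mpr k.factorial_ne_zero
  have h5 : a + b + (k : ℝ) ≠ 0 := add_nat_ne_zero hab k
  have h6 : (k : ℝ) + 1 ≠ 0 := by positivity
  rw [c, c, P, P, P, ascPochhammer_succ_eval, ascPochhammer_succ_eval, ascPochhammer_succ_eval,
    Nat.factorial_succ, Nat.cast_mul, Nat.cast_add, Nat.cast_one]
  rw [show ((ascPochhammer ℝ k).eval a : ℝ) = P k a from rfl,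
    show ((ascPochhammer ℝ k).eval b : ℝ) = P k b from rfl,
    show ((ascPochhammer ℝ k).eval (a+b) : ℝ) = P k (a+b) from rfl]
  field_simp

lemma differentiable_aux (k : ℕ) (t : ℝ) :
    Differentiable ℝ (fun ε : ℝ => P k (t + ε)) :=
  ((ascPochhammer ℝ k).differentiable).comp (differentiable_id.const_add t)

lemma dt_zero : dt a b 0 = 0 := by
  have : (fun ε : ℝ => P 0 (a + ε) * P 0 (b + ε)) = fun _ : ℝ => (1 : ℝ) := by
    funext ε; simp [P]
  rw [dt, this, deriv_const]

lemma dt_succ (k : ℕ) :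
    dt a b (k + 1) = dt a b k * ((a + k) * (b + k)) + P k a * P k b * (a + b + 2 * k) := by
  have hd : DifferentiableAt ℝ (fun ε : ℝ => P k (a + ε) * P k (b + ε)) 0 :=
    (((differentiable_aux k a).mul (differentiable_aux k b)) 0)
  have h1 : HasDerivAt (fun ε : ℝ => P k (a + ε) * P k (b + ε)) (dt a b k) 0 := hd.hasDerivAt
  have ha' : HasDerivAt (fun ε : ℝ => a + ε + k) 1 0 := by
    simpa using ((hasDerivAt_id (0:ℝ)).const_add a).add_const (k : ℝ)
  have hb' : HasDerivAt (fun ε : ℝ => b + ε + k) 1 0 := by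
    simpa using ((hasDerivAt_id (0:ℝ)).const_add b).add_const (k : ℝ)
  have h2 : HasDerivAt (fun ε : ℝ => (a + ε + k) * (b + ε + k))
      (1 * (b + 0 + k) + (a + 0 + k) * 1) 0 := ha'.mul hb'
  have h3 : HasDerivAt (fun ε : ℝ => (P k (a + ε) * P k (b + ε)) * ((a + ε + k) * (b + ε + k))) _ 0 := h1.mul h2
  have h4 : (fun ε : ℝ => P (k+1) (a + ε) * P (k+1) (b + ε))
      = fun ε : ℝ => (P k (a + ε) * P k (b + ε)) * ((a + ε + k) * (b + ε + k)) := by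
    funext ε; simp only [P, ascPochhammer_succ_eval]; ring
  rw [dt, h4, h3.deriv]
  simp only [P, add_zero]
  ring


theorem e_succ
    (csucc : ∀ k : ℕ, c a b (k + 1) = c a b k * ((a + k) * (b + k)) / ((a + b + k) * (k + 1)))
    (habk : ∀ n : ℕ, a + b + (n : ℝ) ≠ 0) (k : ℕ) :
    (a + b + k) * (k + 1) * e a b (k + 1)
      = (a + k) * (b + k) * e a b k + (a + b + 2 * k) * c a b k := by
  set t : ℕ → ℝ := fun i => c a b i * ((i : ℝ) * (a + b + i - 1)) / ((k : ℝ) + 1 - i) with ht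
  have key : ∀ i ∈ range k,
      c a b i * ((a + b + k) * (k + 1) / ((k : ℝ) + 1 - i))
        = (t i - t (i + 1)) + c a b i * ((a + k) * (b + k) / ((k : ℝ) - i)) := by
    intro i hi
    have hik : i < k := mem_range.mp hi
    have hik' : (i : ℝ) < k := by exact_mod_cast hik
    have d1 : (k : ℝ) - i ≠ 0 := by linarith
    have d2 : (k : ℝ) + 1 - i ≠ 0 := by linarith
    have d3 : a + b + (i : ℝ) ≠ 0 := habk i
    have d4 : (i : ℝ) + 1 ≠ 0 := by positivity
    have h5 : t (i + 1) = c a b i * ((a + i) * (b + i)) / ((k : ℝ) - i) := by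
      rw [ht]
      simp only [csucc i]
      push_cast
      rw [show (k : ℝ) + 1 - ((i : ℝ) + 1) = (k : ℝ) - i by ring]
      field_simp
      ring
    rw [h5, ht]
    field_simp
    ring
  have tel : ∑ i ∈ range k, (t i - t (i + 1)) = t 0 - t k := Finset.sum_range_sub' t k
  have ht0 : t 0 = 0 := by simp [ht]
  have htk : t k = c a b k * ((k : ℝ) * (a + b + k - 1)) := by
    rw [ht]; simp only
    rw [show (k : ℝ) + 1 - k = 1 by ring, div_one]
  have h1 : (a + b + k) * (k + 1) * e a b (k + 1)
      = ∑ i ∈ range (k + 1), c a b i * ((a + b + k) * (k + 1) / ((k : ℝ) + 1 - i)) := by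
    rw [e, Finset.mul_sum]
    refine sum_congr rfl fun i _ => ?_
    push_cast
    ring
  have h2 : (a + k) * (b + k) * e a b k
      = ∑ i ∈ range k, c a b i * ((a + k) * (b + k) / ((k : ℝ) - i)) := by
    rw [e, Finset.mul_sum]
    refine sum_congr rfl fun i _ => ?_
    ring
  rw [h1, sum_range_succ, show (k : ℝ) + 1 - k = 1 by ring, div_one, sum_congr rfl key,
    Finset.sum_add_distrib, tel, ht0, htk, h2]
  ring

theorem dt_eq_e
    (hPab : ∀ k, P k (a + b) ≠ 0)
    (habk : ∀ n : ℕ, a + b + (n : ℝ) ≠ 0)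
    (dtz : dt a b 0 = 0)
    (dts : ∀ k, dt a b (k + 1) = dt a b k * ((a + k) * (b + k)) + P k a * P k b * (a + b + 2 * k))
    (esucc : ∀ k : ℕ, (a + b + k) * (k + 1) * e a b (k + 1)
      = (a + k) * (b + k) * e a b k + (a + b + 2 * k) * c a b k) :
    ∀ k, dt a b k / (P k (a + b) * k.factorial) = e a b k := by
  intro k
  induction k with
  | zero => simp [e, dtz]
  | succ k ih =>
    have hD : P k (a + b) * (k.factorial : ℝ) ≠ 0 :=
      mul_ne_zero (hPab k) (Nat.cast_ne_zero.mpr k.factorial_ne_zero)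
    have h5 : a + b + (k : ℝ) ≠ 0 := habk k
    have h6 : (k : ℝ) + 1 ≠ 0 := by positivity
    have h7 : e a b k * (P k (a + b) * (k.factorial : ℝ)) = dt a b k := by
      rw [← ih, div_mul_cancel₀ _ hD]
    have h8 : c a b k * (P k (a + b) * (k.factorial : ℝ)) = P k a * P k b := by
      rw [c, div_mul_cancel₀ _ hD]
    have hnum : dt a b k * ((a + k) * (b + k)) + P k a * P k b * (a + b + 2 * k)
        = ((a + b + k) * (k + 1) * e a b (k + 1)) * (P k (a + b) * (k.factorial : ℝ)) := by
      rw [esucc k]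
      linear_combination ((a + (k:ℝ)) * (b + (k:ℝ))) * h7.symm + (a + b + 2 * (k:ℝ)) * h8.symm
    have hDD : P (k + 1) (a + b) * ((k + 1).factorial : ℝ) ≠ 0 :=
      mul_ne_zero (hPab (k + 1)) (Nat.cast_ne_zero.mpr (k + 1).factorial_ne_zero)
    rw [div_eq_iff hDD, dts k, hnum,
      show P (k + 1) (a + b) = P k (a + b) * (a + b + k) from by rw [P, P, ascPochhammer_succ_eval],
      Nat.factorial_succ, Nat.cast_mul, Nat.cast_add, Nat.cast_one]
    ring

theorem abs_x_lt_one
    (hx : x < 1)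
    (hc0 : ∀ k, c a b k ≠ 0)
    (csucc : ∀ k : ℕ, c a b (k + 1) = c a b k * ((a + k) * (b + k)) / ((a + b + k) * (k + 1)))
    (habk : ∀ n : ℕ, a + b + (n : ℝ) ≠ 0)
    (h2 : Summable fun k : ℕ => c a b k * x ^ k) : |x| < 1 := by
  by_contra hcon
  push_neg at hcon
  -- hcon : 1 ≤ |x|
  obtain ⟨M, hM⟩ : ∃ M : ℝ, M = 2 * |a * b| + 1 := ⟨_, rfl⟩
  have hM1 : (1 : ℝ) ≤ M := by rw [hM]; linarith [abs_nonneg (a * b)]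
  obtain ⟨K, hK⟩ := exists_nat_ge (4 * (M + 1) * (|a| + |b| + |a + b| + 1) + 4)
  have hKbig : 4 * (M + 1) * (|a| + |b| + |a + b| + 1) + 4 ≤ (K : ℝ) := hK
  have haK : |a| + 4 ≤ (K : ℝ) := by nlinarith [abs_nonneg a, abs_nonneg b, abs_nonneg (a+b), abs_nonneg (a*b)]
  have hbK : |b| + 4 ≤ (K : ℝ) := by nlinarith [abs_nonneg a, abs_nonneg b, abs_nonneg (a+b), abs_nonneg (a*b)]
  have habK : 4 * |a + b| + 4 ≤ (K : ℝ) := by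
    nlinarith [abs_nonneg a, abs_nonneg b, abs_nonneg (a+b), abs_nonneg (a*b)]
  have hMK : 4 * M + 4 ≤ (K : ℝ) := by
    nlinarith [abs_nonneg a, abs_nonneg b, abs_nonneg (a+b), abs_nonneg (a*b)]
  -- basic facts for k ≥ K
  have hfacts : ∀ k : ℕ, (K : ℝ) ≤ k → 0 < a + k ∧ 0 < b + k ∧ (k : ℝ) / 2 ≤ a + b + k ∧ (2:ℝ) ≤ k := by
    intro k hk
    have h1 := neg_abs_le a
    have h2 := neg_abs_le b
    have h3 := neg_abs_le (a + b)
    refine ⟨by linarith, by linarith, by nlinarith, by linarith⟩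
  -- cleared ratio inequality
  have ratio : ∀ k : ℕ, (K : ℝ) ≤ k →
      ((k : ℝ) * (|c a b k| * ((k:ℝ)^2 - M))) * (a + b + k)
        ≤ (((k : ℝ) + 1) * |c a b (k+1)| * (k:ℝ)^2) * (a + b + k) := by
    intro k hk
    obtain ⟨hak, hbk, hsk, hk2⟩ := hfacts k hk
    have hs : (0:ℝ) < a + b + k := by linarith
    have hc1 : |c a b (k+1)| * ((a + b + k) * ((k:ℝ) + 1)) = |c a b k| * ((a + k) * (b + k)) := by
      have hd : (a + b + (k:ℝ)) * ((k:ℝ) + 1) ≠ 0 := by positivity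
      have : c a b (k+1) * ((a + b + k) * ((k:ℝ) + 1)) = c a b k * ((a + k) * (b + k)) := by
        rw [csucc k, div_mul_cancel₀ _ hd]
      have e1 : |(a + b + (k:ℝ)) * ((k:ℝ) + 1)| = (a + b + (k:ℝ)) * ((k:ℝ) + 1) :=
        abs_of_pos (mul_pos hs (by positivity))
      have e2 : |(a + (k:ℝ)) * (b + (k:ℝ))| = (a + (k:ℝ)) * (b + (k:ℝ)) :=
        abs_of_pos (mul_pos hak hbk)
      rw [← e1, ← e2, ← abs_mul, ← abs_mul, this]
    have hpoly : ((k:ℝ)^2 - M) * (a + b + k) ≤ (k : ℝ) * ((a + k) * (b + k)) := by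
      have habs : -|a * b| ≤ a * b := neg_abs_le _
      rw [hM]
      nlinarith [abs_nonneg (a * b), mul_le_mul_of_nonneg_left hsk (by linarith [abs_nonneg (a*b)] : (0:ℝ) ≤ 2 * |a * b| + 1), mul_le_mul_of_nonneg_left habs (by linarith : (0:ℝ) ≤ (k:ℝ))]
    nlinarith [mul_le_mul_of_nonneg_left hpoly (abs_nonneg (c a b k)), hc1,
      abs_nonneg (c a b k), abs_nonneg (c a b (k+1))]
  have ratio' : ∀ k : ℕ, (K : ℝ) ≤ k →
      (k : ℝ) * (|c a b k| * ((k:ℝ)^2 - M)) ≤ ((k : ℝ) + 1) * |c a b (k+1)| * (k:ℝ)^2 := by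
    intro k hk
    obtain ⟨_, _, hsk, hk2⟩ := hfacts k hk
    exact le_of_mul_le_mul_right (ratio k hk) (by linarith)
  -- main induction: cleared lower bound
  obtain ⟨gK, hgK⟩ : ∃ g : ℝ, g = (K : ℝ) * |c a b K| := ⟨_, rfl⟩
  have hgKpos : 0 < gK := by
    rw [hgK]
    have : (0:ℝ) < K := by nlinarith [abs_nonneg a, abs_nonneg b, abs_nonneg (a+b), abs_nonneg (a*b)]
    exact mul_pos this (abs_pos.mpr (hc0 K))
  have claim : ∀ k : ℕ, K ≤ k →
      gK * (((K:ℝ)-1) * ((k:ℝ)-1) - M * ((k:ℝ)-1) + M * ((K:ℝ)-1))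
        ≤ ((k : ℝ) * |c a b k|) * (((K:ℝ)-1) * ((k:ℝ)-1)) := by
    intro k hk
    induction k, hk using Nat.le_induction with
    | base =>
      have h1 : (1:ℝ) ≤ (K:ℝ) - 1 := by linarith
      nlinarith [abs_nonneg (c a b K)]
    | succ k hk ih =>
      have hkR : (K : ℝ) ≤ k := by exact_mod_cast hk
      obtain ⟨_, _, _, hk2⟩ := hfacts k hkR
      have hKM : 4 * M + 4 ≤ (K:ℝ) := hMK
      have hstep := ratio' k hkR
      push_cast
      -- multiply step by (K-1)(k-1) ≥ 0 and combine with ih, then polynomial inequality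
      have hKm1 : (0:ℝ) < (K:ℝ) - 1 := by linarith
      have hkm1 : (0:ℝ) < (k:ℝ) - 1 := by linarith
      have h5 : gK * (((K:ℝ)-1) * ((k:ℝ)-1) - M * ((k:ℝ)-1) + M * ((K:ℝ)-1)) * ((k:ℝ)^2 - M)
          ≤ ((k : ℝ) * |c a b k| * (((K:ℝ)-1) * ((k:ℝ)-1))) * ((k:ℝ)^2 - M) := by
        have hM2 : (0:ℝ) ≤ (k:ℝ)^2 - M := by nlinarith [mul_nonneg (by linarith : (0:ℝ) ≤ (k:ℝ)) (by linarith : (0:ℝ) ≤ (k:ℝ) - 2)]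
        exact mul_le_mul_of_nonneg_right ih hM2
      have h6 : ((k : ℝ) * |c a b k| * (((K:ℝ)-1) * ((k:ℝ)-1))) * ((k:ℝ)^2 - M)
          ≤ (((k : ℝ) + 1) * |c a b (k+1)| * (k:ℝ)^2) * (((K:ℝ)-1) * ((k:ℝ)-1)) := by
        have h6' := mul_le_mul_of_nonneg_right hstep (le_of_lt (mul_pos hKm1 hkm1))
        nlinarith [h6']
      -- key polynomial inequality Q k (k²-M) ≥ Q (k+1) k (k-1)
      have h7 : gK * (((K:ℝ)-1) * ((k:ℝ)+1-1) - M * ((k:ℝ)+1-1) + M * ((K:ℝ)-1)) * ((k:ℝ) * ((k:ℝ)-1))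
          ≤ gK * (((K:ℝ)-1) * ((k:ℝ)-1) - M * ((k:ℝ)-1) + M * ((K:ℝ)-1)) * ((k:ℝ)^2 - M) := by
        have hq : (((K:ℝ)-1) * ((k:ℝ)+1-1) - M * ((k:ℝ)+1-1) + M * ((K:ℝ)-1)) * ((k:ℝ) * ((k:ℝ)-1))
            ≤ (((K:ℝ)-1) * ((k:ℝ)-1) - M * ((k:ℝ)-1) + M * ((K:ℝ)-1)) * ((k:ℝ)^2 - M) := by
          have hx1 : (0:ℝ) ≤ ((k:ℝ)-1) * M - ((K:ℝ)-1) * (M-1) := by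
            nlinarith [mul_nonneg (by linarith : (0:ℝ) ≤ (k:ℝ) - (K:ℝ)) (by linarith : (0:ℝ) ≤ M)]
          nlinarith [mul_nonneg (by linarith : (0:ℝ) ≤ M) hx1]
        calc gK * (((K:ℝ)-1) * ((k:ℝ)+1-1) - M * ((k:ℝ)+1-1) + M * ((K:ℝ)-1)) * ((k:ℝ) * ((k:ℝ)-1))
            = gK * ((((K:ℝ)-1) * ((k:ℝ)+1-1) - M * ((k:ℝ)+1-1) + M * ((K:ℝ)-1)) * ((k:ℝ) * ((k:ℝ)-1))) := by ring
          _ ≤ gK * ((((K:ℝ)-1) * ((k:ℝ)-1) - M * ((k:ℝ)-1) + M * ((K:ℝ)-1)) * ((k:ℝ)^2 - M)) :=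
              mul_le_mul_of_nonneg_left hq (le_of_lt hgKpos)
          _ = gK * (((K:ℝ)-1) * ((k:ℝ)-1) - M * ((k:ℝ)-1) + M * ((K:ℝ)-1)) * ((k:ℝ)^2 - M) := by ring
      -- combine: want gK * Q(k+1) ≤ (k+1)|c(k+1)| (K-1) k
      have h8 : gK * (((K:ℝ)-1) * ((k:ℝ)+1-1) - M * ((k:ℝ)+1-1) + M * ((K:ℝ)-1)) * ((k:ℝ) * ((k:ℝ)-1))
          ≤ ((((k:ℝ)+1) * |c a b (k+1)|) * (((K:ℝ)-1) * ((k:ℝ)+1-1))) * ((k:ℝ) * ((k:ℝ)-1)) := by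
        calc gK * (((K:ℝ)-1) * ((k:ℝ)+1-1) - M * ((k:ℝ)+1-1) + M * ((K:ℝ)-1)) * ((k:ℝ) * ((k:ℝ)-1))
            ≤ gK * (((K:ℝ)-1) * ((k:ℝ)-1) - M * ((k:ℝ)-1) + M * ((K:ℝ)-1)) * ((k:ℝ)^2 - M) := h7
          _ ≤ ((k : ℝ) * |c a b k| * (((K:ℝ)-1) * ((k:ℝ)-1))) * ((k:ℝ)^2 - M) := h5
          _ ≤ (((k : ℝ) + 1) * |c a b (k+1)| * (k:ℝ)^2) * (((K:ℝ)-1) * ((k:ℝ)-1)) := h6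
          _ = ((((k:ℝ)+1) * |c a b (k+1)|) * (((K:ℝ)-1) * ((k:ℝ)+1-1))) * ((k:ℝ) * ((k:ℝ)-1)) := by
              ring
      have hpos : (0:ℝ) < (k:ℝ) * ((k:ℝ)-1) := by nlinarith
      exact le_of_mul_le_mul_right h8 hpos
  -- conclude lower bound |c k| ≥ gK/2 / k for k ≥ K
  have lower : ∀ k : ℕ, K ≤ k → gK / 2 ≤ (k : ℝ) * |c a b k| := by
    intro k hk
    have hkR : (K : ℝ) ≤ k := by exact_mod_cast hk
    have hKm1 : (0:ℝ) < (K:ℝ) - 1 := by linarith [hMK, hM1]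
    have hkm1 : (0:ℝ) < (k:ℝ) - 1 := by linarith [hMK, hM1]
    have hcl := claim k hk
    -- Q k ≥ (K-1)(k-1)/2
    have hq : ((K:ℝ)-1) * ((k:ℝ)-1) / 2 ≤ ((K:ℝ)-1) * ((k:ℝ)-1) - M * ((k:ℝ)-1) + M * ((K:ℝ)-1) := by
      nlinarith [hMK, hM1]
    have h9 : gK * (((K:ℝ)-1) * ((k:ℝ)-1) / 2) ≤ ((k : ℝ) * |c a b k|) * (((K:ℝ)-1) * ((k:ℝ)-1)) :=
      le_trans (mul_le_mul_of_nonneg_left hq (le_of_lt hgKpos)) hcl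
    have h10 : (gK / 2) * (((K:ℝ)-1) * ((k:ℝ)-1)) ≤ ((k : ℝ) * |c a b k|) * (((K:ℝ)-1) * ((k:ℝ)-1)) := by
      linarith [h9]
    exact le_of_mul_le_mul_right h10 (mul_pos hKm1 hkm1)
  -- now contradiction with summability
  have hsum2 : Summable fun n : ℕ => |c a b (n + K) * x ^ (n + K)| :=
    (summable_nat_add_iff K).2 h2.abs
  have hcomp : Summable fun n : ℕ => (gK / 2) * ((n : ℝ) + K)⁻¹ := by
    refine hsum2.of_nonneg_of_le (fun n => by positivity) fun n => ?_
    have hnK : K ≤ n + K := Nat.le_add_left K n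
    have hnKR : (0:ℝ) < (n : ℝ) + K := by
      have : (0:ℝ) < (K:ℝ) := by linarith [hMK, hM1]
      positivity
    have hl := lower (n + K) hnK
    rw [abs_mul, abs_pow]
    have hx1 : (1:ℝ) ≤ |x| ^ (n + K) := one_le_pow₀ hcon
    have hcast : ((n + K : ℕ) : ℝ) = (n : ℝ) + K := by push_cast; ring
    rw [hcast] at hl
    calc (gK / 2) * ((n : ℝ) + K)⁻¹ ≤ |c a b (n + K)| := by
          rw [← div_eq_mul_inv, div_le_iff₀ hnKR]
          linarith [hl]
      _ = |c a b (n + K)| * 1 := (mul_one _).symm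
      _ ≤ |c a b (n + K)| * |x| ^ (n + K) :=
          mul_le_mul_of_nonneg_left hx1 (abs_nonneg _)
  have hinv : Summable fun n : ℕ => ((n : ℝ) + K)⁻¹ :=
    (summable_mul_left_iff (by positivity : gK / 2 ≠ 0)).mp hcomp
  have : Summable fun n : ℕ => ((n : ℝ))⁻¹ := by
    have h11 : Summable fun n : ℕ => (((n + K : ℕ) : ℝ))⁻¹ := by
      convert hinv using 2 with n
      push_cast; ring
    exact (summable_nat_add_iff K).1 h11
  exact Real.not_summable_natCast_inv this

lemma inner_sum (n : ℕ) :
    ∑ i ∈ range (n + 1), (x ^ i / (i : ℝ)) * (c a b (n - i) * x ^ (n - i))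
      = e a b n * x ^ n := by
  have step1 : ∀ i ∈ range (n + 1),
      (x ^ i / (i : ℝ)) * (c a b (n - i) * x ^ (n - i)) = c a b (n - i) / (i : ℝ) * x ^ n := by
    intro i hi
    have hin : i ≤ n := Nat.lt_succ_iff.mp (mem_range.mp hi)
    have hxx : x ^ i * x ^ (n - i) = x ^ n := by rw [← pow_add, Nat.add_sub_cancel' hin]
    calc (x ^ i / (i : ℝ)) * (c a b (n - i) * x ^ (n - i))
        = c a b (n - i) / (i : ℝ) * (x ^ i * x ^ (n - i)) := by ring
      _ = _ := by rw [hxx]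
  rw [sum_congr rfl step1, ← sum_mul]
  congr 1
  have refl1 : ∑ i ∈ range (n + 1), c a b (n - i) / (i : ℝ)
      = ∑ j ∈ range (n + 1), c a b j / ((n - j : ℕ) : ℝ) := by
    rw [← Finset.sum_range_reflect (fun j => c a b j / ((n - j : ℕ) : ℝ)) (n + 1)]
    refine sum_congr rfl fun i hi => ?_
    have hin : i ≤ n := Nat.lt_succ_iff.mp (mem_range.mp hi)
    have h1 : n + 1 - 1 - i = n - i := by omega
    have h2 : n - (n - i) = i := by omega
    simp only [h1, h2]
  rw [refl1, sum_range_succ]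
  simp only [Nat.sub_self, Nat.cast_zero, div_zero, add_zero]
  rw [e]
  refine sum_congr rfl fun j hj => ?_
  have hjn : j ≤ n := le_of_lt (mem_range.mp hj)
  rw [Nat.cast_sub hjn]

theorem final_assembly
    (habs : |x| < 1)
    (dte : ∀ k, deriv (fun ε : ℝ => (ascPochhammer ℝ k).eval (a + ε) *
        (ascPochhammer ℝ k).eval (b + ε)) 0 /
        ((ascPochhammer ℝ k).eval (a + b) * (k.factorial : ℝ)) = e a b k)
    (h2 : Summable fun k : ℕ =>
      (ascPochhammer ℝ k).eval a * (ascPochhammer ℝ k).eval b /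
        ((ascPochhammer ℝ k).eval (a + b) * (k.factorial : ℝ)) * x ^ k) :
    (∑' k : ℕ,
      deriv (fun ε : ℝ => (ascPochhammer ℝ k).eval (a + ε) * (ascPochhammer ℝ k).eval (b + ε)) 0 /
        ((ascPochhammer ℝ k).eval (a + b) * (k.factorial : ℝ)) * x ^ k) =
    Real.log (1 / (1 - x)) *
      ∑' k : ℕ, (ascPochhammer ℝ k).eval a * (ascPochhammer ℝ k).eval b /
        ((ascPochhammer ℝ k).eval (a + b) * (k.factorial : ℝ)) * x ^ k := by
  have hg : Summable fun k : ℕ => c a b k * x ^ k := h2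
  have hg_abs : Summable fun k : ℕ => ‖c a b k * x ^ k‖ := by
    simp only [Real.norm_eq_abs]
    exact hg.abs
  have hf_bound : ∀ n : ℕ, ‖x ^ n / (n : ℝ)‖ ≤ |x| ^ n := by
    intro n
    rw [Real.norm_eq_abs, abs_div, abs_pow]
    match n with
    | 0 => simp
    | m + 1 =>
      have h1 : (1 : ℝ) ≤ |((m + 1 : ℕ) : ℝ)| := by
        rw [abs_of_nonneg (by positivity)]; exact_mod_cast Nat.one_le_iff_ne_zero.mpr (by omega)
      exact div_le_self (by positivity) h1
  have hf_abs : Summable fun n : ℕ => ‖x ^ n / (n : ℝ)‖ :=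
    Summable.of_nonneg_of_le (fun n => norm_nonneg _) hf_bound
      (summable_geometric_of_lt_one (abs_nonneg x) habs)
  have hlog : (∑' n : ℕ, x ^ n / (n : ℝ)) = Real.log (1 / (1 - x)) := by
    have h0 := Real.hasSum_pow_div_log_of_abs_lt_one habs
    have h1 : HasSum (fun n : ℕ => x ^ (n + 1) / ((n + 1 : ℕ) : ℝ)) (-Real.log (1 - x)) := by
      convert h0 using 2 with n
      push_cast; ring
    have h2' : HasSum (fun n : ℕ => x ^ n / (n : ℝ))
        (-Real.log (1 - x) + ∑ i ∈ range 1, x ^ i / (i : ℝ)) :=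
      (hasSum_nat_add_iff 1).1 h1
    simp only [range_one, sum_singleton, Nat.cast_zero, div_zero, add_zero] at h2'
    rw [h2'.tsum_eq, one_div, Real.log_inv]
  have key := tsum_mul_tsum_eq_tsum_sum_range_of_summable_norm hf_abs hg_abs
  calc (∑' k : ℕ,
        deriv (fun ε : ℝ => (ascPochhammer ℝ k).eval (a + ε) * (ascPochhammer ℝ k).eval (b + ε)) 0 /
          ((ascPochhammer ℝ k).eval (a + b) * (k.factorial : ℝ)) * x ^ k)
      = ∑' k : ℕ, e a b k * x ^ k := by
        refine tsum_congr fun k => ?_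
        rw [dte k]
    _ = ∑' n : ℕ, ∑ i ∈ range (n + 1), (x ^ i / (i : ℝ)) * (c a b (n - i) * x ^ (n - i)) := by
        refine tsum_congr fun n => ?_
        rw [inner_sum]
    _ = (∑' n : ℕ, x ^ n / (n : ℝ)) * ∑' k : ℕ, c a b k * x ^ k := key.symm
    _ = Real.log (1 / (1 - x)) *
          ∑' k : ℕ, (ascPochhammer ℝ k).eval a * (ascPochhammer ℝ k).eval b /
            ((ascPochhammer ℝ k).eval (a + b) * (k.factorial : ℝ)) * x ^ k := by
        rw [hlog]; rfl

end Stmt10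

open Stmt10 in
/-- `[ε] ₂F₁(a+ε, b+ε; a+b; x) = ln(1/(1−x)) · ₂F₁(a, b; a+b; x)` for `x < 1`. -/
theorem stmt_10 (a b x : ℝ) (hx : x < 1)
    (ha : ∀ n : ℕ, a ≠ -(n : ℝ)) (hb : ∀ n : ℕ, b ≠ -(n : ℝ))
    (hab : ∀ n : ℕ, a + b ≠ -(n : ℝ))
    (h1 : Summable fun k : ℕ =>
      deriv (fun ε : ℝ => (ascPochhammer ℝ k).eval (a + ε) * (ascPochhammer ℝ k).eval (b + ε)) 0 /
        ((ascPochhammer ℝ k).eval (a + b) * (k.factorial : ℝ)) * x ^ k)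
    (h2 : Summable fun k : ℕ =>
      (ascPochhammer ℝ k).eval a * (ascPochhammer ℝ k).eval b /
        ((ascPochhammer ℝ k).eval (a + b) * (k.factorial : ℝ)) * x ^ k) :
    (∑' k : ℕ,
      deriv (fun ε : ℝ => (ascPochhammer ℝ k).eval (a + ε) * (ascPochhammer ℝ k).eval (b + ε)) 0 /
        ((ascPochhammer ℝ k).eval (a + b) * (k.factorial : ℝ)) * x ^ k) =
    Real.log (1 / (1 - x)) *
      ∑' k : ℕ, (ascPochhammer ℝ k).eval a * (ascPochhammer ℝ k).eval b /
        ((ascPochhammer ℝ k).eval (a + b) * (k.factorial : ℝ)) * x ^ k := by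
  have hPa := P_ne_zero ha
  have hPb := P_ne_zero hb
  have hPab := P_ne_zero hab
  have habk : ∀ n : ℕ, a + b + (n : ℝ) ≠ 0 := add_nat_ne_zero hab
  have csucc := c_succ ha hb hab
  have hc0 : ∀ k, c a b k ≠ 0 := fun k =>
    div_ne_zero (mul_ne_zero (hPa k) (hPb k))
      (mul_ne_zero (hPab k) (Nat.cast_ne_zero.mpr k.factorial_ne_zero))
  have esucc := e_succ csucc habk
  have dte : ∀ k, dt a b k / (P k (a + b) * (k.factorial : ℝ)) = e a b k :=
    dt_eq_e hPab habk dt_zero dt_succ esucc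
  have habs : |x| < 1 := abs_x_lt_one hx hc0 csucc habk h2
  exact final_assembly habs dte h2
end

section
/- Let φ_α(x) = 1 + 4α² x²/(1+x²)². Then for α > 0, ∫₀^∞ (1+x²)^{−3/2} / √(φ_α(x) + √(φ_α(x)³)) dx = arctan(α)/(√2 · α). -/
open Real MeasureTheory

lemma stmt_14_aux (a x t rr ss : ℝ) (ha : 0 < a) (ht : 0 < t) (ht2 : t ^ 2 = 2)
    (hr : 0 < rr) (hs : 0 < ss)
    (hr2 : rr ^ 2 = (1 + x ^ 2) ^ 2 + 4 * a ^ 2 * x ^ 2)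
    (hs2 : ss ^ 2 = 1 + x ^ 2 + rr) :
    1 / (rr * ss) =
      1 / (1 + (t * a * x / ss) ^ 2) *
        ((t * a * ss - t * a * x *
            ((2 * x + (2 * (1 + x ^ 2) * (2 * x) + 4 * a ^ 2 * (2 * x)) / (2 * rr)) / (2 * ss))) /
          ss ^ 2) / (t * a) := by
  have h1 : 1 + (t * a * x / ss) ^ 2 = (ss ^ 2 + 2 * a ^ 2 * x ^ 2) / ss ^ 2 := by
    field_simp
    nlinarith [ht2]
  have h2 : (2 * x + (2 * (1 + x ^ 2) * (2 * x) + 4 * a ^ 2 * (2 * x)) / (2 * rr)) / (2 * ss)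
      = x * (ss ^ 2 + 2 * a ^ 2) / (rr * ss) := by
    rw [hs2]
    field_simp
    ring
  rw [h1, h2]
  have key : t * a * ss - t * a * x * (x * (ss ^ 2 + 2 * a ^ 2) / (rr * ss))
      = t * a * (ss ^ 2 + 2 * a ^ 2 * x ^ 2) / (rr * ss) := by
    have hkey : ss ^ 2 * (rr - x ^ 2 - 1) = 4 * a ^ 2 * x ^ 2 := by
      rw [hs2]; nlinarith [hr2]
    field_simp
    linear_combination hkey
  rw [key]
  have hpos : (0:ℝ) < ss ^ 2 + 2 * a ^ 2 * x ^ 2 := by positivity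
  field_simp

theorem stmt_14 (α : ℝ) (hα : 0 < α) :
    ∫ x in Set.Ioi (0 : ℝ),
        (1 + x ^ 2) ^ (-(3 : ℝ) / 2) /
          Real.sqrt ((1 + 4 * α ^ 2 * x ^ 2 / (1 + x ^ 2) ^ 2) +
            Real.sqrt ((1 + 4 * α ^ 2 * x ^ 2 / (1 + x ^ 2) ^ 2) ^ 3)) =
      Real.arctan α / (Real.sqrt 2 * α) := by
  set r : ℝ → ℝ := fun x => Real.sqrt ((1 + x ^ 2) ^ 2 + 4 * α ^ 2 * x ^ 2) with hrdef
  set s : ℝ → ℝ := fun x => Real.sqrt (1 + x ^ 2 + r x) with hsdef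
  have hargpos : ∀ x : ℝ, (0:ℝ) < (1 + x ^ 2) ^ 2 + 4 * α ^ 2 * x ^ 2 := by
    intro x; positivity
  have hrpos : ∀ x : ℝ, 0 < r x := fun x => Real.sqrt_pos.mpr (hargpos x)
  have hr2 : ∀ x : ℝ, r x ^ 2 = (1 + x ^ 2) ^ 2 + 4 * α ^ 2 * x ^ 2 := fun x =>
    Real.sq_sqrt (hargpos x).le
  have hspos : ∀ x : ℝ, 0 < s x := fun x =>
    Real.sqrt_pos.mpr (by have := hrpos x; positivity)
  have hs2 : ∀ x : ℝ, s x ^ 2 = 1 + x ^ 2 + r x := fun x =>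
    Real.sq_sqrt (by have := hrpos x; positivity)
  have h2pos : (0:ℝ) < Real.sqrt 2 := Real.sqrt_pos.mpr (by norm_num)
  have h22 : Real.sqrt 2 ^ 2 = 2 := Real.sq_sqrt (by norm_num)
  set F : ℝ → ℝ := fun x => Real.arctan (Real.sqrt 2 * α * x / s x) / (Real.sqrt 2 * α)
    with hFdef
  -- pointwise identity for the integrand
  have hint : ∀ x : ℝ,
      (1 + x ^ 2) ^ (-(3 : ℝ) / 2) /
          Real.sqrt ((1 + 4 * α ^ 2 * x ^ 2 / (1 + x ^ 2) ^ 2) +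
            Real.sqrt ((1 + 4 * α ^ 2 * x ^ 2 / (1 + x ^ 2) ^ 2) ^ 3)) =
        1 / (r x * s x) := by
    intro x
    have hA : (0:ℝ) < 1 + x ^ 2 := by positivity
    set φ : ℝ := 1 + 4 * α ^ 2 * x ^ 2 / (1 + x ^ 2) ^ 2 with hφdef
    have hφeq : φ = (r x / (1 + x ^ 2)) ^ 2 := by
      rw [hφdef, div_pow, hr2]; field_simp
    have hsφ : Real.sqrt φ = r x / (1 + x ^ 2) := by
      rw [hφeq, Real.sqrt_sq (by positivity)]
    have hφnn : 0 ≤ φ := by rw [hφeq]; positivity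
    have hsφ3 : Real.sqrt (φ ^ 3) = φ * Real.sqrt φ := by
      rw [show φ ^ 3 = φ ^ 2 * φ by ring, Real.sqrt_mul (sq_nonneg φ),
        Real.sqrt_sq hφnn]
    have hsum : φ + Real.sqrt (φ ^ 3) = (r x * s x) ^ 2 / ((1 + x ^ 2) ^ 3) := by
      rw [hsφ3, hsφ, hφeq, mul_pow, hs2]
      field_simp
    have hpow : (1 + x ^ 2) ^ (-(3 : ℝ) / 2) = (Real.sqrt ((1 + x ^ 2) ^ 3))⁻¹ := by
      rw [Real.sqrt_eq_rpow, ← Real.rpow_natCast (1 + x ^ 2) 3, ← Real.rpow_mul hA.le,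
        ← Real.rpow_neg hA.le]
      norm_num
    have hA3 : (0:ℝ) < Real.sqrt ((1 + x ^ 2) ^ 3) := Real.sqrt_pos.mpr (by positivity)
    rw [hsum, hpow, Real.sqrt_div (sq_nonneg _),
      Real.sqrt_sq (by positivity : (0:ℝ) ≤ r x * s x)]
    have hrs : (0:ℝ) < r x * s x := mul_pos (hrpos x) (hspos x)
    field_simp
  -- derivative of F
  have hderiv : ∀ x : ℝ, HasDerivAt F (1 / (r x * s x)) x := by
    intro x
    have hx2 : HasDerivAt (fun y : ℝ => 1 + y ^ 2) (2 * x) x := by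
      simpa using ((hasDerivAt_pow 2 x).const_add 1)
    have h1 : HasDerivAt (fun y : ℝ => (1 + y ^ 2) ^ 2 + 4 * α ^ 2 * y ^ 2)
        (2 * (1 + x ^ 2) * (2 * x) + 4 * α ^ 2 * (2 * x)) x := by
      have ha : HasDerivAt (fun y : ℝ => (1 + y ^ 2) ^ 2) (2 * (1 + x ^ 2) * (2 * x)) x := by
        simpa using hx2.fun_pow 2
      have hb : HasDerivAt (fun y : ℝ => 4 * α ^ 2 * y ^ 2) (4 * α ^ 2 * (2 * x)) x := by
        simpa using (hasDerivAt_pow 2 x).const_mul (4 * α ^ 2)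
      simpa using ha.fun_add hb
    have hR : HasDerivAt r
        ((2 * (1 + x ^ 2) * (2 * x) + 4 * α ^ 2 * (2 * x)) / (2 * r x)) x :=
      h1.sqrt (ne_of_gt (hargpos x))
    have hSin : HasDerivAt (fun y : ℝ => 1 + y ^ 2 + r y)
        (2 * x + (2 * (1 + x ^ 2) * (2 * x) + 4 * α ^ 2 * (2 * x)) / (2 * r x)) x :=
      hx2.add hR
    have hS : HasDerivAt s
        ((2 * x + (2 * (1 + x ^ 2) * (2 * x) + 4 * α ^ 2 * (2 * x)) / (2 * r x)) / (2 * s x)) x :=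
      hSin.sqrt (by have := hrpos x; positivity)
    have hnum : HasDerivAt (fun y : ℝ => Real.sqrt 2 * α * y) (Real.sqrt 2 * α) x := by
      simpa using (hasDerivAt_id x).const_mul (Real.sqrt 2 * α)
    have hq : HasDerivAt (fun y : ℝ => Real.sqrt 2 * α * y / s y)
        ((Real.sqrt 2 * α * s x - Real.sqrt 2 * α * x *
          ((2 * x + (2 * (1 + x ^ 2) * (2 * x) + 4 * α ^ 2 * (2 * x)) / (2 * r x)) / (2 * s x)))
          / (s x) ^ 2) x :=
      hnum.div hS (ne_of_gt (hspos x))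
    have harc := (Real.hasDerivAt_arctan (Real.sqrt 2 * α * x / s x)).comp x hq
    have hF := harc.div_const (Real.sqrt 2 * α)
    rw [stmt_14_aux α x (Real.sqrt 2) (r x) (s x) hα h2pos h22 (hrpos x) (hspos x)
      (hr2 x) (hs2 x)]
    exact hF
  -- continuity pieces
  have hrc : Continuous r := by
    apply Real.continuous_sqrt.comp
    fun_prop
  have hsc : Continuous s := by
    apply Real.continuous_sqrt.comp
    have h1 : Continuous fun x : ℝ => 1 + x ^ 2 := by fun_prop
    exact h1.add hrc
  -- limit of F at infinity
  set G : ℝ → ℝ := fun t => Real.arctan (Real.sqrt 2 * α /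
      Real.sqrt (t ^ 2 + 1 + Real.sqrt ((t ^ 2 + 1) ^ 2 + 4 * α ^ 2 * t ^ 2))) /
      (Real.sqrt 2 * α) with hGdef
  have harg0 : ((0:ℝ) ^ 2 + 1 + Real.sqrt (((0:ℝ) ^ 2 + 1) ^ 2 + 4 * α ^ 2 * (0:ℝ) ^ 2)) = 2 := by
    norm_num
  have hG0 : G 0 = Real.arctan α / (Real.sqrt 2 * α) := by
    show Real.arctan (Real.sqrt 2 * α /
      Real.sqrt ((0:ℝ) ^ 2 + 1 + Real.sqrt (((0:ℝ) ^ 2 + 1) ^ 2 + 4 * α ^ 2 * (0:ℝ) ^ 2))) /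
      (Real.sqrt 2 * α) = _
    rw [harg0]
    congr 2
    rw [mul_comm, mul_div_assoc, div_self (ne_of_gt h2pos), mul_one]
  have hGc : ContinuousAt G 0 := by
    apply ContinuousAt.div_const
    apply Real.continuous_arctan.continuousAt.comp
    apply ContinuousAt.div continuousAt_const
    · have hc1 : Continuous fun t : ℝ => (t ^ 2 + 1) ^ 2 + 4 * α ^ 2 * t ^ 2 := by fun_prop
      have hc2 : Continuous fun t : ℝ =>
          t ^ 2 + 1 + Real.sqrt ((t ^ 2 + 1) ^ 2 + 4 * α ^ 2 * t ^ 2) :=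
        Continuous.add (by fun_prop) (Real.continuous_sqrt.comp hc1)
      exact (Real.continuous_sqrt.comp hc2).continuousAt
    · show Real.sqrt ((0:ℝ) ^ 2 + 1 + Real.sqrt (((0:ℝ) ^ 2 + 1) ^ 2 + 4 * α ^ 2 * (0:ℝ) ^ 2)) ≠ 0
      rw [harg0]
      positivity
  have hFG : ∀ x : ℝ, 0 < x → F x = G x⁻¹ := by
    intro x hx
    have hx2 : (0:ℝ) < x ^ 2 := by positivity
    have e1 : ((x:ℝ)⁻¹ ^ 2 + 1) ^ 2 + 4 * α ^ 2 * (x⁻¹) ^ 2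
        = ((1 + x ^ 2) ^ 2 + 4 * α ^ 2 * x ^ 2) / (x ^ 2) ^ 2 := by
      field_simp
    have e2 : Real.sqrt (((x:ℝ)⁻¹ ^ 2 + 1) ^ 2 + 4 * α ^ 2 * (x⁻¹) ^ 2) = r x / x ^ 2 := by
      rw [e1, Real.sqrt_div (hargpos x).le, Real.sqrt_sq hx2.le]
    have e3 : (x:ℝ)⁻¹ ^ 2 + 1 + r x / x ^ 2 = (1 + x ^ 2 + r x) / x ^ 2 := by
      field_simp
    have e4 : Real.sqrt ((1 + x ^ 2 + r x) / x ^ 2) = s x / x := by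
      rw [Real.sqrt_div (by have := hrpos x; positivity), Real.sqrt_sq hx.le]
    show Real.arctan (Real.sqrt 2 * α * x / s x) / (Real.sqrt 2 * α)
        = Real.arctan (Real.sqrt 2 * α /
          Real.sqrt ((x:ℝ)⁻¹ ^ 2 + 1 + Real.sqrt (((x:ℝ)⁻¹ ^ 2 + 1) ^ 2 + 4 * α ^ 2 * (x⁻¹) ^ 2)))
          / (Real.sqrt 2 * α)
    rw [e2, e3, e4]
    congr 2
    rw [div_div_eq_mul_div]
  have hFtop : Filter.Tendsto F Filter.atTop (nhds (Real.arctan α / (Real.sqrt 2 * α))) := by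
    have h1 : Filter.Tendsto (fun x : ℝ => G x⁻¹) Filter.atTop (nhds (G 0)) :=
      hGc.tendsto.comp tendsto_inv_atTop_zero
    rw [← hG0]
    apply h1.congr'
    filter_upwards [Filter.eventually_gt_atTop (0:ℝ)] with x hx
    exact (hFG x hx).symm
  have hF0 : F 0 = 0 := by
    show Real.arctan (Real.sqrt 2 * α * 0 / s 0) / (Real.sqrt 2 * α) = 0
    simp
  have key := integral_Ioi_of_hasDerivAt_of_nonneg' (g := F) (g' := fun x => 1 / (r x * s x))
    (a := 0) (fun x _ => hderiv x)
    (fun x _ => by have := hrpos x; have := hspos x; positivity) hFtop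
  calc ∫ x in Set.Ioi (0:ℝ),
        (1 + x ^ 2) ^ (-(3 : ℝ) / 2) /
          Real.sqrt ((1 + 4 * α ^ 2 * x ^ 2 / (1 + x ^ 2) ^ 2) +
            Real.sqrt ((1 + 4 * α ^ 2 * x ^ 2 / (1 + x ^ 2) ^ 2) ^ 3))
      = ∫ x in Set.Ioi (0:ℝ), 1 / (r x * s x) := by
        congr 1; funext x; exact hint x
    _ = Real.arctan α / (Real.sqrt 2 * α) - F 0 := key
    _ = Real.arctan α / (Real.sqrt 2 * α) := by rw [hF0, sub_zero]
end

section
/- Let φ(x) = 1 + (4/3) x²/(1+x²)². Then ∫₀^∞ (1+x²)^{−3/2} / √(φ(x) + √(φ(x)³)) dx = π/(2√6). -/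
open Real MeasureTheory
open Filter Topology

noncomputable def myPhi : ℝ → ℝ := fun x =>
  Real.sqrt 6 / 2 *
    Real.arctan (Real.sqrt 2 * x / Real.sqrt (3 + 3 * x ^ 2 + Real.sqrt (9 * x ^ 4 + 30 * x ^ 2 + 9)))

lemma myPhi_hasDerivAt (x : ℝ) : HasDerivAt myPhi
    ((1 + x ^ 2) ^ (-(3 : ℝ) / 2) /
          Real.sqrt ((1 + 4 / 3 * x ^ 2 / (1 + x ^ 2) ^ 2) +
            Real.sqrt ((1 + 4 / 3 * x ^ 2 / (1 + x ^ 2) ^ 2) ^ 3))) x := by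
  have hq : (0:ℝ) < 9 * x ^ 4 + 30 * x ^ 2 + 9 := by positivity
  set w := Real.sqrt (9 * x ^ 4 + 30 * x ^ 2 + 9) with hwdef
  have hw0 : 0 < w := Real.sqrt_pos.2 hq
  have hw2 : w ^ 2 = 9 * x ^ 4 + 30 * x ^ 2 + 9 := Real.sq_sqrt hq.le
  have hp : (0:ℝ) < 3 + 3 * x ^ 2 + w := by positivity
  set v := Real.sqrt (3 + 3 * x ^ 2 + w) with hvdef
  have hv0 : 0 < v := Real.sqrt_pos.2 hp
  have hv2 : v ^ 2 = 3 + 3 * x ^ 2 + w := Real.sq_sqrt hp.le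
  have h1 : HasDerivAt (fun y : ℝ => 9 * y ^ 4 + 30 * y ^ 2 + 9) (36 * x ^ 3 + 60 * x) x := by
    have := ((((hasDerivAt_pow 4 x).const_mul (9:ℝ)).add
      ((hasDerivAt_pow 2 x).const_mul (30:ℝ))).add_const (9:ℝ))
    refine this.congr_deriv (Eq.symm ?_)
    push_cast; ring
  have h2 : HasDerivAt (fun y : ℝ => Real.sqrt (9 * y ^ 4 + 30 * y ^ 2 + 9))
      ((36 * x ^ 3 + 60 * x) / (2 * w)) x := h1.sqrt (ne_of_gt hq)
  have h3 : HasDerivAt (fun y : ℝ => 3 + 3 * y ^ 2 + Real.sqrt (9 * y ^ 4 + 30 * y ^ 2 + 9))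
      (6 * x + (36 * x ^ 3 + 60 * x) / (2 * w)) x := by
    have := ((((hasDerivAt_pow 2 x).const_mul (3:ℝ)).const_add (3:ℝ)).add h2)
    refine this.congr_deriv (Eq.symm ?_)
    push_cast; ring
  have h4 : HasDerivAt (fun y : ℝ => Real.sqrt (3 + 3 * y ^ 2 + Real.sqrt (9 * y ^ 4 + 30 * y ^ 2 + 9)))
      ((6 * x + (36 * x ^ 3 + 60 * x) / (2 * w)) / (2 * v)) x := h3.sqrt (ne_of_gt hp)
  have h5 : HasDerivAt (fun y : ℝ => Real.sqrt 2 * y) (Real.sqrt 2) x := by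
    simpa using (hasDerivAt_id x).const_mul (Real.sqrt 2)
  have h6 := h5.div h4 (ne_of_gt hv0)
  have h7 := (h6.arctan).const_mul (Real.sqrt 6 / 2)
  refine h7.congr_deriv (Eq.symm ?_)
  simp only [Pi.div_apply]
  rw [← hwdef, ← hvdef]
  -- now prove the equality of derivative values
  have hy : (0:ℝ) < 1 + x ^ 2 := by positivity
  set r := Real.sqrt (1 + x ^ 2) with hrdef
  have hr0 : 0 < r := Real.sqrt_pos.2 hy
  have hr2 : r ^ 2 = 1 + x ^ 2 := Real.sq_sqrt hy.le
  have hs2 : Real.sqrt 2 ^ 2 = (2:ℝ) := Real.sq_sqrt (by norm_num)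
  have hs3 : Real.sqrt 3 ^ 2 = (3:ℝ) := Real.sq_sqrt (by norm_num)
  have hs6 : Real.sqrt 6 = Real.sqrt 2 * Real.sqrt 3 := by
    rw [show (6:ℝ) = 2 * 3 by norm_num, Real.sqrt_mul (by norm_num)]
  have hs30 : (0:ℝ) < Real.sqrt 3 := Real.sqrt_pos.2 (by norm_num)
  have hs20 : (0:ℝ) < Real.sqrt 2 := Real.sqrt_pos.2 (by norm_num)
  have hA : 1 + 4 / 3 * x ^ 2 / (1 + x ^ 2) ^ 2 = (w / (3 * (1 + x ^ 2))) ^ 2 := by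
    rw [div_pow, hw2]; field_simp; ring
  have hB : Real.sqrt ((1 + 4 / 3 * x ^ 2 / (1 + x ^ 2) ^ 2) ^ 3) = (w / (3 * (1 + x ^ 2))) ^ 3 := by
    rw [hA, show ((w / (3 * (1 + x ^ 2))) ^ 2) ^ 3 = ((w / (3 * (1 + x ^ 2))) ^ 3) ^ 2 by ring,
      Real.sqrt_sq (by positivity)]
  have hC : 1 + 4 / 3 * x ^ 2 / (1 + x ^ 2) ^ 2 +
      Real.sqrt ((1 + 4 / 3 * x ^ 2 / (1 + x ^ 2) ^ 2) ^ 3)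
      = (w * v) ^ 2 / (27 * (1 + x ^ 2) ^ 3) := by
    rw [hB, hA]
    rw [show (w * v) ^ 2 = w ^ 2 * (3 + 3 * x ^ 2 + w) from by rw [mul_pow, hv2]]
    field_simp
    ring
  have h27s : Real.sqrt (27 * (1 + x ^ 2) ^ 3) = 3 * Real.sqrt 3 * r ^ 3 := by
    rw [show (27:ℝ) * (1 + x ^ 2) ^ 3 = (3 * Real.sqrt 3 * r ^ 3) ^ 2 by
      linear_combination (27 * ((1 + x ^ 2) ^ 2 + (1 + x ^ 2) * r ^ 2 + r ^ 4)) * hr2.symm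
        - 9 * r ^ 6 * hs3]
    exact Real.sqrt_sq (by positivity)
  have hSB : Real.sqrt (1 + 4 / 3 * x ^ 2 / (1 + x ^ 2) ^ 2 +
      Real.sqrt ((1 + 4 / 3 * x ^ 2 / (1 + x ^ 2) ^ 2) ^ 3)) = w * v / (3 * Real.sqrt 3 * r ^ 3) := by
    rw [hC, Real.sqrt_div (sq_nonneg _), Real.sqrt_sq (by positivity), h27s]
  have hrpow : (1 + x ^ 2) ^ (-(3 : ℝ) / 2) = (r ^ 3)⁻¹ := by
    rw [show (-(3:ℝ) / 2) = -((1/2) * (3:ℕ)) by norm_num, Real.rpow_neg hy.le,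
      Real.rpow_mul hy.le, Real.rpow_natCast, ← Real.sqrt_eq_rpow, ← hrdef]
  rw [hrpow, hSB]
  have hL : (r ^ 3)⁻¹ / (w * v / (3 * Real.sqrt 3 * r ^ 3)) = 3 * Real.sqrt 3 / (w * v) := by
    field_simp
  rw [hL]
  -- simplify the right-hand side
  rw [show (6 * x + (36 * x ^ 3 + 60 * x) / (2 * w)) / (2 * v) = 3 * x * (w + 3 * x ^ 2 + 5) / (v * w)
      from by field_simp; ring]
  rw [show Real.sqrt 2 * v - Real.sqrt 2 * x * (3 * x * (w + 3 * x ^ 2 + 5) / (v * w))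
      = 3 * Real.sqrt 2 * (w + 5 * x ^ 2 + 3) / (v * w) from by
    field_simp
    linear_combination w * hv2 + hw2]
  rw [show (1:ℝ) + (Real.sqrt 2 * x / v) ^ 2 = (w + 5 * x ^ 2 + 3) / v ^ 2 from by
    field_simp
    linear_combination hv2 + x ^ 2 * hs2]
  have hE : (0:ℝ) < w + 5 * x ^ 2 + 3 := by positivity
  rw [hs6]
  rw [div_div]
  field_simp
  linear_combination (-1 : ℝ) * hs2

theorem stmt_15 :
    ∫ x in Set.Ioi (0 : ℝ),
        (1 + x ^ 2) ^ (-(3 : ℝ) / 2) /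
          Real.sqrt ((1 + 4 / 3 * x ^ 2 / (1 + x ^ 2) ^ 2) +
            Real.sqrt ((1 + 4 / 3 * x ^ 2 / (1 + x ^ 2) ^ 2) ^ 3)) =
      π / (2 * Real.sqrt 6) := by
  have hs6 : Real.sqrt 6 = Real.sqrt 2 * Real.sqrt 3 := by
    rw [show (6:ℝ) = 2 * 3 by norm_num, Real.sqrt_mul (by norm_num)]
  have h9 : Real.sqrt 9 = 3 := by
    rw [show (9:ℝ) = 3 ^ 2 by norm_num, Real.sqrt_sq (by norm_num)]
  -- limit of myPhi at infinity
  have h1 : Tendsto (fun x : ℝ => 3 * (x⁻¹) ^ 2 + 3 + Real.sqrt (9 + 30 * (x⁻¹) ^ 2 + 9 * (x⁻¹) ^ 4))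
      atTop (𝓝 6) := by
    have hx : Tendsto (fun x : ℝ => x⁻¹) atTop (𝓝 0) := tendsto_inv_atTop_zero
    have hc : ContinuousAt (fun y : ℝ => 3 * y ^ 2 + 3 + Real.sqrt (9 + 30 * y ^ 2 + 9 * y ^ 4)) 0 := by
      fun_prop
    have := hc.tendsto.comp hx
    simp only [Function.comp_def] at this
    convert this using 2
    norm_num [h9]
  have h2 : Tendsto (fun x : ℝ => Real.sqrt 2 /
      Real.sqrt (3 * (x⁻¹) ^ 2 + 3 + Real.sqrt (9 + 30 * (x⁻¹) ^ 2 + 9 * (x⁻¹) ^ 4)))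
      atTop (𝓝 (Real.sqrt 2 / Real.sqrt 6)) := by
    exact Tendsto.div tendsto_const_nhds ((Real.continuous_sqrt.tendsto 6).comp h1)
      (by positivity)
  have heq : ∀ᶠ x : ℝ in atTop, Real.sqrt 2 /
      Real.sqrt (3 * (x⁻¹) ^ 2 + 3 + Real.sqrt (9 + 30 * (x⁻¹) ^ 2 + 9 * (x⁻¹) ^ 4)) =
      Real.sqrt 2 * x / Real.sqrt (3 + 3 * x ^ 2 + Real.sqrt (9 * x ^ 4 + 30 * x ^ 2 + 9)) := by
    filter_upwards [eventually_gt_atTop (0:ℝ)] with x hx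
    have hiw : Real.sqrt (9 + 30 * (x⁻¹) ^ 2 + 9 * (x⁻¹) ^ 4)
        = Real.sqrt (9 * x ^ 4 + 30 * x ^ 2 + 9) / x ^ 2 := by
      rw [show 9 + 30 * (x⁻¹) ^ 2 + 9 * (x⁻¹) ^ 4 = (9 * x ^ 4 + 30 * x ^ 2 + 9) / (x ^ 2) ^ 2 from by
        field_simp, Real.sqrt_div (by positivity), Real.sqrt_sq (by positivity)]
    rw [hiw, show 3 * (x⁻¹) ^ 2 + 3 + Real.sqrt (9 * x ^ 4 + 30 * x ^ 2 + 9) / x ^ 2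
        = (3 + 3 * x ^ 2 + Real.sqrt (9 * x ^ 4 + 30 * x ^ 2 + 9)) / x ^ 2 from by
      field_simp]
    rw [Real.sqrt_div (by positivity) (x ^ 2), Real.sqrt_sq hx.le]
    rw [div_div_eq_mul_div]
  have h3 : Tendsto (fun x : ℝ =>
      Real.sqrt 2 * x / Real.sqrt (3 + 3 * x ^ 2 + Real.sqrt (9 * x ^ 4 + 30 * x ^ 2 + 9)))
      atTop (𝓝 (Real.sqrt 2 / Real.sqrt 6)) := h2.congr' heq
  have harct : Real.arctan (Real.sqrt 2 / Real.sqrt 6) = π / 6 := by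
    have hpi := Real.pi_pos
    rw [show Real.sqrt 2 / Real.sqrt 6 = 1 / Real.sqrt 3 from by
      rw [hs6, div_eq_div_iff (by positivity) (by positivity)]; ring]
    rw [← Real.tan_pi_div_six, Real.arctan_tan (by linarith) (by linarith)]
  have hlim : Tendsto myPhi atTop (𝓝 (Real.sqrt 6 / 2 * (π / 6))) := by
    have := ((Real.continuous_arctan.tendsto _).comp h3).const_mul (Real.sqrt 6 / 2)
    rw [harct] at this
    exact this
  have hnonneg : ∀ x ∈ Set.Ioi (0:ℝ), 0 ≤
      (1 + x ^ 2) ^ (-(3 : ℝ) / 2) /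
        Real.sqrt ((1 + 4 / 3 * x ^ 2 / (1 + x ^ 2) ^ 2) +
          Real.sqrt ((1 + 4 / 3 * x ^ 2 / (1 + x ^ 2) ^ 2) ^ 3)) := by
    intro x _
    exact div_nonneg (Real.rpow_nonneg (by positivity) _) (Real.sqrt_nonneg _)
  have hderiv : ∀ x ∈ Set.Ici (0:ℝ), HasDerivAt myPhi
      ((1 + x ^ 2) ^ (-(3 : ℝ) / 2) /
        Real.sqrt ((1 + 4 / 3 * x ^ 2 / (1 + x ^ 2) ^ 2) +
          Real.sqrt ((1 + 4 / 3 * x ^ 2 / (1 + x ^ 2) ^ 2) ^ 3))) x :=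
    fun x _ => myPhi_hasDerivAt x
  rw [integral_Ioi_of_hasDerivAt_of_nonneg' hderiv hnonneg hlim]
  have hphi0 : myPhi 0 = 0 := by
    simp [myPhi]
  rw [hphi0, sub_zero]
  have h6 : Real.sqrt 6 * Real.sqrt 6 = 6 := Real.mul_self_sqrt (by norm_num)
  rw [eq_div_iff (by positivity)]
  linear_combination (π / 6) * h6
end

section
/- For real a, b with a+b+1/2 not a non-positive integer and |x| < 1: (₂F₁(a, b; a+b+1/2; x))² = ₃F₂(2a, a+b, 2b; a+b+1/2, 2a+2b; x), i.e., (Σ_{k≥0} (a)_k(b)_k/((a+b+1/2)_k k!) x^k)² = Σ_{k≥0} (2a)_k(a+b)_k(2b)_k/((a+b+1/2)_k(2a+2b)_k k!) x^k. -/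
open Real Polynomial Filter Finset Topology

namespace Clausen16

/-- The ₂F₁ coefficient. -/
noncomputable def f (a b : ℝ) (k : ℕ) : ℝ :=
  (ascPochhammer ℝ k).eval a * (ascPochhammer ℝ k).eval b /
    ((ascPochhammer ℝ k).eval (a + b + 1 / 2) * (k.factorial : ℝ))

/-- The ₃F₂ coefficient. -/
noncomputable def d (a b : ℝ) (k : ℕ) : ℝ :=
  (ascPochhammer ℝ k).eval (2 * a) * (ascPochhammer ℝ k).eval (a + b) *
      (ascPochhammer ℝ k).eval (2 * b) /
    ((ascPochhammer ℝ k).eval (a + b + 1 / 2) * (ascPochhammer ℝ k).eval (2 * a + 2 * b) *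
      (k.factorial : ℝ))

/-- The WZ certificate polynomial. -/
noncomputable def Hp (a b N K : ℝ) : ℝ :=
  K * ((2 * (a + b) - 1) * ((a + b) + 1) + 3 * K - 2 * K ^ 2 + 3 * ((a + b) - 1 / 2) * N
    + 3 * N * K)

lemma poch_ne_zero {c : ℝ} (hc : ∀ n : ℕ, c ≠ -(n : ℝ)) (k : ℕ) :
    (ascPochhammer ℝ k).eval c ≠ 0 := by
  induction k with
  | zero => simp
  | succ n ih =>
    rw [ascPochhammer_succ_eval]
    refine mul_ne_zero ih ?_
    have := hc n
    intro h; apply this; linarith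

lemma add_nat_ne_zero {c : ℝ} (hc : ∀ n : ℕ, c ≠ -(n : ℝ)) (k : ℕ) : c + (k : ℝ) ≠ 0 := by
  have := hc k
  intro h; apply this; linarith

lemma f_rec (a b : ℝ) (hc : ∀ n : ℕ, a + b + 1 / 2 ≠ -(n : ℝ)) (k : ℕ) :
    (a + b + 1 / 2 + k) * ((k : ℝ) + 1) * f a b (k + 1) = (a + k) * (b + k) * f a b k := by
  have hpc := poch_ne_zero hc k
  have hck := add_nat_ne_zero hc k
  have hfk : (k.factorial : ℝ) ≠ 0 := Nat.cast_ne_zero.mpr k.factorial_ne_zero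
  have hk1 : ((k : ℝ) + 1) ≠ 0 := by positivity
  unfold f
  rw [ascPochhammer_succ_eval, ascPochhammer_succ_eval, ascPochhammer_succ_eval,
    Nat.factorial_succ, Nat.cast_mul, Nat.cast_add, Nat.cast_one]
  generalize (ascPochhammer ℝ k).eval a = pa
  generalize (ascPochhammer ℝ k).eval b = pb
  generalize hpc2 : (ascPochhammer ℝ k).eval (a + b + 1 / 2) = pc
  rw [hpc2] at hpc
  generalize hK : (k : ℝ) = K
  rw [hK] at hck hk1
  generalize hF : (k.factorial : ℝ) = F
  rw [hF] at hfk
  rw [mul_div_assoc', mul_div_assoc', div_eq_div_iff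
    (mul_ne_zero (mul_ne_zero hpc hck) (mul_ne_zero hk1 hfk)) (mul_ne_zero hpc hfk)]
  ring

lemma d_rec (a b : ℝ) (hc : ∀ n : ℕ, a + b + 1 / 2 ≠ -(n : ℝ))
    (hc' : ∀ n : ℕ, 2 * a + 2 * b ≠ -(n : ℝ)) (k : ℕ) :
    (a + b + 1 / 2 + k) * (2 * a + 2 * b + k) * ((k : ℝ) + 1) * d a b (k + 1) =
      (2 * a + k) * (a + b + k) * (2 * b + k) * d a b k := by
  have hpc := poch_ne_zero hc k
  have hpc' := poch_ne_zero hc' k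
  have hck := add_nat_ne_zero hc k
  have hck' := add_nat_ne_zero hc' k
  have hfk : (k.factorial : ℝ) ≠ 0 := Nat.cast_ne_zero.mpr k.factorial_ne_zero
  have hk1 : ((k : ℝ) + 1) ≠ 0 := by positivity
  unfold d
  rw [ascPochhammer_succ_eval, ascPochhammer_succ_eval, ascPochhammer_succ_eval,
    ascPochhammer_succ_eval, ascPochhammer_succ_eval, Nat.factorial_succ,
    Nat.cast_mul, Nat.cast_add, Nat.cast_one]
  generalize (ascPochhammer ℝ k).eval (2 * a) = pa
  generalize (ascPochhammer ℝ k).eval (a + b) = pab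
  generalize (ascPochhammer ℝ k).eval (2 * b) = pb
  generalize hpc2 : (ascPochhammer ℝ k).eval (a + b + 1 / 2) = pc
  rw [hpc2] at hpc
  generalize hpc2' : (ascPochhammer ℝ k).eval (2 * a + 2 * b) = pc'
  rw [hpc2'] at hpc'
  generalize hK : (k : ℝ) = K
  rw [hK] at hck hck' hk1
  generalize hF : (k.factorial : ℝ) = F
  rw [hF] at hfk
  rw [mul_div_assoc', mul_div_assoc', div_eq_div_iff
    (mul_ne_zero (mul_ne_zero (mul_ne_zero hpc hck) (mul_ne_zero hpc' hck'))
      (mul_ne_zero hk1 hfk)) (mul_ne_zero (mul_ne_zero hpc hpc') hfk)]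
  ring

lemma f_zero (a b : ℝ) : f a b 0 = 1 := by simp [f]

lemma d_zero (a b : ℝ) : d a b 0 = 1 := by simp [d]

/-- The core WZ-style local identity, as a real-variable identity. -/
lemma core (a b K M u v u' v' : ℝ)
    (hA : (a + b + 1 / 2 + K) * (K + 1) ≠ 0) (hB : (a + b + 1 / 2 + M) * (M + 1) ≠ 0)
    (e1 : (a + b + 1 / 2 + K) * (K + 1) * u' = (a + K) * (b + K) * u)
    (e2 : (a + b + 1 / 2 + M) * (M + 1) * v' = (a + M) * (b + M) * v) :
    (2 * a + (K + M)) * (a + b + (K + M)) * (2 * b + (K + M)) * (u * v) -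
        (a + b + 1 / 2 + (K + M)) * (2 * a + 2 * b + (K + M)) * ((K + M) + 1) * (u * v') =
      Hp a b (K + M) (K + 1) * u' * v - Hp a b (K + M) K * (u * v') := by
  apply mul_left_cancel₀ (mul_ne_zero hA hB)
  unfold Hp
  linear_combination
    (-((a + b + 1 / 2 + M) * (M + 1)) *
        ((K + 1) * ((2 * (a + b) - 1) * ((a + b) + 1) + 3 * (K + 1) - 2 * (K + 1) ^ 2 +
          3 * ((a + b) - 1 / 2) * (K + M) + 3 * (K + M) * (K + 1))) * v) * e1 +
    ((a + b + 1 / 2 + K) * (K + 1) *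
        (K * ((2 * (a + b) - 1) * ((a + b) + 1) + 3 * K - 2 * K ^ 2 +
          3 * ((a + b) - 1 / 2) * (K + M) + 3 * (K + M) * K) -
          (a + b + 1 / 2 + (K + M)) * (2 * a + 2 * b + (K + M)) * ((K + M) + 1)) * u) * e2

/-- Convolution of the ₂F₁ coefficients. -/
noncomputable def e (a b : ℝ) (n : ℕ) : ℝ := ∑ k ∈ Finset.range (n + 1), f a b k * f a b (n - k)

lemma e_rec (a b : ℝ) (hc : ∀ n : ℕ, a + b + 1 / 2 ≠ -(n : ℝ)) (n : ℕ) :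
    (a + b + 1 / 2 + n) * (2 * a + 2 * b + n) * ((n : ℝ) + 1) * e a b (n + 1) =
      (2 * a + n) * (a + b + n) * (2 * b + n) * e a b n := by
  set c : ℝ := a + b + 1 / 2 with hcdef
  set Q : ℝ := (2 * a + n) * (a + b + n) * (2 * b + n) with hQ
  set P : ℝ := (c + n) * (2 * a + 2 * b + n) * ((n : ℝ) + 1) with hP
  set G : ℕ → ℝ := fun k => if k ≤ n + 1 then Hp a b n k * f a b k * f a b (n + 1 - k) else 0
    with hG
  have key : ∀ k ∈ Finset.range (n + 2),
      (if k ≤ n then Q * (f a b k * f a b (n - k)) else 0) -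
        P * (f a b k * f a b (n + 1 - k)) = G (k + 1) - G k := by
    intro k hk
    rw [Finset.mem_range] at hk
    by_cases hkn : k ≤ n
    · -- interior case
      obtain ⟨m, hm⟩ : ∃ m, n = k + m := ⟨n - k, by omega⟩
      subst hm
      have hnk : k + m - k = m := by omega
      have hnk1 : k + m + 1 - k = m + 1 := by omega
      have hnk2 : k + m + 1 - (k + 1) = m := by omega
      have hGk : G k = Hp a b (k + m) k * f a b k * f a b (m + 1) := by
        rw [hG]; simp only [hnk1]; rw [if_pos (by omega)]; push_cast; ring
      have hGk1 : G (k + 1) = Hp a b (k + m) (k + 1) * f a b (k + 1) * f a b m := by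
        rw [hG]; simp only [hnk2]; rw [if_pos (by omega)]; push_cast; ring
      rw [if_pos hkn, hGk, hGk1, hnk, hnk1]
      have hA : (a + b + 1 / 2 + (k : ℝ)) * ((k : ℝ) + 1) ≠ 0 :=
        mul_ne_zero (add_nat_ne_zero hc k) (by positivity)
      have hB : (a + b + 1 / 2 + (m : ℝ)) * ((m : ℝ) + 1) ≠ 0 :=
        mul_ne_zero (add_nat_ne_zero hc m) (by positivity)
      have e1 := f_rec a b hc k
      have e2 := f_rec a b hc m
      have hcast : ((k + m : ℕ) : ℝ) = (k : ℝ) + (m : ℝ) := by push_cast; ring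
      have := core a b (k : ℝ) (m : ℝ) (f a b k) (f a b m) (f a b (k + 1)) (f a b (m + 1))
        hA hB e1 e2
      rw [hQ, hP, hcdef, hcast]
      push_cast at this ⊢
      linarith [this]
    · -- boundary case : k = n + 1
      have hk1 : k = n + 1 := by omega
      subst hk1
      have h0 : n + 1 - (n + 1) = 0 := by omega
      have hGk : G (n + 1) = Hp a b n (n + 1) * f a b (n + 1) * f a b 0 := by
        rw [hG]; simp only [h0]; rw [if_pos (le_refl _)]; push_cast; ring
      have hGk1 : G (n + 2) = 0 := by
        rw [hG]; exact if_neg (by omega)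
      rw [if_neg hkn, hGk, hGk1, f_zero, h0, f_zero]
      have hHP : Hp a b (n : ℝ) ((n : ℝ) + 1) = P := by
        rw [hP, hcdef]; unfold Hp; push_cast; ring
      push_cast at hHP ⊢
      rw [hHP]
      ring
  have hsum := Finset.sum_congr rfl key
  rw [Finset.sum_sub_distrib, Finset.sum_range_sub (fun k => G k)] at hsum
  have hG0 : G 0 = 0 := by rw [hG]; simp [Hp]
  have hGend : G (n + 2) = 0 := by rw [hG]; exact if_neg (by omega)
  rw [hG0, hGend] at hsum
  -- sum of the if-part equals Q * e n
  have hle : ∑ k ∈ Finset.range (n + 2),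
      (if k ≤ n then Q * (f a b k * f a b (n - k)) else 0) = Q * e a b n := by
    rw [Finset.sum_range_succ, if_neg (by omega)]
    rw [Finset.sum_congr rfl (fun k hk => if_pos (by rw [Finset.mem_range] at hk; omega))]
    rw [e, ← Finset.mul_sum]
    ring
  have hre : ∑ k ∈ Finset.range (n + 2), P * (f a b k * f a b (n + 1 - k)) = P * e a b (n + 1) := by
    rw [e, ← Finset.mul_sum]
  rw [hle, hre] at hsum
  linarith [hsum]

lemma e_eq_d (a b : ℝ) (hc : ∀ n : ℕ, a + b + 1 / 2 ≠ -(n : ℝ))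
    (hc' : ∀ n : ℕ, 2 * a + 2 * b ≠ -(n : ℝ)) (n : ℕ) : e a b n = d a b n := by
  induction n with
  | zero => simp [e, f_zero, d_zero]
  | succ n ih =>
    have hP : (a + b + 1 / 2 + n) * (2 * a + 2 * b + n) * ((n : ℝ) + 1) ≠ 0 :=
      mul_ne_zero (mul_ne_zero (add_nat_ne_zero hc n) (add_nat_ne_zero hc' n)) (by positivity)
    apply mul_left_cancel₀ hP
    rw [e_rec a b hc n, d_rec a b hc hc' n, ih]

lemma f_summable (a b x : ℝ) (hx : |x| < 1) (hc : ∀ n : ℕ, a + b + 1 / 2 ≠ -(n : ℝ)) :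
    Summable fun k : ℕ => ‖f a b k * x ^ k‖ := by
  set c : ℝ := a + b + 1 / 2 with hcdef
  set r : ℝ := (1 + |x|) / 2 with hr
  have hr1 : r < 1 := by rw [hr]; linarith
  have hxr : |x| < r := by rw [hr]; linarith
  -- the ratio tends to |x|
  have ht : Tendsto (fun n : ℕ => |x| * |((a + n) / ((n : ℝ) + 1)) * ((b + n) / (c + n))|)
      atTop (𝓝 (|x|)) := by
    have h1 : Tendsto (fun n : ℕ => (a + n) / ((n : ℝ) + 1)) atTop (𝓝 1) := by
      have : ∀ n : ℕ, (a + n) / ((n : ℝ) + 1) = (a - 1) / ((n : ℝ) + 1) + 1 := by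
        intro n
        have : ((n : ℝ) + 1) ≠ 0 := by positivity
        field_simp
        ring
      simp_rw [this]
      have h0 : Tendsto (fun n : ℕ => ((n : ℝ) + 1)) atTop atTop :=
        tendsto_atTop_add_const_right atTop 1 tendsto_natCast_atTop_atTop
      have hz : Tendsto (fun n : ℕ => (a - 1) / ((n : ℝ) + 1)) atTop (𝓝 0) :=
        Filter.Tendsto.div_atTop tendsto_const_nhds h0
      simpa using hz.add (tendsto_const_nhds (x := (1 : ℝ)))
    have h2 : Tendsto (fun n : ℕ => (b + n) / (c + n)) atTop (𝓝 1) := by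
      have heq : ∀ n : ℕ, (b + n) / (c + n) = (b - c) / (c + n) + 1 := by
        intro n
        have h := add_nat_ne_zero hc n
        field_simp
        ring
      simp_rw [heq]
      have h0 : Tendsto (fun n : ℕ => c + (n : ℝ)) atTop atTop :=
        tendsto_atTop_add_const_left atTop c tendsto_natCast_atTop_atTop
      have hz : Tendsto (fun n : ℕ => (b - c) / (c + (n : ℝ))) atTop (𝓝 0) :=
        Filter.Tendsto.div_atTop tendsto_const_nhds h0
      simpa using hz.add (tendsto_const_nhds (x := (1 : ℝ)))
    have := ((h1.mul h2).abs).const_mul (|x|)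
    simpa using this
  have hev : ∀ᶠ n : ℕ in atTop,
      |x| * |((a + n) / ((n : ℝ) + 1)) * ((b + n) / (c + n))| < r :=
    ht.eventually_lt_const hxr
  apply summable_of_ratio_norm_eventually_le hr1
  filter_upwards [hev] with n hn
  have hcn : c + (n : ℝ) ≠ 0 := by rw [hcdef]; exact add_nat_ne_zero hc n
  have hn1 : (0 : ℝ) < (n : ℝ) + 1 := by positivity
  have hpos : (0 : ℝ) < |c + (n : ℝ)| * ((n : ℝ) + 1) := mul_pos (abs_pos.mpr hcn) hn1
  -- |f (n+1)| * (|c+n| * (n+1)) = |a+n| * |b+n| * |f n|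
  have habs : |f a b (n + 1)| * (|c + (n : ℝ)| * ((n : ℝ) + 1)) =
      |a + n| * |b + n| * |f a b n| := by
    have := f_rec a b hc n
    rw [← hcdef] at this
    calc |f a b (n + 1)| * (|c + (n : ℝ)| * ((n : ℝ) + 1))
        = |(c + (n : ℝ)) * ((n : ℝ) + 1) * f a b (n + 1)| := by
          rw [abs_mul, abs_mul, abs_of_pos hn1]; ring
      _ = |(a + n) * (b + n) * f a b n| := by rw [this]
      _ = |a + n| * |b + n| * |f a b n| := by rw [abs_mul, abs_mul]
  -- from hn : ratio bound, get |x| * |a+n| * |b+n| ≤ r * (|c+n| * (n+1))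
  have hratio : |x| * (|a + n| * |b + n|) ≤ r * (|c + (n : ℝ)| * ((n : ℝ) + 1)) := by
    have hinner : ((a + n) / ((n : ℝ) + 1)) * ((b + n) / (c + n)) * ((c + (n : ℝ)) * ((n : ℝ) + 1))
        = (a + n) * (b + n) := by
      field_simp
    have heq : |((a + n) / ((n : ℝ) + 1)) * ((b + n) / (c + n))| *
        (|c + (n : ℝ)| * ((n : ℝ) + 1)) = |a + n| * |b + n| := by
      calc |((a + n) / ((n : ℝ) + 1)) * ((b + n) / (c + n))| * (|c + (n : ℝ)| * ((n : ℝ) + 1))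
          = |((a + n) / ((n : ℝ) + 1)) * ((b + n) / (c + n)) * ((c + (n : ℝ)) * ((n : ℝ) + 1))| := by
            rw [abs_mul _ ((c + (n : ℝ)) * ((n : ℝ) + 1)), abs_mul (c + (n : ℝ)),
              abs_of_pos hn1]
        _ = |(a + n) * (b + n)| := by rw [hinner]
        _ = |a + n| * |b + n| := abs_mul _ _
    have := mul_le_mul_of_nonneg_right hn.le hpos.le
    calc |x| * (|a + n| * |b + n|)
        = |x| * |((a + n) / ((n : ℝ) + 1)) * ((b + n) / (c + n))| *
            (|c + (n : ℝ)| * ((n : ℝ) + 1)) := by rw [mul_assoc, heq]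
      _ ≤ r * (|c + (n : ℝ)| * ((n : ℝ) + 1)) := this
  -- conclude
  rw [norm_norm, norm_norm]
  apply le_of_mul_le_mul_right _ hpos
  have hnorm1 : ‖f a b (n + 1) * x ^ (n + 1)‖ = |f a b (n + 1)| * (|x| ^ n * |x|) := by
    rw [norm_mul, Real.norm_eq_abs, Real.norm_eq_abs, abs_pow, pow_succ]
  have hnorm0 : ‖f a b n * x ^ n‖ = |f a b n| * |x| ^ n := by
    rw [norm_mul, Real.norm_eq_abs, Real.norm_eq_abs, abs_pow]
  rw [hnorm1, hnorm0]
  have hxpow : (0 : ℝ) ≤ |x| ^ n := by positivity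
  calc |f a b (n + 1)| * (|x| ^ n * |x|) * (|c + (n : ℝ)| * ((n : ℝ) + 1))
      = (|x| * (|a + n| * |b + n|)) * (|f a b n| * |x| ^ n) := by
        linear_combination (|x| ^ n * |x|) * habs
    _ ≤ (r * (|c + (n : ℝ)| * ((n : ℝ) + 1))) * (|f a b n| * |x| ^ n) := by
        apply mul_le_mul_of_nonneg_right hratio (by positivity)
    _ = r * (|f a b n| * |x| ^ n) * (|c + (n : ℝ)| * ((n : ℝ) + 1)) := by ring

end Clausen16

/-- Clausen's formula: `(₂F₁(a, b; a+b+1/2; x))² = ₃F₂(2a, a+b, 2b; a+b+1/2, 2a+2b; x)`. -/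
theorem stmt_16 (a b x : ℝ) (hx : |x| < 1)
    (hc : ∀ n : ℕ, a + b + 1 / 2 ≠ -(n : ℝ)) (hc' : ∀ n : ℕ, 2 * a + 2 * b ≠ -(n : ℝ)) :
    (∑' k : ℕ, (ascPochhammer ℝ k).eval a * (ascPochhammer ℝ k).eval b /
        ((ascPochhammer ℝ k).eval (a + b + 1 / 2) * (k.factorial : ℝ)) * x ^ k) ^ 2 =
      ∑' k : ℕ, (ascPochhammer ℝ k).eval (2 * a) * (ascPochhammer ℝ k).eval (a + b) *
          (ascPochhammer ℝ k).eval (2 * b) /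
        ((ascPochhammer ℝ k).eval (a + b + 1 / 2) * (ascPochhammer ℝ k).eval (2 * a + 2 * b) *
          (k.factorial : ℝ)) * x ^ k := by
  have hsum := Clausen16.f_summable a b x hx hc
  have hcauchy := tsum_mul_tsum_eq_tsum_sum_range_of_summable_norm hsum hsum
  have hL : (∑' k : ℕ, (ascPochhammer ℝ k).eval a * (ascPochhammer ℝ k).eval b /
      ((ascPochhammer ℝ k).eval (a + b + 1 / 2) * (k.factorial : ℝ)) * x ^ k) =
      ∑' k : ℕ, Clausen16.f a b k * x ^ k := rfl
  rw [hL, sq, hcauchy]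
  apply tsum_congr
  intro n
  have hinner : ∑ k ∈ Finset.range (n + 1),
      Clausen16.f a b k * x ^ k * (Clausen16.f a b (n - k) * x ^ (n - k)) =
      Clausen16.e a b n * x ^ n := by
    rw [Clausen16.e, Finset.sum_mul]
    apply Finset.sum_congr rfl
    intro k hk
    rw [Finset.mem_range] at hk
    have : x ^ k * x ^ (n - k) = x ^ n := by
      rw [← pow_add]
      congr 1
      omega
    calc Clausen16.f a b k * x ^ k * (Clausen16.f a b (n - k) * x ^ (n - k))
        = Clausen16.f a b k * Clausen16.f a b (n - k) * (x ^ k * x ^ (n - k)) := by ring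
      _ = Clausen16.f a b k * Clausen16.f a b (n - k) * x ^ n := by rw [this]
  rw [hinner, Clausen16.e_eq_d a b hc hc' n]
  rfl
end
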